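/- arXiv:1501.00395 — 6 statements merged into one kernel-verified Lean document; each statement's English description precedes it below -/
import Mathlib

section
/- Let {α, S₀, ϑ₁, ϑ₂} be an admissible quadruple, and for x ≥ 0 set Λ(x) = [e^{-ixα}ϑ₁, e^{ixα}ϑ₂] and S(x) = S₀ + ∫₀ˣ Λ(t) j Λ(t)* dt. Then for every x ≥ 0 one has the identity αS(x) − S(x)α* = iΛ(x)Λ(x)*, the matrix e^{-ixα}S(x)e^{ixα*} − S₀ is positive semidefinite, and S(x) is positive definite; consequently the quadruple Σ(x) = {α, S(x), e^{-ixα}ϑ₁, e^{ixα}ϑ₂} is admissible for every x ≥ 0. -/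
open Matrix
open scoped ComplexOrder

/-- The `m×m` signature matrix `j = diag(I_{m₁}, −I_{m₂})`. -/
noncomputable def sigJ (m₁ m₂ : ℕ) : Matrix (Fin m₁ ⊕ Fin m₂) (Fin m₁ ⊕ Fin m₂) ℂ :=
  Matrix.fromBlocks 1 0 0 (-1)

/-- A quadruple `{α, S₀, ϑ₁, ϑ₂}` is admissible if `S₀` is Hermitian positive definite and
`αS₀ − S₀α* = i(ϑ₁ϑ₁* + ϑ₂ϑ₂*)`. -/
def Admissible {n m₁ m₂ : ℕ} (α S₀ : Matrix (Fin n) (Fin n) ℂ)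
    (θ₁ : Matrix (Fin n) (Fin m₁) ℂ) (θ₂ : Matrix (Fin n) (Fin m₂) ℂ) : Prop :=
  S₀.PosDef ∧ α * S₀ - S₀ * αᴴ = Complex.I • (θ₁ * θ₁ᴴ + θ₂ * θ₂ᴴ)

open NormedSpace

namespace AdmAux

variable {n : ℕ}

section Norm

attribute [local instance] Matrix.linftyOpNormedAddCommGroup Matrix.linftyOpNormedSpace
  Matrix.linftyOpNormedRing Matrix.linftyOpNormedAlgebra

noncomputable instance : CompleteSpace (Matrix (Fin n) (Fin n) ℂ) :=
  FiniteDimensional.complete ℂ _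

private lemma norm_entry_le' (A : Matrix (Fin n) (Fin n) ℂ) (i j : Fin n) : ‖A i j‖ ≤ ‖A‖ := by
  have h1 : ‖A i j‖₊ ≤ ∑ k, ‖A i k‖₊ :=
    Finset.single_le_sum (f := fun k => ‖A i k‖₊) (fun k _ => zero_le) (Finset.mem_univ j)
  have h2 : ∑ k, ‖A i k‖₊ ≤ Finset.univ.sup fun i => ∑ k, ‖A i k‖₊ :=
    Finset.le_sup (f := fun i => ∑ k, ‖A i k‖₊) (Finset.mem_univ i)
  have h3 := Matrix.linfty_opNNNorm_def A
  calc (‖A i j‖₊ : ℝ) ≤ _ := by exact_mod_cast h1.trans h2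
    _ = ‖A‖ := by rw [← h3]; rfl

private lemma entry_hasDerivAt {f : ℝ → Matrix (Fin n) (Fin n) ℂ}
    {f' : Matrix (Fin n) (Fin n) ℂ} {x : ℝ} (h : HasDerivAt f f' x) (i j : Fin n) :
    HasDerivAt (fun t => f t i j) (f' i j) x := by
  let L : Matrix (Fin n) (Fin n) ℂ →L[ℂ] ℂ :=
    LinearMap.mkContinuous (Matrix.entryLinearMap ℂ ℂ i j) 1
      (fun A => by simpa using norm_entry_le' A i j)
  have h2 : HasFDerivAt (𝕜 := ℝ) (⇑L) (L.restrictScalars ℝ) (f x) :=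
    (L.restrictScalars ℝ).hasFDerivAt
  have := h2.comp_hasDerivAt x h
  exact this

lemma hasDerivAt_exp_entry (α : Matrix (Fin n) (Fin n) ℂ) (c : ℂ) (x : ℝ) (i j : Fin n) :
    HasDerivAt (fun t : ℝ => exp ((c * (t : ℂ)) • α) i j)
      ((c • (α * exp ((c * (x : ℂ)) • α))) i j) x := by
  have hg : HasDerivAt (fun z : ℂ => exp (z • α)) (α * exp ((c * (x : ℂ)) • α)) (c * x) :=
    hasDerivAt_exp_smul_const' α (c * (x : ℂ))
  have hf : HasDerivAt (fun t : ℝ => c * (t : ℂ)) c x := by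
    simpa using ((hasDerivAt_id x).ofReal_comp.const_mul c)
  have hm : HasDerivAt (fun t : ℝ => exp ((c * (t : ℂ)) • α))
      (c • (α * exp ((c * (x : ℂ)) • α))) x := by
    have h2 := (hg.hasFDerivAt.restrictScalars ℝ).comp_hasDerivAt x hf.hasFDerivAt.hasDerivAt
    exact hg.scomp x hf
  exact entry_hasDerivAt hm i j

lemma exp_comm (α : Matrix (Fin n) (Fin n) ℂ) (z : ℂ) :
    α * exp (z • α) = exp (z • α) * α :=
  (((Commute.refl α).smul_right z).exp_right).eq

end Norm

lemma continuous_exp_entry (α : Matrix (Fin n) (Fin n) ℂ) (c : ℂ) (i j : Fin n) :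
    Continuous fun t : ℝ => exp ((c * (t : ℂ)) • α) i j :=
  continuous_iff_continuousAt.2 fun x => (hasDerivAt_exp_entry α c x i j).continuousAt

section EntryCalc

variable {I K J : Type*} [Fintype K]

lemma entry_hasDerivAt_mul {A : ℝ → Matrix I K ℂ} {B : ℝ → Matrix K J ℂ}
    {A' : Matrix I K ℂ} {B' : Matrix K J ℂ} {x : ℝ}
    (hA : ∀ i k, HasDerivAt (fun t => A t i k) (A' i k) x)
    (hB : ∀ k j, HasDerivAt (fun t => B t k j) (B' k j) x) (i : I) (j : J) :
    HasDerivAt (fun t => (A t * B t) i j) ((A' * B x + A x * B') i j) x := by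
  simp only [Matrix.mul_apply, Matrix.add_apply]
  rw [← Finset.sum_add_distrib]
  exact HasDerivAt.fun_sum fun k _ => ((hA i k).mul (hB k j)).congr_deriv (by ring)

lemma entry_continuous_mul {A : ℝ → Matrix I K ℂ} {B : ℝ → Matrix K J ℂ}
    (hA : ∀ i k, Continuous fun t => A t i k)
    (hB : ∀ k j, Continuous fun t => B t k j) (i : I) (j : J) :
    Continuous fun t => (A t * B t) i j := by
  simp only [Matrix.mul_apply]
  exact continuous_finset_sum _ fun k _ => (hA i k).mul (hB k j)

end EntryCalc

lemma intervalIntegral_conj {f : ℝ → ℂ} {a b : ℝ} :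
    (∫ t in a..b, (starRingEnd ℂ) (f t)) = (starRingEnd ℂ) (∫ t in a..b, f t) := by
  simp only [intervalIntegral, ← integral_conj, map_sub]

lemma sum_mul_integral {N : Type*} [Fintype N] {a b : ℝ} (c : N → ℂ) (f : N → ℝ → ℂ)
    (hf : ∀ i, IntervalIntegrable (f i) MeasureTheory.volume a b) :
    ∑ i, c i * ∫ t in a..b, f i t = ∫ t in a..b, ∑ i, c i * f i t := by
  rw [intervalIntegral.integral_finset_sum (fun i _ => (hf i).const_mul (c i))]
  simp [intervalIntegral.integral_const_mul]

lemma posSemidef_ofIntegral {x : ℝ} (hx : 0 ≤ x) (M : Matrix (Fin n) (Fin n) ℂ)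
    (P : ℝ → Matrix (Fin n) (Fin n) ℂ)
    (hcont : ∀ i j, Continuous fun t => P t i j) (hP : ∀ t, (P t).PosSemidef)
    (hM : ∀ i j, M i j = ∫ t in (0:ℝ)..x, P t i j) : M.PosSemidef := by
  have hint : ∀ i j : Fin n, IntervalIntegrable (fun t => P t i j)
      MeasureTheory.volume 0 x := fun i j => (hcont i j).intervalIntegrable _ _
  refine Matrix.posSemidef_iff_dotProduct_mulVec.mpr ⟨?_, ?_⟩
  · ext i j
    rw [Matrix.conjTranspose_apply, hM, hM,
      show (star (∫ t in (0:ℝ)..x, P t j i) : ℂ)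
        = (starRingEnd ℂ) (∫ t in (0:ℝ)..x, P t j i) from rfl,
      ← intervalIntegral_conj]
    congr 1; funext t
    have := congrFun (congrFun (hP t).1 i) j
    simpa [Matrix.conjTranspose_apply] using this
  · intro y
    have hq : ∀ t : ℝ, (star y ⬝ᵥ (P t).mulVec y) =
        (((star y ⬝ᵥ (P t).mulVec y).re : ℝ) : ℂ) := by
      intro t
      have h0 := (hP t).dotProduct_mulVec_nonneg y
      rw [Complex.nonneg_iff] at h0
      rw [← Complex.re_add_im (star y ⬝ᵥ (P t).mulVec y), ← h0.2]
      simp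
    have inner : ∀ i, (∑ j, M i j * y j) = ∫ t in (0:ℝ)..x, ∑ j, P t i j * y j := by
      intro i
      have h1 := sum_mul_integral (fun j => y j) (fun j t => P t i j) (fun j => hint i j)
      calc ∑ j, M i j * y j = ∑ j, y j * ∫ t in (0:ℝ)..x, P t i j := by
            simp only [hM]; exact Finset.sum_congr rfl fun j _ => mul_comm _ _
        _ = ∫ t in (0:ℝ)..x, ∑ j, y j * P t i j := h1
        _ = ∫ t in (0:ℝ)..x, ∑ j, P t i j * y j := by
            apply intervalIntegral.integral_congr; intro t _
            exact Finset.sum_congr rfl fun j _ => mul_comm _ _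
    have hfi : ∀ i, IntervalIntegrable (fun t => ∑ j, P t i j * y j)
        MeasureTheory.volume 0 x := by
      intro i
      exact (continuous_finset_sum _ fun j _ => (hcont i j).mul continuous_const
        ).intervalIntegrable _ _
    have key : star y ⬝ᵥ M.mulVec y = ∫ t in (0:ℝ)..x, star y ⬝ᵥ (P t).mulVec y := by
      simp only [dotProduct, Matrix.mulVec, Pi.star_apply]
      rw [show (∑ i, star (y i) * ∑ j, M i j * y j)
          = ∑ i, star (y i) * ∫ t in (0:ℝ)..x, ∑ j, P t i j * y j from
        Finset.sum_congr rfl fun i _ => by rw [inner]]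
      exact sum_mul_integral (fun i => star (y i)) _ hfi
    rw [key, intervalIntegral.integral_congr (fun t _ => hq t)]
    have h2 : (∫ t in (0:ℝ)..x, (((star y ⬝ᵥ (P t).mulVec y).re : ℝ) : ℂ))
        = (((∫ t in (0:ℝ)..x, (star y ⬝ᵥ (P t).mulVec y).re) : ℝ) : ℂ) :=
      RCLike.intervalIntegral_ofReal (𝕜 := ℂ) (f := fun t => (star y ⬝ᵥ (P t).mulVec y).re)
    rw [h2, Complex.zero_le_real]
    exact intervalIntegral.integral_nonneg hx fun t _ => by
      have h0 := (hP t).dotProduct_mulVec_nonneg y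
      rw [Complex.nonneg_iff] at h0
      exact h0.1

lemma posDef_conj {N N' T : Matrix (Fin n) (Fin n) ℂ} (hT : T.PosDef)
    (h1 : N * N' = 1) : (N * T * Nᴴ).PosDef := by
  refine Matrix.posDef_iff_dotProduct_mulVec.mpr ⟨?_, ?_⟩
  · have h := hT.1
    unfold Matrix.IsHermitian
    rw [show N * T * Nᴴ = (Nᴴ)ᴴ * T * Nᴴ by rw [Matrix.conjTranspose_conjTranspose]]
    exact Matrix.isHermitian_conjTranspose_mul_mul  _ h
  · intro y hy
    have hvec : Nᴴ *ᵥ y ≠ 0 := by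
      intro h0
      apply hy
      have h1T : N'ᴴ * Nᴴ = 1 := by
        rw [← Matrix.conjTranspose_mul, h1, Matrix.conjTranspose_one]
      calc y = (N'ᴴ * Nᴴ) *ᵥ y := by rw [h1T, Matrix.one_mulVec]
        _ = N'ᴴ *ᵥ (Nᴴ *ᵥ y) := (Matrix.mulVec_mulVec _ _ _).symm
        _ = 0 := by rw [h0, Matrix.mulVec_zero]
    have h2 := hT.dotProduct_mulVec_pos hvec
    have h3 : star y ⬝ᵥ (N * T * Nᴴ) *ᵥ y
        = star (Nᴴ *ᵥ y) ⬝ᵥ T *ᵥ (Nᴴ *ᵥ y) := by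
      rw [show N * T * Nᴴ = (Nᴴ)ᴴ * T * Nᴴ by rw [Matrix.conjTranspose_conjTranspose]]
      simp only [Matrix.star_mulVec, Matrix.dotProduct_mulVec, Matrix.vecMul_vecMul]
    rw [h3]
    exact h2

noncomputable def Em (α : Matrix (Fin n) (Fin n) ℂ) (x : ℝ) : Matrix (Fin n) (Fin n) ℂ :=
  exp ((-(Complex.I * (x : ℂ))) • α)

noncomputable def Ep (α : Matrix (Fin n) (Fin n) ℂ) (x : ℝ) : Matrix (Fin n) (Fin n) ℂ :=
  exp ((Complex.I * (x : ℂ)) • α)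

variable (α : Matrix (Fin n) (Fin n) ℂ)

lemma hdEm (x : ℝ) (i j : Fin n) :
    HasDerivAt (fun t => Em α t i j) (((-Complex.I) • (α * Em α x)) i j) x := by
  have h := hasDerivAt_exp_entry α (-Complex.I) x i j
  simp only [neg_mul] at h
  exact h

lemma hdEp (x : ℝ) (i j : Fin n) :
    HasDerivAt (fun t => Ep α t i j) ((Complex.I • (α * Ep α x)) i j) x :=
  hasDerivAt_exp_entry α Complex.I x i j

lemma cEm (i j : Fin n) : Continuous fun t => Em α t i j := by
  have h := continuous_exp_entry α (-Complex.I) i j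
  simp only [neg_mul] at h
  exact h

lemma cEp (i j : Fin n) : Continuous fun t => Ep α t i j :=
  continuous_exp_entry α Complex.I i j

lemma Em_conjTranspose (x : ℝ) : (Em α x)ᴴ = Ep αᴴ x := by
  rw [Em, Ep, ← Matrix.exp_conjTranspose]
  congr 1
  rw [Matrix.conjTranspose_smul]
  congr 1
  simp [Complex.ext_iff]

lemma Ep_conjTranspose (x : ℝ) : (Ep α x)ᴴ = Em αᴴ x := by
  rw [Em, Ep, ← Matrix.exp_conjTranspose]
  congr 1
  rw [Matrix.conjTranspose_smul]
  congr 1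
  simp [Complex.ext_iff]

lemma Ep_mul_Em (x : ℝ) : Ep α x * Em α x = 1 := by
  rw [Em, Ep, ← Matrix.exp_add_of_commute _ _ (((Commute.refl α).smul_left _).smul_right _)]
  rw [show (Complex.I * (x : ℂ)) • α + (-(Complex.I * (x : ℂ))) • α = (0 : ℂ) • α by
    rw [← add_smul]; ring_nf]
  simp [exp_zero]

lemma Em_mul_Ep (x : ℝ) : Em α x * Ep α x = 1 := by
  rw [Em, Ep, ← Matrix.exp_add_of_commute _ _ (((Commute.refl α).smul_left _).smul_right _)]
  rw [show (-(Complex.I * (x : ℂ))) • α + (Complex.I * (x : ℂ)) • α = (0 : ℂ) • α by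
    rw [← add_smul]; ring_nf]
  simp [exp_zero]

lemma Em_zero : Em α 0 = 1 := by simp [Em, exp_zero]

lemma Ep_zero : Ep α 0 = 1 := by simp [Ep, exp_zero]

lemma comm_Em (x : ℝ) : α * Em α x = Em α x * α := exp_comm α _

lemma comm_Ep (x : ℝ) : α * Ep α x = Ep α x * α := exp_comm α _

end AdmAux

open AdmAux

/-- for an admissible quadruple `{α, S₀, ϑ₁, ϑ₂}`, with
`Λ(x) = [e^{-ixα}ϑ₁, e^{ixα}ϑ₂]` and `S(x) = S₀ + ∫₀ˣ Λ(t) j Λ(t)* dt`, one has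
`αS(x) − S(x)α* = iΛ(x)Λ(x)*`, `e^{-ixα}S(x)e^{ixα*} − S₀ ≥ 0`, `S(x) > 0`, and the
quadruple `Σ(x) = {α, S(x), e^{-ixα}ϑ₁, e^{ixα}ϑ₂}` is admissible, for every `x ≥ 0`. -/
theorem admissible_evolution_continuous
    {n m₁ m₂ : ℕ} (α S₀ : Matrix (Fin n) (Fin n) ℂ)
    (θ₁ : Matrix (Fin n) (Fin m₁) ℂ) (θ₂ : Matrix (Fin n) (Fin m₂) ℂ)
    (hadm : Admissible α S₀ θ₁ θ₂)
    (Λ : ℝ → Matrix (Fin n) (Fin m₁ ⊕ Fin m₂) ℂ)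
    (hΛ : ∀ x : ℝ, Λ x = Matrix.fromCols
      (NormedSpace.exp ((-(Complex.I * (x : ℂ))) • α) * θ₁)
      (NormedSpace.exp ((Complex.I * (x : ℂ)) • α) * θ₂))
    (S : ℝ → Matrix (Fin n) (Fin n) ℂ)
    (hS : ∀ (x : ℝ) (i j : Fin n),
      S x i j = S₀ i j + ∫ t in (0:ℝ)..x, (Λ t * sigJ m₁ m₂ * (Λ t)ᴴ) i j) :
    ∀ x : ℝ, 0 ≤ x →
      (α * S x - S x * αᴴ = Complex.I • (Λ x * (Λ x)ᴴ)) ∧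
      (NormedSpace.exp ((-(Complex.I * (x : ℂ))) • α) * S x *
        NormedSpace.exp ((Complex.I * (x : ℂ)) • αᴴ) - S₀).PosSemidef ∧
      (S x).PosDef ∧
      Admissible α (S x)
        (NormedSpace.exp ((-(Complex.I * (x : ℂ))) • α) * θ₁)
        (NormedSpace.exp ((Complex.I * (x : ℂ)) • α) * θ₂) := by
  classical
  obtain ⟨hS₀, hid⟩ := hadm
  set C₁ := θ₁ * θ₁ᴴ with hC₁def
  set C₂ := θ₂ * θ₂ᴴ with hC₂def
  -- structural decompositions
  have hGdec : ∀ t : ℝ, Λ t * (Λ t)ᴴ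
      = Em α t * C₁ * Ep αᴴ t + Ep α t * C₂ * Em αᴴ t := by
    intro t
    rw [hΛ t,
      show (NormedSpace.exp ((-(Complex.I * (t : ℂ))) • α)) = Em α t from rfl,
      show (NormedSpace.exp ((Complex.I * (t : ℂ)) • α)) = Ep α t from rfl,
      Matrix.conjTranspose_fromCols_eq_fromRows_conjTranspose,
      Matrix.fromCols_mul_fromRows]
    simp only [Matrix.conjTranspose_mul, Em_conjTranspose, Ep_conjTranspose, Matrix.mul_assoc,
      hC₁def, hC₂def]
  have hFdec : ∀ t : ℝ, Λ t * sigJ m₁ m₂ * (Λ t)ᴴ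
      = Em α t * C₁ * Ep αᴴ t - Ep α t * C₂ * Em αᴴ t := by
    intro t
    rw [hΛ t,
      show (NormedSpace.exp ((-(Complex.I * (t : ℂ))) • α)) = Em α t from rfl,
      show (NormedSpace.exp ((Complex.I * (t : ℂ)) • α)) = Ep α t from rfl,
      sigJ, Matrix.fromCols_mul_fromBlocks,
      Matrix.conjTranspose_fromCols_eq_fromRows_conjTranspose,
      Matrix.fromCols_mul_fromRows]
    simp only [Matrix.mul_one, Matrix.mul_zero, add_zero, zero_add, Matrix.mul_neg,
      Matrix.neg_mul, Matrix.conjTranspose_mul, Em_conjTranspose, Ep_conjTranspose,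
      Matrix.mul_assoc, hC₁def, hC₂def, sub_eq_add_neg]
  -- continuity of all relevant entries
  have cC₁ : ∀ (i : Fin n) (j : Fin n), Continuous fun _ : ℝ => C₁ i j :=
    fun i j => continuous_const
  have cC₂ : ∀ (i : Fin n) (j : Fin n), Continuous fun _ : ℝ => C₂ i j :=
    fun i j => continuous_const
  have cA₁ : ∀ (i j : Fin n), Continuous fun t : ℝ => (Em α t * C₁ * Ep αᴴ t) i j :=
    fun i j => entry_continuous_mul (entry_continuous_mul (cEm α) cC₁) (cEp αᴴ) i j
  have cA₂ : ∀ (i j : Fin n), Continuous fun t : ℝ => (Ep α t * C₂ * Em αᴴ t) i j :=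
    fun i j => entry_continuous_mul (entry_continuous_mul (cEp α) cC₂) (cEm αᴴ) i j
  have hFc : ∀ (i j : Fin n), Continuous fun t : ℝ => (Λ t * sigJ m₁ m₂ * (Λ t)ᴴ) i j := by
    intro i j
    have : (fun t : ℝ => (Λ t * sigJ m₁ m₂ * (Λ t)ᴴ) i j)
        = fun t : ℝ => (Em α t * C₁ * Ep αᴴ t) i j - (Ep α t * C₂ * Em αᴴ t) i j := by
      funext t; rw [hFdec t, Matrix.sub_apply]
    rw [this]
    exact (cA₁ i j).sub (cA₂ i j)
  have hGc : ∀ (i j : Fin n), Continuous fun t : ℝ => (Λ t * (Λ t)ᴴ) i j := by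
    intro i j
    have : (fun t : ℝ => (Λ t * (Λ t)ᴴ) i j)
        = fun t : ℝ => (Em α t * C₁ * Ep αᴴ t) i j + (Ep α t * C₂ * Em αᴴ t) i j := by
      funext t; rw [hGdec t, Matrix.add_apply]
    rw [this]
    exact (cA₁ i j).add (cA₂ i j)
  -- derivative of the Gram function Λ t * (Λ t)ᴴ, entrywise
  have hconst : ∀ (x : ℝ) (C : Matrix (Fin n) (Fin n) ℂ) (k l : Fin n),
      HasDerivAt (fun _ : ℝ => C k l) ((0 : Matrix (Fin n) (Fin n) ℂ) k l) x :=
    fun x C k l => by simpa using hasDerivAt_const x (C k l)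
  have hGd : ∀ (x : ℝ) (i j : Fin n), HasDerivAt (fun t => (Λ t * (Λ t)ᴴ) i j)
      (((((-Complex.I) • (α * Em α x) * C₁ + Em α x * 0) * Ep αᴴ x
          + Em α x * C₁ * (Complex.I • (αᴴ * Ep αᴴ x))
        + (((Complex.I • (α * Ep α x)) * C₂ + Ep α x * 0) * Em αᴴ x
          + Ep α x * C₂ * ((-Complex.I) • (αᴴ * Em αᴴ x)))) : Matrix (Fin n) (Fin n) ℂ) i j) x := by
    intro x i j
    have hfun : (fun t => (Λ t * (Λ t)ᴴ) i j)
        = fun t => (Em α t * C₁ * Ep αᴴ t) i j + (Ep α t * C₂ * Em αᴴ t) i j := by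
      funext t; rw [hGdec t, Matrix.add_apply]
    rw [hfun]
    have h1 := entry_hasDerivAt_mul
      (entry_hasDerivAt_mul (hdEm α x) (hconst x C₁)) (hdEp αᴴ x) i j
    have h2 := entry_hasDerivAt_mul
      (entry_hasDerivAt_mul (hdEp α x) (hconst x C₂)) (hdEm αᴴ x) i j
    simpa [Matrix.add_apply] using h1.fun_add h2
  -- the derivative matrix identity
  have hUD : ∀ x : ℝ,
      ((-Complex.I) • (α * Em α x) * C₁ + Em α x * 0) * Ep αᴴ x
          + Em α x * C₁ * (Complex.I • (αᴴ * Ep αᴴ x))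
        + (((Complex.I • (α * Ep α x)) * C₂ + Ep α x * 0) * Em αᴴ x
          + Ep α x * C₂ * ((-Complex.I) • (αᴴ * Em αᴴ x)))
      = (-Complex.I) • (α * (Em α x * C₁ * Ep αᴴ x) - (Em α x * C₁ * Ep αᴴ x) * αᴴ)
        + Complex.I • (α * (Ep α x * C₂ * Em αᴴ x) - (Ep α x * C₂ * Em αᴴ x) * αᴴ) := by
    intro x
    rw [show αᴴ * Ep αᴴ x = Ep αᴴ x * αᴴ from comm_Ep αᴴ x,
        show αᴴ * Em αᴴ x = Em αᴴ x * αᴴ from comm_Em αᴴ x]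
    simp only [Matrix.mul_zero, add_zero, Matrix.add_mul, smul_mul_assoc, mul_smul_comm,
      smul_sub, neg_smul, Matrix.neg_mul, Matrix.mul_neg, neg_mul, mul_neg, smul_neg,
      Matrix.mul_assoc]
    abel
  -- key matrix identity : I • (derivative) = α F - F αᴴ
  have hkey : ∀ x : ℝ,
      Complex.I • ((-Complex.I) • (α * (Em α x * C₁ * Ep αᴴ x) - (Em α x * C₁ * Ep αᴴ x) * αᴴ)
        + Complex.I • (α * (Ep α x * C₂ * Em αᴴ x) - (Ep α x * C₂ * Em αᴴ x) * αᴴ))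
      = α * (Λ x * sigJ m₁ m₂ * (Λ x)ᴴ) - (Λ x * sigJ m₁ m₂ * (Λ x)ᴴ) * αᴴ := by
    intro x
    rw [hFdec x]
    simp only [smul_add, neg_smul, smul_neg, smul_sub, smul_smul, Complex.I_mul_I,
      neg_one_smul, neg_neg, Matrix.mul_sub, Matrix.sub_mul, Matrix.mul_assoc]
    module
  -- claim 1, for every real x
  have hαFc : ∀ (i j : Fin n), Continuous fun t : ℝ =>
      (α * (Λ t * sigJ m₁ m₂ * (Λ t)ᴴ) - (Λ t * sigJ m₁ m₂ * (Λ t)ᴴ) * αᴴ) i j := by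
    intro i j
    have : (fun t : ℝ => (α * (Λ t * sigJ m₁ m₂ * (Λ t)ᴴ)
        - (Λ t * sigJ m₁ m₂ * (Λ t)ᴴ) * αᴴ) i j)
        = fun t : ℝ => (α * (Λ t * sigJ m₁ m₂ * (Λ t)ᴴ)) i j
          - ((Λ t * sigJ m₁ m₂ * (Λ t)ᴴ) * αᴴ) i j := by
      funext t; rw [Matrix.sub_apply]
    rw [this]
    exact (entry_continuous_mul (A := fun _ : ℝ => α) (fun i k => continuous_const) hFc i j).sub
      (entry_continuous_mul (B := fun _ : ℝ => αᴴ) hFc (fun k l => continuous_const) i j)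
  have hG0 : Λ 0 * (Λ 0)ᴴ = C₁ + C₂ := by
    rw [hGdec 0, Em_zero, Ep_zero, Em_zero, Ep_zero]
    simp
  have key1 : ∀ x : ℝ, α * S x - S x * αᴴ = Complex.I • (Λ x * (Λ x)ᴴ) := by
    intro x
    have hraw : ∀ t : ℝ,
        (((-Complex.I) • (α * Em α t) * C₁ + Em α t * 0) * Ep αᴴ t
            + Em α t * C₁ * (Complex.I • (αᴴ * Ep αᴴ t))
          + (((Complex.I • (α * Ep α t)) * C₂ + Ep α t * 0) * Em αᴴ t
            + Ep α t * C₂ * ((-Complex.I) • (αᴴ * Em αᴴ t))))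
        = (-Complex.I) • (α * (Λ t * sigJ m₁ m₂ * (Λ t)ᴴ)
            - (Λ t * sigJ m₁ m₂ * (Λ t)ᴴ) * αᴴ) := by
      intro t
      rw [hUD t, ← hkey t, smul_smul]
      simp [Complex.I_mul_I]
    have hFTC : ∀ i j : Fin n,
        (∫ t in (0:ℝ)..x, (α * (Λ t * sigJ m₁ m₂ * (Λ t)ᴴ)
          - (Λ t * sigJ m₁ m₂ * (Λ t)ᴴ) * αᴴ) i j)
        = Complex.I * ((Λ x * (Λ x)ᴴ) i j - (Λ 0 * (Λ 0)ᴴ) i j) := by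
      intro i j
      have hderiv : ∀ t ∈ Set.uIcc (0:ℝ) x, HasDerivAt (fun u => (Λ u * (Λ u)ᴴ) i j)
          ((-Complex.I) * ((α * (Λ t * sigJ m₁ m₂ * (Λ t)ᴴ)
            - (Λ t * sigJ m₁ m₂ * (Λ t)ᴴ) * αᴴ) i j)) t := by
        intro t _
        have h := hGd t i j
        rw [hraw t] at h
        simpa [Matrix.smul_apply] using h
      have hint : IntervalIntegrable (fun t => (-Complex.I) *
          ((α * (Λ t * sigJ m₁ m₂ * (Λ t)ᴴ) - (Λ t * sigJ m₁ m₂ * (Λ t)ᴴ) * αᴴ) i j))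
          MeasureTheory.volume 0 x :=
        ((continuous_const.mul (hαFc i j)).intervalIntegrable _ _)
      have hsub := intervalIntegral.integral_eq_sub_of_hasDerivAt hderiv hint
      rw [intervalIntegral.integral_const_mul] at hsub
      calc (∫ t in (0:ℝ)..x, (α * (Λ t * sigJ m₁ m₂ * (Λ t)ᴴ)
              - (Λ t * sigJ m₁ m₂ * (Λ t)ᴴ) * αᴴ) i j)
          = Complex.I * ((-Complex.I) * ∫ t in (0:ℝ)..x,
              (α * (Λ t * sigJ m₁ m₂ * (Λ t)ᴴ)
                - (Λ t * sigJ m₁ m₂ * (Λ t)ᴴ) * αᴴ) i j) := by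
            rw [← mul_assoc]
            simp [mul_neg, Complex.I_mul_I, neg_neg, one_mul]
        _ = Complex.I * ((Λ x * (Λ x)ᴴ) i j - (Λ 0 * (Λ 0)ᴴ) i j) := by rw [hsub]
    ext i j
    have hαS : (α * S x) i j = (α * S₀) i j
        + ∫ t in (0:ℝ)..x, (α * (Λ t * sigJ m₁ m₂ * (Λ t)ᴴ)) i j := by
      calc (α * S x) i j
          = ∑ k, α i k * (S₀ k j + ∫ t in (0:ℝ)..x, (Λ t * sigJ m₁ m₂ * (Λ t)ᴴ) k j) := by
            rw [Matrix.mul_apply]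
            exact Finset.sum_congr rfl fun k _ => by rw [hS x k j]
        _ = (∑ k, α i k * S₀ k j)
            + ∑ k, α i k * ∫ t in (0:ℝ)..x, (Λ t * sigJ m₁ m₂ * (Λ t)ᴴ) k j := by
            simp only [mul_add, Finset.sum_add_distrib]
        _ = (α * S₀) i j + ∫ t in (0:ℝ)..x, (α * (Λ t * sigJ m₁ m₂ * (Λ t)ᴴ)) i j := by
            rw [Matrix.mul_apply, sum_mul_integral (fun k => α i k)
              (fun k t => (Λ t * sigJ m₁ m₂ * (Λ t)ᴴ) k j)
              (fun k => (hFc k j).intervalIntegrable _ _)]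
            have hfun2 : (fun t : ℝ => ∑ k, α i k * (Λ t * sigJ m₁ m₂ * (Λ t)ᴴ) k j)
                = fun t : ℝ => (α * (Λ t * sigJ m₁ m₂ * (Λ t)ᴴ)) i j := by
              funext t; rw [Matrix.mul_apply]
            rw [hfun2]
    have hSα : (S x * αᴴ) i j = (S₀ * αᴴ) i j
        + ∫ t in (0:ℝ)..x, ((Λ t * sigJ m₁ m₂ * (Λ t)ᴴ) * αᴴ) i j := by
      calc (S x * αᴴ) i j
          = ∑ k, αᴴ k j * (S₀ i k + ∫ t in (0:ℝ)..x, (Λ t * sigJ m₁ m₂ * (Λ t)ᴴ) i k) := by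
            rw [Matrix.mul_apply]
            exact Finset.sum_congr rfl fun k _ => by rw [hS x i k]; ring
        _ = (∑ k, αᴴ k j * S₀ i k)
            + ∑ k, αᴴ k j * ∫ t in (0:ℝ)..x, (Λ t * sigJ m₁ m₂ * (Λ t)ᴴ) i k := by
            simp only [mul_add, Finset.sum_add_distrib]
        _ = (S₀ * αᴴ) i j + ∫ t in (0:ℝ)..x, ((Λ t * sigJ m₁ m₂ * (Λ t)ᴴ) * αᴴ) i j := by
            rw [sum_mul_integral (fun k => αᴴ k j)
              (fun k t => (Λ t * sigJ m₁ m₂ * (Λ t)ᴴ) i k)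
              (fun k => (hFc i k).intervalIntegrable _ _)]
            have hfun2 : (fun t : ℝ => ∑ k, αᴴ k j * (Λ t * sigJ m₁ m₂ * (Λ t)ᴴ) i k)
                = fun t : ℝ => ((Λ t * sigJ m₁ m₂ * (Λ t)ᴴ) * αᴴ) i j := by
              funext t
              rw [Matrix.mul_apply]
              exact Finset.sum_congr rfl fun k _ => mul_comm _ _
            rw [hfun2]
            congr 1
            rw [Matrix.mul_apply]
            exact Finset.sum_congr rfl fun k _ => mul_comm _ _
    rw [Matrix.sub_apply, hαS, hSα]
    have hintsub : (∫ t in (0:ℝ)..x, (α * (Λ t * sigJ m₁ m₂ * (Λ t)ᴴ)) i j)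
        - (∫ t in (0:ℝ)..x, ((Λ t * sigJ m₁ m₂ * (Λ t)ᴴ) * αᴴ) i j)
        = ∫ t in (0:ℝ)..x, (α * (Λ t * sigJ m₁ m₂ * (Λ t)ᴴ)
            - (Λ t * sigJ m₁ m₂ * (Λ t)ᴴ) * αᴴ) i j := by
      have hfun3 : (fun t : ℝ => (α * (Λ t * sigJ m₁ m₂ * (Λ t)ᴴ)
          - (Λ t * sigJ m₁ m₂ * (Λ t)ᴴ) * αᴴ) i j)
          = fun t : ℝ => (α * (Λ t * sigJ m₁ m₂ * (Λ t)ᴴ)) i j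
            - ((Λ t * sigJ m₁ m₂ * (Λ t)ᴴ) * αᴴ) i j := by
        funext t; rw [Matrix.sub_apply]
      rw [hfun3, intervalIntegral.integral_sub
        ((entry_continuous_mul (A := fun _ : ℝ => α) (fun i k => continuous_const) hFc i j
          ).intervalIntegrable _ _)
        ((entry_continuous_mul (B := fun _ : ℝ => αᴴ) hFc (fun k l => continuous_const) i j
          ).intervalIntegrable _ _)]
    have hidij : (α * S₀) i j - (S₀ * αᴴ) i j = (Complex.I • (C₁ + C₂)) i j := by
      rw [← Matrix.sub_apply, hid]
    calc (α * S₀) i j + (∫ t in (0:ℝ)..x, (α * (Λ t * sigJ m₁ m₂ * (Λ t)ᴴ)) i j)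
          - ((S₀ * αᴴ) i j + ∫ t in (0:ℝ)..x, ((Λ t * sigJ m₁ m₂ * (Λ t)ᴴ) * αᴴ) i j)
        = ((α * S₀) i j - (S₀ * αᴴ) i j)
          + ((∫ t in (0:ℝ)..x, (α * (Λ t * sigJ m₁ m₂ * (Λ t)ᴴ)) i j)
            - (∫ t in (0:ℝ)..x, ((Λ t * sigJ m₁ m₂ * (Λ t)ᴴ) * αᴴ) i j)) := by ring
      _ = (Complex.I • (C₁ + C₂)) i j
          + Complex.I * ((Λ x * (Λ x)ᴴ) i j - (Λ 0 * (Λ 0)ᴴ) i j) := by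
          rw [hidij, hintsub, hFTC i j]
      _ = (Complex.I • (Λ x * (Λ x)ᴴ)) i j := by
          rw [hG0]
          simp only [Matrix.smul_apply, Matrix.add_apply, smul_eq_mul]
          ring
  -- derivatives and continuity of entries of S
  have hSd : ∀ (x : ℝ) (i j : Fin n), HasDerivAt (fun u => S u i j)
      ((Λ x * sigJ m₁ m₂ * (Λ x)ᴴ) i j) x := by
    intro x i j
    have hfun : (fun u => S u i j)
        = fun u => S₀ i j + ∫ t in (0:ℝ)..u, (Λ t * sigJ m₁ m₂ * (Λ t)ᴴ) i j :=
      funext fun u => hS u i j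
    rw [hfun]
    exact (intervalIntegral.integral_hasDerivAt_right
      ((hFc i j).intervalIntegrable _ _)
      ((hFc i j).stronglyMeasurableAtFilter _ _)
      (hFc i j).continuousAt).const_add _
  -- derivative of the entries of the conjugated function
  have hTd : ∀ (x : ℝ) (i j : Fin n),
      HasDerivAt (fun t => (Em α t * S t * Ep αᴴ t) i j)
        (((((-Complex.I) • (α * Em α x)) * S x
            + Em α x * (Λ x * sigJ m₁ m₂ * (Λ x)ᴴ)) * Ep αᴴ x
          + (Em α x * S x) * (Complex.I • (αᴴ * Ep αᴴ x)) : Matrix (Fin n) (Fin n) ℂ) i j) x :=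
    fun x i j => entry_hasDerivAt_mul
      (entry_hasDerivAt_mul (hdEm α x) (fun k l => hSd x k l)) (hdEp αᴴ x) i j
  -- the middle identity
  have hmid : ∀ x : ℝ, (-Complex.I) • (α * S x) + (Λ x * sigJ m₁ m₂ * (Λ x)ᴴ)
      + Complex.I • (S x * αᴴ) = (2:ℂ) • (Em α x * C₁ * Ep αᴴ x) := by
    intro x
    have h1 : (-Complex.I) • (α * S x) + Complex.I • (S x * αᴴ)
        = (-Complex.I) • (α * S x - S x * αᴴ) := by
      rw [smul_sub]
      simp only [neg_smul, smul_neg]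
      abel
    have h2 : (-Complex.I) • (α * S x - S x * αᴴ) = Λ x * (Λ x)ᴴ := by
      rw [key1 x, smul_smul]
      simp [Complex.I_mul_I]
    calc (-Complex.I) • (α * S x) + (Λ x * sigJ m₁ m₂ * (Λ x)ᴴ) + Complex.I • (S x * αᴴ)
        = ((-Complex.I) • (α * S x) + Complex.I • (S x * αᴴ))
          + (Λ x * sigJ m₁ m₂ * (Λ x)ᴴ) := by abel
      _ = Λ x * (Λ x)ᴴ + (Λ x * sigJ m₁ m₂ * (Λ x)ᴴ) := by rw [h1, h2]
      _ = (2:ℂ) • (Em α x * C₁ * Ep αᴴ x) := by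
          rw [hGdec x, hFdec x, two_smul]
          abel
  -- the derivative is 2 B Bᴴ
  have hV : ∀ x : ℝ,
      ((((-Complex.I) • (α * Em α x)) * S x
          + Em α x * (Λ x * sigJ m₁ m₂ * (Λ x)ᴴ)) * Ep αᴴ x
        + (Em α x * S x) * (Complex.I • (αᴴ * Ep αᴴ x)))
      = (2:ℂ) • (Em α x * (Em α x * θ₁) * (Em α x * (Em α x * θ₁))ᴴ) := by
    intro x
    have hBB : Em α x * (Em α x * θ₁) * (Em α x * (Em α x * θ₁))ᴴ
        = Em α x * (Em α x * C₁ * Ep αᴴ x) * Ep αᴴ x := by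
      simp only [Matrix.conjTranspose_mul, Em_conjTranspose, hC₁def, Matrix.mul_assoc]
    calc (((-Complex.I) • (α * Em α x)) * S x
          + Em α x * (Λ x * sigJ m₁ m₂ * (Λ x)ᴴ)) * Ep αᴴ x
        + (Em α x * S x) * (Complex.I • (αᴴ * Ep αᴴ x))
        = Em α x * ((-Complex.I) • (α * S x) + (Λ x * sigJ m₁ m₂ * (Λ x)ᴴ)
            + Complex.I • (S x * αᴴ)) * Ep αᴴ x := by
          simp only [Matrix.mul_add, Matrix.add_mul, smul_mul_assoc, mul_smul_comm,
            Matrix.mul_assoc, show α * Em α x = Em α x * α from comm_Em α x,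
            show αᴴ * Ep αᴴ x = Ep αᴴ x * αᴴ from comm_Ep αᴴ x]
      _ = Em α x * ((2:ℂ) • (Em α x * C₁ * Ep αᴴ x)) * Ep αᴴ x := by rw [hmid x]
      _ = (2:ℂ) • (Em α x * (Em α x * θ₁) * (Em α x * (Em α x * θ₁))ᴴ) := by
          rw [hBB]
          simp only [smul_mul_assoc, mul_smul_comm]
  have cBb : ∀ (i : Fin n) (k : Fin m₁),
      Continuous fun t : ℝ => (Em α t * (Em α t * θ₁)) i k := by
    intro i k
    exact entry_continuous_mul (cEm α)
      (fun k l => entry_continuous_mul (B := fun _ : ℝ => θ₁) (cEm α)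
        (fun _ _ => continuous_const) k l) i k
  have cBbH : ∀ (k : Fin m₁) (j : Fin n),
      Continuous fun t : ℝ => ((Em α t * (Em α t * θ₁))ᴴ) k j := by
    intro k j
    simp only [Matrix.conjTranspose_apply]
    exact (cBb j k).star
  have hBc : ∀ (i j : Fin n), Continuous fun t : ℝ =>
      (((2:ℂ) • (Em α t * (Em α t * θ₁) * (Em α t * (Em α t * θ₁))ᴴ))
        : Matrix (Fin n) (Fin n) ℂ) i j := by
    intro i j
    simp only [Matrix.smul_apply, smul_eq_mul]
    exact continuous_const.mul
      (entry_continuous_mul (B := fun t : ℝ => (Em α t * (Em α t * θ₁))ᴴ) cBb cBbH i j)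
  -- T(0) = S₀
  have hT0 : Em α 0 * S 0 * Ep αᴴ 0 = S₀ := by
    have hS0 : S 0 = S₀ := by
      ext i j
      rw [hS 0 i j, intervalIntegral.integral_same, add_zero]
    rw [hS0, Em_zero, Ep_zero, Matrix.one_mul, Matrix.mul_one]
  -- integral representation of T x - S₀
  have hTrep : ∀ x : ℝ, ∀ i j : Fin n, (Em α x * S x * Ep αᴴ x - S₀) i j
      = ∫ t in (0:ℝ)..x,
        (((2:ℂ) • (Em α t * (Em α t * θ₁) * (Em α t * (Em α t * θ₁))ᴴ))
          : Matrix (Fin n) (Fin n) ℂ) i j := by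
    intro x i j
    have hderiv : ∀ t ∈ Set.uIcc (0:ℝ) x,
        HasDerivAt (fun u => (Em α u * S u * Ep αᴴ u) i j)
          ((((2:ℂ) • (Em α t * (Em α t * θ₁) * (Em α t * (Em α t * θ₁))ᴴ))
            : Matrix (Fin n) (Fin n) ℂ) i j) t := by
      intro t _
      have h := hTd t i j
      rw [hV t] at h
      exact h
    have := intervalIntegral.integral_eq_sub_of_hasDerivAt hderiv
      ((hBc i j).intervalIntegrable _ _)
    rw [this, Matrix.sub_apply, hT0]
  -- now fix x ≥ 0 and conclude
  intro x hx
  have hPSD : (Em α x * S x * Ep αᴴ x - S₀).PosSemidef := by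
    refine posSemidef_ofIntegral hx _ _ hBc (fun t => ?_) (hTrep x)
    rw [two_smul ℂ (Em α t * (Em α t * θ₁) * (Em α t * (Em α t * θ₁))ᴴ)]
    exact (Matrix.posSemidef_self_mul_conjTranspose _).add
      (Matrix.posSemidef_self_mul_conjTranspose _)
  have hTpos : (Em α x * S x * Ep αᴴ x).PosDef := by
    have h := hS₀.add_posSemidef hPSD
    rwa [show S₀ + (Em α x * S x * Ep αᴴ x - S₀) = Em α x * S x * Ep αᴴ x by abel] at h
  have hSrw : S x = Ep α x * (Em α x * S x * Ep αᴴ x) * (Ep α x)ᴴ := by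
    rw [Ep_conjTranspose]
    calc S x = (Ep α x * Em α x) * S x * (Ep αᴴ x * Em αᴴ x) := by
          rw [Ep_mul_Em, Ep_mul_Em, Matrix.one_mul, Matrix.mul_one]
      _ = Ep α x * (Em α x * S x * Ep αᴴ x) * Em αᴴ x := by
          simp only [Matrix.mul_assoc]
  have hSpos : (S x).PosDef := by
    rw [hSrw]
    exact posDef_conj hTpos (Ep_mul_Em α x)
  have hadm2 : α * S x - S x * αᴴ
      = Complex.I • ((Em α x * θ₁) * (Em α x * θ₁)ᴴ + (Ep α x * θ₂) * (Ep α x * θ₂)ᴴ) := by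
    rw [key1 x]
    congr 1
    rw [hGdec x]
    simp only [Matrix.conjTranspose_mul, Em_conjTranspose, Ep_conjTranspose,
      Matrix.mul_assoc, hC₁def, hC₂def]
  exact ⟨key1 x, hPSD, hSpos, hSpos, hadm2⟩
end

section
/- Let {α, S₀, ϑ₁, ϑ₂} be an admissible quadruple, let Λ(x) = [e^{-ixα}ϑ₁, e^{ixα}ϑ₂], S(x) = S₀ + ∫₀ˣ Λ(t) j Λ(t)* dt, and let v(x) = 2ϑ₁*e^{ixα*}S(x)⁻¹e^{ixα}ϑ₂ be the associated pseudo-exponential potential. Then v is bounded on [0, ∞): there exists M > 0 such that ‖v(x)‖ ≤ M for all x ≥ 0, where ‖·‖ denotes the operator norm induced by the ℓ² vector norm. -/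
open Matrix
open scoped ComplexOrder Matrix.Norms.L2Operator

/-! ### Auxiliary material -/

noncomputable section PseudoExpAux

/-- real-parameter matrix exponential -/
def expR {n : ℕ} (B : Matrix (Fin n) (Fin n) ℂ) (t : ℝ) : Matrix (Fin n) (Fin n) ℂ :=
  NormedSpace.exp (t • B)

variable {n a b : ℕ}

lemma hasDerivAt_expR (B : Matrix (Fin n) (Fin n) ℂ) (t : ℝ) :
    HasDerivAt (expR B) (B * expR B t) t :=
  hasDerivAt_exp_smul_const' B t

lemma hasDerivAt_expR' (B : Matrix (Fin n) (Fin n) ℂ) (t : ℝ) :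
    HasDerivAt (expR B) (expR B t * B) t :=
  hasDerivAt_exp_smul_const B t

lemma expR_conjTranspose (B : Matrix (Fin n) (Fin n) ℂ) (t : ℝ) :
    (expR B t)ᴴ = expR Bᴴ t := by
  rw [expR, expR, ← Matrix.exp_conjTranspose, conjTranspose_smul]
  norm_num

lemma expC_eq_expR (B : Matrix (Fin n) (Fin n) ℂ) (x : ℝ) :
    NormedSpace.exp ((x : ℂ) • B) = expR B x := by
  rw [expR]
  norm_num

lemma expR_zero (B : Matrix (Fin n) (Fin n) ℂ) : expR B 0 = 1 := by
  rw [expR, zero_smul, NormedSpace.exp_zero]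

lemma expR_neg_arg (B : Matrix (Fin n) (Fin n) ℂ) (x : ℝ) : expR B (-x) = expR (-B) x := by
  rw [expR, expR, neg_smul, ← smul_neg]

lemma expR_mul_expR_neg (B : Matrix (Fin n) (Fin n) ℂ) (t : ℝ) :
    expR B t * expR (-B) t = 1 := by
  have hc : Commute (t • B) (t • (-B)) := by
    rw [smul_neg]; exact (Commute.refl (t • B)).neg_right
  rw [expR, expR, ← Matrix.exp_add_of_commute _ _ hc, smul_neg, add_neg_cancel,
    NormedSpace.exp_zero]

lemma expR_neg_mul_expR (B : Matrix (Fin n) (Fin n) ℂ) (t : ℝ) :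
    expR (-B) t * expR B t = 1 := by
  simpa using expR_mul_expR_neg (-B) t

lemma commute_expR (B : Matrix (Fin n) (Fin n) ℂ) (t : ℝ) :
    B * expR B t = expR B t * B :=
  ((Commute.refl B).smul_right t).exp_right |>.eq

lemma continuous_expR (B : Matrix (Fin n) (Fin n) ℂ) : Continuous (expR B) :=
  continuous_iff_continuousAt.2 fun t => (hasDerivAt_expR B t).continuousAt

/-- entry evaluation as a continuous linear map -/
def entryCLM (i : Fin a) (j : Fin b) : Matrix (Fin a) (Fin b) ℂ →L[ℝ] ℂ :=
  haveI : FiniteDimensional ℝ (Matrix (Fin a) (Fin b) ℂ) := Module.Finite.trans ℂ _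
  LinearMap.toContinuousLinearMap
    { toFun := fun M => M i j
      map_add' := fun _ _ => rfl
      map_smul' := fun _ _ => rfl }

lemma hasDerivAt_entry {f : ℝ → Matrix (Fin a) (Fin b) ℂ} {f' : Matrix (Fin a) (Fin b) ℂ} {x : ℝ}
    (h : HasDerivAt f f' x) (i : Fin a) (j : Fin b) :
    HasDerivAt (fun t => f t i j) (f' i j) x :=
  ((entryCLM i j).hasFDerivAt.comp_hasDerivAt x h :)

lemma continuous_entry {f : ℝ → Matrix (Fin a) (Fin b) ℂ} (h : Continuous f)
    (i : Fin a) (j : Fin b) : Continuous fun t => f t i j :=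
  ((entryCLM i j).continuous.comp h :)

lemma hasDerivAt_of_entries {f : ℝ → Matrix (Fin a) (Fin b) ℂ} {g : Matrix (Fin a) (Fin b) ℂ}
    {x : ℝ} (h : ∀ i j, HasDerivAt (fun t => f t i j) (g i j) x) : HasDerivAt f g x := by
  have h1 : HasDerivAt (fun t => ∑ i : Fin a, ∑ j : Fin b, f t i j • single i j (1:ℂ))
      (∑ i : Fin a, ∑ j : Fin b, g i j • single i j (1:ℂ)) x := by
    apply HasDerivAt.fun_sum; intro i _; apply HasDerivAt.fun_sum; intro j _
    exact (h i j).smul_const _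
  convert h1 using 1
  · funext t
    simp only [smul_single, smul_eq_mul, mul_one]
    exact matrix_eq_sum_single (f t)
  · simp only [smul_single, smul_eq_mul, mul_one]
    exact matrix_eq_sum_single g

/-- derivative of `t ↦ e^{tB} f(t) e^{tD}` -/
lemma hasDerivAt_expR_conj (B D : Matrix (Fin n) (Fin n) ℂ) {f : ℝ → Matrix (Fin n) (Fin n) ℂ}
    {f' : Matrix (Fin n) (Fin n) ℂ} {x : ℝ} (hf : HasDerivAt f f' x) :
    HasDerivAt (fun t => expR B t * f t * expR D t)
      (B * (expR B x * f x * expR D x) + expR B x * f' * expR D x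
        + (expR B x * f x * expR D x) * D) x := by
  have h := ((hasDerivAt_expR B x).mul hf).mul (hasDerivAt_expR' D x)
  refine h.congr_deriv ?_
  simp only [Pi.mul_apply]
  noncomm_ring

lemma hasDerivAt_expR_conj_const (B D C : Matrix (Fin n) (Fin n) ℂ) (x : ℝ) :
    HasDerivAt (fun t => expR B t * C * expR D t)
      (B * (expR B x * C * expR D x) + (expR B x * C * expR D x) * D) x := by
  have h := hasDerivAt_expR_conj B D (f := fun _ => C) (hasDerivAt_const x C)
  simpa using h

lemma l2_opNorm_stdBasisMatrix (k : Fin a) (l : Fin b) (c : ℂ) :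
    ‖single k l c‖ ≤ ‖c‖ := by
  rw [Matrix.l2_opNorm_def]
  refine ContinuousLinearMap.opNorm_le_bound _ (norm_nonneg c) fun u => ?_
  have hu : (((Matrix.toEuclideanLin).trans LinearMap.toContinuousLinearMap)
      (single k l c)) u = EuclideanSpace.single k (c * u l) := by
    ext i
    show ((single k l c) *ᵥ (WithLp.equiv 2 _ u)) i = _
    rcases eq_or_ne i k with h | h
    · simp [h, Matrix.mulVec, dotProduct, Matrix.single, ite_and,
        EuclideanSpace.single_apply, eq_comm]
    · simp [h, Ne.symm h, Matrix.mulVec, dotProduct, Matrix.single, ite_and,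
        EuclideanSpace.single_apply]
  rw [hu, EuclideanSpace.norm_single, norm_mul]
  have h1 : ‖u l‖ ≤ ‖u‖ := by
    rw [EuclideanSpace.norm_eq]
    have h2 : ‖u l‖ ^ 2 ≤ ∑ i, ‖u i‖ ^ 2 :=
      Finset.single_le_sum (f := fun i => ‖u i‖ ^ 2) (fun i _ => sq_nonneg _) (Finset.mem_univ l)
    calc ‖u l‖ = Real.sqrt (‖u l‖ ^ 2) := by rw [Real.sqrt_sq (norm_nonneg _)]
    _ ≤ _ := Real.sqrt_le_sqrt h2
  exact mul_le_mul_of_nonneg_left h1 (norm_nonneg c)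

lemma l2_opNorm_le_sum_entries (M : Matrix (Fin a) (Fin b) ℂ) :
    ‖M‖ ≤ ∑ k : Fin a, ∑ l : Fin b, ‖M k l‖ := by
  calc ‖M‖ = ‖∑ k : Fin a, ∑ l : Fin b, single k l (M k l)‖ := by
        rw [← matrix_eq_sum_single M]
  _ ≤ ∑ k : Fin a, ‖∑ l : Fin b, single k l (M k l)‖ := norm_sum_le _ _
  _ ≤ ∑ k : Fin a, ∑ l : Fin b, ‖M k l‖ := by
      refine Finset.sum_le_sum fun k _ => ?_
      exact (norm_sum_le _ _).trans (Finset.sum_le_sum fun l _ => l2_opNorm_stdBasisMatrix k l _)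

lemma conj_intervalIntegral (f : ℝ → ℂ) (a b : ℝ) :
    (starRingEnd ℂ) (∫ t in a..b, f t) = ∫ t in a..b, (starRingEnd ℂ) (f t) := by
  rw [intervalIntegral, intervalIntegral, map_sub, ← integral_conj, ← integral_conj]

lemma dotProduct_conj_sandwich (L M : Matrix (Fin n) (Fin n) ℂ) (y : Fin n → ℂ) :
    star y ⬝ᵥ (L * M * Lᴴ) *ᵥ y = star (Lᴴ *ᵥ y) ⬝ᵥ M *ᵥ (Lᴴ *ᵥ y) := by
  simp only [star_mulVec, dotProduct_mulVec, vecMul_vecMul, conjTranspose_conjTranspose]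

lemma hasDerivAt_dot_re {f : ℝ → Matrix (Fin n) (Fin n) ℂ} {f' : Matrix (Fin n) (Fin n) ℂ}
    {x : ℝ} (h : HasDerivAt f f' x) (y : Fin n → ℂ) :
    HasDerivAt (fun t => (star y ⬝ᵥ (f t) *ᵥ y).re) ((star y ⬝ᵥ f' *ᵥ y).re) x := by
  have h1 : HasDerivAt (fun t => star y ⬝ᵥ (f t) *ᵥ y) (star y ⬝ᵥ f' *ᵥ y) x := by
    simp only [dotProduct, Matrix.mulVec]
    apply HasDerivAt.fun_sum; intro i _
    exact (HasDerivAt.fun_sum (fun j _ => (((hasDerivAt_entry h i j)).mul_const (y j)))).const_mul _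
  exact (Complex.reCLM.hasFDerivAt.comp_hasDerivAt x h1 :)

lemma im_dot_eq_zero {M : Matrix (Fin n) (Fin n) ℂ} (h : M.IsHermitian) (y : Fin n → ℂ) :
    (star y ⬝ᵥ M *ᵥ y).im = 0 := by
  have h1 : (starRingEnd ℂ) (star y ⬝ᵥ M *ᵥ y) = star y ⬝ᵥ M *ᵥ y := by
    show star (star y ⬝ᵥ M *ᵥ y) = star y ⬝ᵥ M *ᵥ y
    conv_lhs => rw [Matrix.star_dotProduct, star_star, Matrix.star_mulVec,
      ← Matrix.dotProduct_mulVec]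
    rw [h.eq]
  exact Complex.conj_eq_iff_im.mp h1

lemma fromColumns_sigJ {m₁ m₂ : ℕ} (L₁ : Matrix (Fin n) (Fin m₁) ℂ)
    (L₂ : Matrix (Fin n) (Fin m₂) ℂ) :
    fromCols L₁ L₂ * sigJ m₁ m₂ * (fromCols L₁ L₂)ᴴ = L₁ * L₁ᴴ - L₂ * L₂ᴴ := by
  rw [sigJ, fromCols_mul_fromBlocks, conjTranspose_fromCols_eq_fromRows_conjTranspose,
    fromCols_mul_fromRows]
  simp [sub_eq_add_neg]

end PseudoExpAux
set_option maxHeartbeats 1000000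

/-- the pseudo-exponential potential `v(x) = 2ϑ₁*e^{ixα*}S(x)⁻¹e^{ixα}ϑ₂` is
bounded on `[0,∞)` in the operator norm induced by the `ℓ²` vector norm. -/
theorem pseudoExponential_potential_bounded
    {n m₁ m₂ : ℕ} (α S₀ : Matrix (Fin n) (Fin n) ℂ)
    (θ₁ : Matrix (Fin n) (Fin m₁) ℂ) (θ₂ : Matrix (Fin n) (Fin m₂) ℂ)
    (hadm : Admissible α S₀ θ₁ θ₂)
    (Λ : ℝ → Matrix (Fin n) (Fin m₁ ⊕ Fin m₂) ℂ)
    (hΛ : ∀ x : ℝ, Λ x = Matrix.fromCols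
      (NormedSpace.exp ((-(Complex.I * (x : ℂ))) • α) * θ₁)
      (NormedSpace.exp ((Complex.I * (x : ℂ)) • α) * θ₂))
    (S : ℝ → Matrix (Fin n) (Fin n) ℂ)
    (hS : ∀ (x : ℝ) (i j : Fin n),
      S x i j = S₀ i j + ∫ t in (0:ℝ)..x, (Λ t * sigJ m₁ m₂ * (Λ t)ᴴ) i j)
    (v : ℝ → Matrix (Fin m₁) (Fin m₂) ℂ)
    (hv : ∀ x : ℝ, v x = (2:ℂ) • (θ₁ᴴ * NormedSpace.exp ((Complex.I * (x : ℂ)) • αᴴ) *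
      (S x)⁻¹ * NormedSpace.exp ((Complex.I * (x : ℂ)) • α) * θ₂)) :
    ∃ M : ℝ, 0 < M ∧ ∀ x : ℝ, 0 ≤ x → ‖v x‖ ≤ M := by
  classical
  obtain ⟨hS₀, hadm2⟩ := hadm
  set A : Matrix (Fin n) (Fin n) ℂ := Complex.I • α with hA
  have hAH : -Aᴴ = Complex.I • αᴴ := by
    rw [hA, conjTranspose_smul]
    simp [Complex.star_def, Complex.conj_I]
  -- translations of the complex exponentials into `expR` form
  have hcol1 : ∀ x : ℝ, NormedSpace.exp ((-(Complex.I * (x:ℂ))) • α) = expR (-A) x := by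
    intro x
    have h1 : (-(Complex.I * (x:ℂ))) • α = ((-x : ℝ) : ℂ) • A := by
      rw [hA, smul_smul]
      congr 1
      push_cast
      ring
    rw [h1, expC_eq_expR, expR_neg_arg]
  have hcol2 : ∀ x : ℝ, NormedSpace.exp ((Complex.I * (x:ℂ)) • α) = expR A x := by
    intro x
    have h1 : (Complex.I * (x:ℂ)) • α = ((x : ℝ) : ℂ) • A := by
      rw [hA, smul_smul]; congr 1; ring
    rw [h1, expC_eq_expR]
  have hcolH : ∀ x : ℝ, NormedSpace.exp ((Complex.I * (x:ℂ)) • αᴴ) = expR (-Aᴴ) x := by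
    intro x
    have h1 : (Complex.I * (x:ℂ)) • αᴴ = ((x : ℝ) : ℂ) • (-Aᴴ) := by
      rw [hAH, smul_smul]; congr 1; ring
    rw [h1, expC_eq_expR]
  set Λ₁ : ℝ → Matrix (Fin n) (Fin m₁) ℂ := fun x => expR (-A) x * θ₁ with hΛ₁def
  set Λ₂ : ℝ → Matrix (Fin n) (Fin m₂) ℂ := fun x => expR A x * θ₂ with hΛ₂def
  set P₁ : ℝ → Matrix (Fin n) (Fin n) ℂ :=
    fun x => expR (-A) x * (θ₁ * θ₁ᴴ) * expR (-Aᴴ) x with hP₁def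
  set P₂ : ℝ → Matrix (Fin n) (Fin n) ℂ :=
    fun x => expR A x * (θ₂ * θ₂ᴴ) * expR Aᴴ x with hP₂def
  have hΛ₁H : ∀ x, (Λ₁ x)ᴴ = θ₁ᴴ * expR (-Aᴴ) x := by
    intro x
    rw [hΛ₁def]
    simp only [conjTranspose_mul, expR_conjTranspose, conjTranspose_neg]
  have hΛ₂H : ∀ x, (Λ₂ x)ᴴ = θ₂ᴴ * expR Aᴴ x := by
    intro x
    rw [hΛ₂def]
    simp only [conjTranspose_mul, expR_conjTranspose]
  have hP₁Λ : ∀ x, Λ₁ x * (Λ₁ x)ᴴ = P₁ x := by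
    intro x
    rw [hΛ₁H x, hΛ₁def, hP₁def]
    simp only [Matrix.mul_assoc]
  have hP₂Λ : ∀ x, Λ₂ x * (Λ₂ x)ᴴ = P₂ x := by
    intro x
    rw [hΛ₂H x, hΛ₂def, hP₂def]
    simp only [Matrix.mul_assoc]
  have hint : ∀ t : ℝ, Λ t * sigJ m₁ m₂ * (Λ t)ᴴ = P₁ t - P₂ t := by
    intro t
    rw [hΛ t, hcol1, hcol2, fromColumns_sigJ]
    rw [show expR (-A) t * θ₁ = Λ₁ t from rfl, show expR A t * θ₂ = Λ₂ t from rfl,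
      hP₁Λ t, hP₂Λ t]
  have hPc : Continuous fun t => P₁ t - P₂ t := by
    apply Continuous.sub
    · exact ((continuous_expR (-A)).mul continuous_const).mul (continuous_expR (-Aᴴ))
    · exact ((continuous_expR A).mul continuous_const).mul (continuous_expR Aᴴ)
  have hS' : ∀ x, HasDerivAt S (P₁ x - P₂ x) x := by
    intro x
    apply hasDerivAt_of_entries
    intro i j
    have hfc : Continuous fun t => (Λ t * sigJ m₁ m₂ * (Λ t)ᴴ) i j := by
      have he : (fun t => (Λ t * sigJ m₁ m₂ * (Λ t)ᴴ) i j) = fun t => (P₁ t - P₂ t) i j :=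
        funext fun t => by rw [hint t]
      rw [he]; exact continuous_entry hPc i j
    have hderiv := intervalIntegral.integral_hasDerivAt_right
      (hfc.intervalIntegrable 0 x) (hfc.stronglyMeasurableAtFilter _ _) hfc.continuousAt
    have heq : (fun t => S t i j)
        = fun t => S₀ i j + ∫ s in (0:ℝ)..t, (Λ s * sigJ m₁ m₂ * (Λ s)ᴴ) i j :=
      funext fun t => hS t i j
    rw [heq]
    have h2 := (hasDerivAt_const x (S₀ i j)).add hderiv
    simpa [hint x] using hderiv
  have hS0 : S 0 = S₀ := by
    ext i j; rw [hS 0 i j, intervalIntegral.integral_same, add_zero]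
  have hP₁' : ∀ x, HasDerivAt P₁ ((-A) * P₁ x + P₁ x * (-Aᴴ)) x := by
    intro x
    have h := hasDerivAt_expR_conj_const (-A) (-Aᴴ) (θ₁ * θ₁ᴴ) x
    rw [hP₁def]
    convert h using 2
  have hP₂' : ∀ x, HasDerivAt P₂ (A * P₂ x + P₂ x * Aᴴ) x := by
    intro x
    have h := hasDerivAt_expR_conj_const A Aᴴ (θ₂ * θ₂ᴴ) x
    rw [hP₂def]
    exact h
  -- the matrix identity α S(x) − S(x) αᴴ = i (Λ₁Λ₁ᴴ + Λ₂Λ₂ᴴ)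
  have idS : ∀ x, α * S x - S x * αᴴ = Complex.I • (P₁ x + P₂ x) := by
    have hΦ' : ∀ x, HasDerivAt
        (fun t => α * S t - S t * αᴴ - Complex.I • (P₁ t + P₂ t)) 0 x := by
      intro x
      have h6 := (((hS' x).const_mul α).sub ((hS' x).mul_const αᴴ)).sub
        (((hP₁' x).add (hP₂' x)).const_smul Complex.I)
      refine h6.congr_deriv ?_
      have hA' : Aᴴ = -(Complex.I • αᴴ) := by rw [← hAH, neg_neg]
      rw [hA, hA']
      simp only [smul_add, smul_sub, smul_smul, mul_sub, sub_mul, mul_add, add_mul,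
        smul_mul_assoc, mul_smul_comm, neg_mul, mul_neg, neg_smul, smul_neg, neg_neg,
        Complex.I_mul_I, one_smul]
      abel
    have hconst := is_const_of_deriv_eq_zero
      (fun t => (hΦ' t).differentiableAt) (fun t => (hΦ' t).deriv)
    intro x
    have h0 : α * S 0 - S 0 * αᴴ - Complex.I • (P₁ 0 + P₂ 0) = 0 := by
      have e1 : P₁ 0 = θ₁ * θ₁ᴴ := by rw [hP₁def]; simp [expR_zero]
      have e2 : P₂ 0 = θ₂ * θ₂ᴴ := by rw [hP₂def]; simp [expR_zero]
      rw [hS0, e1, e2, hadm2, sub_self]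
    have hx0 := hconst x 0
    rw [h0] at hx0
    exact sub_eq_zero.mp hx0
  -- the transformed kernel W
  set W : ℝ → Matrix (Fin n) (Fin n) ℂ :=
    fun t => expR (-A) t * S t * expR (-Aᴴ) t with hWdef
  have hW' : ∀ x, HasDerivAt W ((2:ℂ) • (expR (-A) x * P₁ x * expR (-Aᴴ) x)) x := by
    intro x
    have h := hasDerivAt_expR_conj (-A) (-Aᴴ) (hS' x)
    rw [hWdef]
    convert h using 1
    have hc1 : (-A) * expR (-A) x = expR (-A) x * (-A) := commute_expR (-A) x
    have hc2 : expR (-Aᴴ) x * (-Aᴴ) = (-Aᴴ) * expR (-Aᴴ) x := (commute_expR (-Aᴴ) x).symm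
    have e1 : (-A) * (expR (-A) x * S x * expR (-Aᴴ) x)
        = expR (-A) x * ((-A) * S x) * expR (-Aᴴ) x := by
      simp only [← Matrix.mul_assoc]
      rw [hc1]
    have e3 : (expR (-A) x * S x * expR (-Aᴴ) x) * (-Aᴴ)
        = expR (-A) x * (S x * (-Aᴴ)) * expR (-Aᴴ) x := by
      simp only [Matrix.mul_assoc]
      rw [hc2]
    rw [e1, e3]
    have hfactor : ∀ X Y Z : Matrix (Fin n) (Fin n) ℂ,
        expR (-A) x * X * expR (-Aᴴ) x + expR (-A) x * Y * expR (-Aᴴ) x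
          + expR (-A) x * Z * expR (-Aᴴ) x
        = expR (-A) x * (X + Y + Z) * expR (-Aᴴ) x := by
      intro X Y Z
      simp only [Matrix.mul_add, Matrix.add_mul]
    rw [hfactor]
    have hinner2 : (-A) * S x + (P₁ x - P₂ x) + S x * (-Aᴴ) = (2:ℂ) • P₁ x := by
      have h1 : (-A) * S x + S x * (-Aᴴ) = P₁ x + P₂ x := by
        have hA' : Aᴴ = -(Complex.I • αᴴ) := by rw [← hAH, neg_neg]
        calc (-A) * S x + S x * (-Aᴴ)
            = -(Complex.I • (α * S x - S x * αᴴ)) := by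
              rw [hA, hA']
              simp only [neg_neg, smul_sub, neg_mul, mul_neg, smul_mul_assoc, mul_smul_comm,
                neg_smul, smul_neg]
              abel
        _ = -(Complex.I • (Complex.I • (P₁ x + P₂ x))) := by rw [idS x]
        _ = P₁ x + P₂ x := by
              rw [smul_smul, Complex.I_mul_I, neg_smul, one_smul, neg_neg]
      have h2 : (-A) * S x + (P₁ x - P₂ x) + S x * (-Aᴴ)
          = ((-A) * S x + S x * (-Aᴴ)) + (P₁ x - P₂ x) := by abel
      rw [h2, h1, two_smul]
      abel
    rw [hinner2]
    simp only [mul_smul_comm, smul_mul_assoc]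
  have hW0 : W 0 = S₀ := by
    rw [hWdef]; simp [expR_zero, hS0]
  -- S is Hermitian
  have hSH : ∀ x, (S x).IsHermitian := by
    intro x
    have hintH : ∀ t : ℝ, (P₁ t - P₂ t).IsHermitian := by
      intro t
      rw [← hP₁Λ t, ← hP₂Λ t]
      exact (isHermitian_mul_conjTranspose_self _).sub (isHermitian_mul_conjTranspose_self _)
    show (S x)ᴴ = S x
    ext i j
    rw [conjTranspose_apply, hS x j i, hS x i j, star_add]
    congr 1
    · exact hS₀.isHermitian.apply i j
    · have : (fun t : ℝ => (Λ t * sigJ m₁ m₂ * (Λ t)ᴴ) j i)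
          = fun t : ℝ => (P₁ t - P₂ t) j i := funext fun t => by rw [hint t]
      rw [this, show star (∫ t in (0:ℝ)..x, (P₁ t - P₂ t) j i)
          = (starRingEnd ℂ) (∫ t in (0:ℝ)..x, (P₁ t - P₂ t) j i) from rfl,
        conj_intervalIntegral]
      have : (fun t : ℝ => (starRingEnd ℂ) ((P₁ t - P₂ t) j i))
          = fun t : ℝ => (Λ t * sigJ m₁ m₂ * (Λ t)ᴴ) i j := by
        funext t
        rw [hint t]
        exact (hintH t).apply i j
      rw [this]
  -- S is positive definite for x ≥ 0
  have hSpos : ∀ x : ℝ, 0 ≤ x → (S x).PosDef := by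
    intro x hx
    refine posDef_iff_dotProduct_mulVec.mpr ⟨hSH x, fun y hy => ?_⟩
    set z : Fin n → ℂ := expR Aᴴ x *ᵥ y with hzdef
    have hz0 : z ≠ 0 := by
      intro h
      apply hy
      have h2 : expR (-Aᴴ) x *ᵥ z = y := by
        rw [hzdef, mulVec_mulVec, expR_neg_mul_expR, one_mulVec]
      rw [← h2, h, mulVec_zero]
    have hSW : S x = expR A x * W x * (expR A x)ᴴ := by
      rw [hWdef, expR_conjTranspose]
      simp only [← Matrix.mul_assoc]
      rw [expR_mul_expR_neg]
      simp only [Matrix.one_mul, Matrix.mul_assoc]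
      rw [expR_neg_mul_expR, Matrix.mul_one]
    have hdot : star y ⬝ᵥ S x *ᵥ y = star z ⬝ᵥ W x *ᵥ z := by
      conv_lhs => rw [hSW]
      rw [dotProduct_conj_sandwich, hzdef, expR_conjTranspose]
    -- monotonicity of the quadratic form of W along [0, ∞)
    have hg' : ∀ t : ℝ, HasDerivAt (fun u => (star z ⬝ᵥ W u *ᵥ z).re)
        ((star z ⬝ᵥ ((2:ℂ) • (expR (-A) t * P₁ t * expR (-Aᴴ) t)) *ᵥ z).re) t :=
      fun t => hasDerivAt_dot_re (hW' t) z
    have hgnonneg : ∀ t : ℝ,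
        0 ≤ (star z ⬝ᵥ ((2:ℂ) • (expR (-A) t * P₁ t * expR (-Aᴴ) t)) *ᵥ z).re := by
      intro t
      have hNf : expR (-A) t * P₁ t * expR (-Aᴴ) t
          = (expR (-A) t * Λ₁ t) * (expR (-A) t * Λ₁ t)ᴴ := by
        have e : (expR (-A) t * Λ₁ t)ᴴ = (Λ₁ t)ᴴ * expR (-Aᴴ) t := by
          rw [conjTranspose_mul, expR_conjTranspose, conjTranspose_neg]
        rw [e, ← hP₁Λ t, hΛ₁H t]
        simp only [Matrix.mul_assoc]
      rw [hNf, smul_mulVec, dotProduct_smul, smul_eq_mul]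
      have hpsd := (posSemidef_self_mul_conjTranspose (expR (-A) t * Λ₁ t)).dotProduct_mulVec_nonneg z
      have hre := (Complex.le_def.mp hpsd).1
      simp only [Complex.zero_re] at hre
      have : ((2:ℂ) * (star z ⬝ᵥ ((expR (-A) t * Λ₁ t) * (expR (-A) t * Λ₁ t)ᴴ) *ᵥ z)).re
          = 2 * (star z ⬝ᵥ ((expR (-A) t * Λ₁ t) * (expR (-A) t * Λ₁ t)ᴴ) *ᵥ z).re := by
        rw [Complex.mul_re]
        norm_num
      rw [this]
      linarith
    have hgmono : (star z ⬝ᵥ W 0 *ᵥ z).re ≤ (star z ⬝ᵥ W x *ᵥ z).re := by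
      have hmono := monotoneOn_of_deriv_nonneg (convex_Ici (0:ℝ))
        (Continuous.continuousOn (by
          rw [continuous_iff_continuousAt]; exact fun t => (hg' t).continuousAt))
        (fun t _ => (hg' t).differentiableAt.differentiableWithinAt)
        (fun t _ => by rw [(hg' t).deriv]; exact hgnonneg t)
      exact hmono Set.self_mem_Ici (Set.mem_Ici.mpr hx) hx
    have hre : 0 < (star y ⬝ᵥ S x *ᵥ y).re := by
      rw [hdot]
      refine lt_of_lt_of_le ?_ hgmono
      rw [hW0]
      have := hS₀.re_dotProduct_pos hz0
      simpa using this
    have him : (star y ⬝ᵥ S x *ᵥ y).im = 0 := im_dot_eq_zero (hSH x) y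
    rw [Complex.lt_def]
    constructor
    · simpa using hre
    · simpa using him.symm
  -- final bound
  have main : ∀ x : ℝ, 0 ≤ x →
      0 ≤ 2 * (Matrix.trace α).im ∧
        ‖v x‖ ≤ (m₁ : ℝ) * m₂ * (2 * (2 * (Matrix.trace α).im)) := by
    intro x hx
    have hpd := hSpos x hx
    have hdet : IsUnit (S x).det := (Matrix.isUnit_iff_isUnit_det _).mp hpd.isUnit
    have hPinv : ((S x)⁻¹).PosDef := hpd.inv
    obtain ⟨B, hB⟩ : ∃ B : Matrix (Fin n) (Fin n) ℂ, (S x)⁻¹ = Bᴴ * B := by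
      open scoped MatrixOrder in exact CStarAlgebra.nonneg_iff_eq_star_mul_self.mp hPinv.posSemidef.nonneg
    set C₁ : Matrix (Fin n) (Fin m₁) ℂ := B * Λ₁ x with hC₁def
    set C₂ : Matrix (Fin n) (Fin m₂) ℂ := B * Λ₂ x with hC₂def
    have hv' : v x = (2:ℂ) • (C₁ᴴ * C₂) := by
      rw [hv x, hcolH x, hcol2 x, hB, hC₁def, hC₂def]
      congr 1
      rw [conjTranspose_mul, hΛ₁H x]
      simp only [Matrix.mul_assoc]
      rfl
    have hC₁sq : C₁ᴴ * C₁ = (Λ₁ x)ᴴ * ((S x)⁻¹ * Λ₁ x) := by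
      rw [hC₁def, conjTranspose_mul, hB]
      simp only [Matrix.mul_assoc]
    have hC₂sq : C₂ᴴ * C₂ = (Λ₂ x)ᴴ * ((S x)⁻¹ * Λ₂ x) := by
      rw [hC₂def, conjTranspose_mul, hB]
      simp only [Matrix.mul_assoc]
    -- trace identity
    have htr : Matrix.trace (C₁ᴴ * C₁) + Matrix.trace (C₂ᴴ * C₂)
        = ((2 * (Matrix.trace α).im : ℝ) : ℂ) := by
      rw [hC₁sq, hC₂sq, Matrix.trace_mul_comm ((Λ₁ x)ᴴ) ((S x)⁻¹ * Λ₁ x),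
        Matrix.trace_mul_comm ((Λ₂ x)ᴴ) ((S x)⁻¹ * Λ₂ x)]
      have e1 : (S x)⁻¹ * Λ₁ x * (Λ₁ x)ᴴ = (S x)⁻¹ * P₁ x := by
        rw [Matrix.mul_assoc, hP₁Λ x]
      have e2 : (S x)⁻¹ * Λ₂ x * (Λ₂ x)ᴴ = (S x)⁻¹ * P₂ x := by
        rw [Matrix.mul_assoc, hP₂Λ x]
      rw [e1, e2, ← Matrix.trace_add, ← Matrix.mul_add]
      have hsum : P₁ x + P₂ x = (-Complex.I) • (α * S x - S x * αᴴ) := by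
        rw [idS x, smul_smul]
        simp [Complex.I_mul_I]
      rw [hsum, Matrix.mul_smul, Matrix.trace_smul, Matrix.mul_sub, Matrix.trace_sub]
      have t1 : Matrix.trace ((S x)⁻¹ * (α * S x)) = Matrix.trace α := by
        rw [Matrix.trace_mul_comm ((S x)⁻¹) (α * S x), Matrix.mul_assoc,
          Matrix.trace_mul_comm α (S x * (S x)⁻¹), Matrix.mul_nonsing_inv _ hdet,
          Matrix.one_mul]
      have t2 : Matrix.trace ((S x)⁻¹ * (S x * αᴴ)) = (starRingEnd ℂ) (Matrix.trace α) := by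
        rw [← Matrix.mul_assoc, Matrix.nonsing_inv_mul _ hdet, Matrix.one_mul,
          Matrix.trace_conjTranspose]
        rfl
      rw [t1, t2, smul_eq_mul]
      have : Matrix.trace α - (starRingEnd ℂ) (Matrix.trace α)
          = ((2 * (Matrix.trace α).im : ℝ) : ℂ) * Complex.I := Complex.sub_conj _
      rw [this]
      push_cast
      ring_nf
      simp [Complex.I_sq]
    -- diagonal entries
    have hd₁ : ∀ k, (C₁ᴴ * C₁) k k = ((∑ s, ‖C₁ s k‖ ^ 2 : ℝ) : ℂ) := by
      intro k
      rw [Matrix.mul_apply]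
      push_cast
      refine Finset.sum_congr rfl fun s _ => ?_
      rw [conjTranspose_apply]
      exact RCLike.conj_mul (C₁ s k)
    have hd₂ : ∀ l, (C₂ᴴ * C₂) l l = ((∑ s, ‖C₂ s l‖ ^ 2 : ℝ) : ℂ) := by
      intro l
      rw [Matrix.mul_apply]
      push_cast
      refine Finset.sum_congr rfl fun s _ => ?_
      rw [conjTranspose_apply]
      exact RCLike.conj_mul (C₂ s l)
    have htrR : ((∑ k, ∑ s, ‖C₁ s k‖ ^ 2) + (∑ l, ∑ s, ‖C₂ s l‖ ^ 2) : ℝ)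
        = 2 * (Matrix.trace α).im := by
      have l1 : Matrix.trace (C₁ᴴ * C₁) = ((∑ k, ∑ s, ‖C₁ s k‖ ^ 2 : ℝ) : ℂ) := by
        rw [Matrix.trace]
        push_cast
        exact Finset.sum_congr rfl fun k _ => by rw [Matrix.diag_apply, hd₁ k]; push_cast; rfl
      have l2 : Matrix.trace (C₂ᴴ * C₂) = ((∑ l, ∑ s, ‖C₂ s l‖ ^ 2 : ℝ) : ℂ) := by
        rw [Matrix.trace]
        push_cast
        exact Finset.sum_congr rfl fun l _ => by rw [Matrix.diag_apply, hd₂ l]; push_cast; rfl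
      have := htr
      rw [l1, l2] at this
      exact_mod_cast this
    have hc0nonneg : 0 ≤ 2 * (Matrix.trace α).im := by
      rw [← htrR]; positivity
    have hdle₁ : ∀ k, ∑ s, ‖C₁ s k‖ ^ 2 ≤ 2 * (Matrix.trace α).im := by
      intro k
      rw [← htrR]
      have h1 : ∑ s, ‖C₁ s k‖ ^ 2 ≤ ∑ k', ∑ s, ‖C₁ s k'‖ ^ 2 :=
        Finset.single_le_sum (f := fun k' => ∑ s, ‖C₁ s k'‖ ^ 2)
          (fun k' _ => by positivity) (Finset.mem_univ k)
      have h2 : (0:ℝ) ≤ ∑ l, ∑ s, ‖C₂ s l‖ ^ 2 := by positivity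
      linarith
    have hdle₂ : ∀ l, ∑ s, ‖C₂ s l‖ ^ 2 ≤ 2 * (Matrix.trace α).im := by
      intro l
      rw [← htrR]
      have h1 : ∑ s, ‖C₂ s l‖ ^ 2 ≤ ∑ l', ∑ s, ‖C₂ s l'‖ ^ 2 :=
        Finset.single_le_sum (f := fun l' => ∑ s, ‖C₂ s l'‖ ^ 2)
          (fun l' _ => by positivity) (Finset.mem_univ l)
      have h2 : (0:ℝ) ≤ ∑ k, ∑ s, ‖C₁ s k‖ ^ 2 := by positivity
      linarith
    -- entrywise bound
    have hentry : ∀ k l, ‖v x k l‖ ≤ 2 * (2 * (Matrix.trace α).im) := by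
      intro k l
      rw [hv']
      have happ : ((2:ℂ) • (C₁ᴴ * C₂)) k l = 2 * (C₁ᴴ * C₂) k l := by
        simp [Matrix.smul_apply, smul_eq_mul]
      rw [happ, norm_mul]
      have h2 : ‖(2:ℂ)‖ = 2 := by norm_num
      rw [h2]
      have hCS : ‖(C₁ᴴ * C₂) k l‖
          ≤ Real.sqrt (∑ s, ‖C₁ s k‖ ^ 2) * Real.sqrt (∑ s, ‖C₂ s l‖ ^ 2) := by
        set a : EuclideanSpace ℂ (Fin n) := (WithLp.equiv 2 _).symm (fun s => C₁ s k) with ha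
        set b : EuclideanSpace ℂ (Fin n) := (WithLp.equiv 2 _).symm (fun s => C₂ s l) with hb
        have hab : (C₁ᴴ * C₂) k l = inner ℂ a b := by
          rw [Matrix.mul_apply, PiLp.inner_apply]
          refine Finset.sum_congr rfl fun s _ => ?_
          rw [conjTranspose_apply, RCLike.inner_apply]
          exact mul_comm _ _
        rw [hab]
        refine (norm_inner_le_norm a b).trans (le_of_eq ?_)
        rw [EuclideanSpace.norm_eq, EuclideanSpace.norm_eq]
        rfl
      have hs1 : Real.sqrt (∑ s, ‖C₁ s k‖ ^ 2) ≤ Real.sqrt (2 * (Matrix.trace α).im) :=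
        Real.sqrt_le_sqrt (hdle₁ k)
      have hs2 : Real.sqrt (∑ s, ‖C₂ s l‖ ^ 2) ≤ Real.sqrt (2 * (Matrix.trace α).im) :=
        Real.sqrt_le_sqrt (hdle₂ l)
      have hmul : Real.sqrt (∑ s, ‖C₁ s k‖ ^ 2) * Real.sqrt (∑ s, ‖C₂ s l‖ ^ 2)
          ≤ 2 * (Matrix.trace α).im := by
        calc Real.sqrt (∑ s, ‖C₁ s k‖ ^ 2) * Real.sqrt (∑ s, ‖C₂ s l‖ ^ 2)
            ≤ Real.sqrt (2 * (Matrix.trace α).im) * Real.sqrt (2 * (Matrix.trace α).im) :=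
              mul_le_mul hs1 hs2 (Real.sqrt_nonneg _) (Real.sqrt_nonneg _)
        _ = 2 * (Matrix.trace α).im := Real.mul_self_sqrt hc0nonneg
      have := hCS.trans hmul
      linarith
    refine ⟨hc0nonneg, ?_⟩
    calc ‖v x‖ ≤ ∑ k, ∑ l, ‖v x k l‖ := l2_opNorm_le_sum_entries _
    _ ≤ ∑ _k : Fin m₁, ∑ _l : Fin m₂, 2 * (2 * (Matrix.trace α).im) :=
        Finset.sum_le_sum fun k _ => Finset.sum_le_sum fun l _ => hentry k l
    _ = (m₁ : ℝ) * m₂ * (2 * (2 * (Matrix.trace α).im)) := by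
        simp [Finset.sum_const, Finset.card_univ]
        ring
  obtain ⟨hc0n, _⟩ := main 0 le_rfl
  refine ⟨(m₁ : ℝ) * m₂ * (2 * (2 * (Matrix.trace α).im)) + 1, ?_, ?_⟩
  · have h0 : (0:ℝ) ≤ (m₁ : ℝ) * m₂ * (2 * (2 * (Matrix.trace α).im)) := by
      apply mul_nonneg
      · exact mul_nonneg (Nat.cast_nonneg m₁) (Nat.cast_nonneg m₂)
      · linarith
    linarith
  · intro x hx
    have := (main x hx).2
    linarith
end

section
/- Let {α, S₀, ϑ₁, ϑ₂} be an admissible quadruple, let Λ(x) = [e^{-ixα}ϑ₁, e^{ixα}ϑ₂] and S(x) = S₀ + ∫₀ˣ Λ(t) j Λ(t)* dt, and let A be the 2n×2n block matrix A = [[α*, 0], [−ϑ₁ϑ₁*, α]]. Then for every x ≥ 0, e^{-ixα} S(x) e^{-ixα*} = [S₀, −iI_n] · e^{-2ixA} · [I_n; 0], where [S₀, −iI_n] is the n×2n matrix with blocks S₀ and −iI_n and [I_n; 0] is the 2n×n matrix with top block I_n and bottom block 0. Consequently the pseudo-exponential potential v(x) = 2ϑ₁*e^{ixα*}S(x)⁻¹e^{ixα}ϑ₂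 also admits the representation v(x) = 2ϑ₁*([S₀, −iI_n] e^{-2ixA} [I_n; 0])⁻¹ϑ₂. -/
open Matrix
open scoped ComplexOrder

section Helpers

attribute [local instance] Matrix.linftyOpNormedAddCommGroup Matrix.linftyOpNormedSpace
  Matrix.linftyOpNormedRing Matrix.linftyOpNormedAlgebra

open NormedSpace

variable {N p q : Type*} [Fintype N] [DecidableEq N] [Fintype p] [Fintype q]

/-- `expc B c x = exp((c x) • B)`. -/
noncomputable def expc (B : Matrix N N ℂ) (c : ℂ) (x : ℝ) :
    Matrix N N ℂ := exp ((c * (x : ℂ)) • B)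

lemma expc_zero (B : Matrix N N ℂ) (c : ℂ) : expc B c 0 = 1 := by
  simp [expc, exp_zero]

lemma commute_expc (B : Matrix N N ℂ) (c : ℂ) (x : ℝ) :
    Commute B (expc B c x) :=
  ((Commute.refl B).smul_right _).exp_right

lemma hasDerivAt_expc (B : Matrix N N ℂ) (c : ℂ) (x : ℝ) :
    HasDerivAt (fun x : ℝ => expc B c x) (c • (B * expc B c x)) x := by
  have h1 : HasDerivAt (fun x : ℝ => c * (x : ℂ)) c x := by
    simpa using (Complex.ofRealCLM.hasDerivAt (x := x)).const_mul c
  have h2 : HasDerivAt (fun z : ℂ => exp (z • B)) (B * exp ((c * (x : ℂ)) • B))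
      (c * (x : ℂ)) := hasDerivAt_exp_smul_const' B _
  have h3 := HasDerivAt.scomp x h2 h1
  simp [expc, Function.comp_def] at h3
  exact h3

lemma continuous_expc (B : Matrix N N ℂ) (c : ℂ) :
    Continuous (expc B c) := by
  exact exp_continuous.comp ((continuous_const.mul Complex.continuous_ofReal).smul
    continuous_const)

lemma expc_mul_expc (B : Matrix N N ℂ) (c c' : ℂ) (x : ℝ) :
    expc B c x * expc B c' x = expc B (c + c') x := by
  rw [expc, expc, expc, ← Matrix.exp_add_of_commute _ _ (((Commute.refl B).smul_left _).smul_right _),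
    ← add_smul, ← add_mul]

lemma expc_c_zero (B : Matrix N N ℂ) (x : ℝ) : expc B 0 x = 1 := by
  simp [expc, exp_zero]

lemma expc_neg_mul (B : Matrix N N ℂ) (c : ℂ) (x : ℝ) :
    expc B (-c) x * expc B c x = 1 := by
  rw [expc_mul_expc, neg_add_cancel, expc_c_zero]

lemma expc_inv (B : Matrix N N ℂ) (c : ℂ) (x : ℝ) :
    (expc B c x)⁻¹ = expc B (-c) x := by
  rw [expc, expc, ← Matrix.exp_neg, ← neg_smul, neg_mul]

lemma expc_conjTranspose (B : Matrix N N ℂ) (c : ℂ) (x : ℝ) :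
    (expc B c x)ᴴ = expc Bᴴ (starRingEnd ℂ c) x := by
  rw [expc, expc, ← Matrix.exp_conjTranspose, conjTranspose_smul]
  congr 1
  simp [Complex.conj_ofReal, mul_comm]

end Helpers
section Helpers2

attribute [local instance] Matrix.linftyOpNormedAddCommGroup Matrix.linftyOpNormedSpace
  Matrix.linftyOpNormedRing Matrix.linftyOpNormedAlgebra

open NormedSpace

variable {N p q : Type*} [Fintype N] [DecidableEq N] [Fintype p] [Fintype q]

/-- `X ↦ P * X * Q` as a continuous linear map. -/
noncomputable def sandwichCLM (P : Matrix p N ℂ) (Q : Matrix N q ℂ) :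
    Matrix N N ℂ →L[ℂ] Matrix p q ℂ :=
  LinearMap.toContinuousLinearMap
    { toFun := fun X => P * X * Q
      map_add' := fun X Y => by simp only [Matrix.mul_add, Matrix.add_mul]
      map_smul' := fun c X => by simp [Matrix.mul_smul, Matrix.smul_mul] }

lemma HasDerivAt.sandwich {f : ℝ → Matrix N N ℂ}
    {f' : Matrix N N ℂ} {x : ℝ}
    (P : Matrix p N ℂ) (Q : Matrix N q ℂ)
    (hf : HasDerivAt f f' x) :
    HasDerivAt (fun y => P * f y * Q) (P * f' * Q) x := by
  have h2 := ((sandwichCLM P Q).restrictScalars ℝ).hasFDerivAt (x := f x)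
  have := h2.comp_hasDerivAt x hf
  exact this

lemma eq_of_hasDerivAt_eq {F : Type*} [NormedAddCommGroup F] [NormedSpace ℝ F]
    {f g d : ℝ → F}
    (hf : ∀ y, HasDerivAt f (d y) y) (hg : ∀ y, HasDerivAt g (d y) y)
    (h0 : f 0 = g 0) (x : ℝ) : f x = g x := by
  have key : ∀ y : ℝ, f y - g y = f 0 - g 0 := fun y =>
    is_const_of_deriv_eq_zero (f := fun t => f t - g t)
      (fun t => ((hf t).sub (hg t)).differentiableAt)
      (fun t => by
        have h := ((hf t).sub (hg t)).deriv
        exact h.trans (sub_self _)) y 0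
  have h := key x
  rw [h0, sub_self] at h
  exact sub_eq_zero.mp h

lemma integral_entry {g : ℝ → Matrix p q ℂ} (hg : Continuous g)
    (x : ℝ) (i : p) (j : q) :
    (∫ t in (0:ℝ)..x, g t) i j = ∫ t in (0:ℝ)..x, g t i j := by
  have h := (LinearMap.toContinuousLinearMap
      (Matrix.entryLinearMap ℂ ℂ i j)).intervalIntegral_comp_comm
      (μ := MeasureTheory.volume) (hg.intervalIntegrable (0:ℝ) x)
  exact h.symm

end Helpers2

section MainAux

attribute [local instance] Matrix.linftyOpNormedAddCommGroup Matrix.linftyOpNormedSpace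
  Matrix.linftyOpNormedRing Matrix.linftyOpNormedAlgebra

open NormedSpace

variable {n : ℕ}

/-- `Tmat B K c y = expc B c y * K * expc Bᴴ (-c) y`. -/
noncomputable def Tmat (B K : Matrix (Fin n) (Fin n) ℂ) (c : ℂ) (y : ℝ) :
    Matrix (Fin n) (Fin n) ℂ := expc B c y * K * expc Bᴴ (-c) y

lemma continuous_Tmat (B K : Matrix (Fin n) (Fin n) ℂ) (c : ℂ) :
    Continuous (Tmat B K c) :=
  ((continuous_expc B c).mul continuous_const).mul (continuous_expc Bᴴ (-c))

lemma Tmat_zero (B K : Matrix (Fin n) (Fin n) ℂ) (c : ℂ) : Tmat B K c 0 = K := by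
  simp [Tmat, expc_zero]

lemma hasDerivAt_Tmat (B K : Matrix (Fin n) (Fin n) ℂ) (c : ℂ) (y : ℝ) :
    HasDerivAt (fun y => Tmat B K c y)
      (c • (B * Tmat B K c y) + (-c) • (Tmat B K c y * Bᴴ)) y := by
  have h := ((hasDerivAt_expc B c y).mul_const K).mul (hasDerivAt_expc Bᴴ (-c) y)
  refine h.congr_deriv ?_
  symm
  rw [Tmat, (commute_expc Bᴴ (-c) y).eq]
  simp only [Matrix.smul_mul, Matrix.mul_smul, Matrix.mul_assoc]

lemma main_aux (α S₀ K₁ K₂ : Matrix (Fin n) (Fin n) ℂ)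
    (hc : α * S₀ - S₀ * αᴴ = Complex.I • (K₁ + K₂))
    (S : ℝ → Matrix (Fin n) (Fin n) ℂ)
    (hS : S = fun x => S₀ + ∫ t in (0:ℝ)..x,
      (Tmat α K₁ (-Complex.I) t - Tmat α K₂ Complex.I t))
    (x : ℝ) :
    expc α (-Complex.I) x * S x * expc αᴴ (-Complex.I) x =
      fromCols S₀ (-(Complex.I • (1 : Matrix (Fin n) (Fin n) ℂ))) *
        expc (fromBlocks αᴴ 0 (-K₁) α) (-(2 * Complex.I)) x * fromRows (1 : Matrix (Fin n) (Fin n) ℂ) (0 : Matrix (Fin n) (Fin n) ℂ) := by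
  have hI2 : Complex.I * Complex.I = -1 := Complex.I_mul_I
  set g : ℝ → Matrix (Fin n) (Fin n) ℂ :=
    fun t => Tmat α K₁ (-Complex.I) t - Tmat α K₂ Complex.I t with hg
  set A' : Matrix (Fin n ⊕ Fin n) (Fin n ⊕ Fin n) ℂ := fromBlocks αᴴ 0 (-K₁) α with hA'
  have hgc : Continuous g := (continuous_Tmat α K₁ (-Complex.I)).sub (continuous_Tmat α K₂ Complex.I)
  have hSd : ∀ y : ℝ, HasDerivAt S (g y) y := by
    intro y
    rw [hS]
    exact ((hgc.integral_hasStrictDerivAt 0 y).hasDerivAt).const_add S₀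
  have hS0 : S 0 = S₀ := by rw [hS]; simp
  -- commutation identity
  have hαS : ∀ y : ℝ, α * S y - S y * αᴴ = Complex.I • (Tmat α K₁ (-Complex.I) y + Tmat α K₂ Complex.I y) := by
    apply eq_of_hasDerivAt_eq (d := fun y => α * g y - g y * αᴴ)
    · intro y
      exact ((hSd y).const_mul α).sub ((hSd y).mul_const αᴴ)
    · intro y
      have h := ((hasDerivAt_Tmat α K₁ (-Complex.I) y).add (hasDerivAt_Tmat α K₂ Complex.I y)).const_smul Complex.I
      refine h.congr_deriv ?_
      symm
      have e₁ : ∀ X : Matrix (Fin n) (Fin n) ℂ, Complex.I • (Complex.I • X) = -X := by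
        intro X; rw [smul_smul, Complex.I_mul_I, neg_smul, one_smul]
      have e₂ : ∀ X : Matrix (Fin n) (Fin n) ℂ, Complex.I • ((-Complex.I) • X) = X := by
        intro X; rw [smul_smul, mul_neg, Complex.I_mul_I, neg_neg, one_smul]
      simp only [hg, neg_neg, smul_add, e₁, e₂, mul_sub, sub_mul]
      abel
    · simp [hS0, Tmat_zero, hc]
  -- top-left corner of the big exponential
  have hQ : ∀ y : ℝ, fromCols (1 : Matrix (Fin n) (Fin n) ℂ) (0 : Matrix (Fin n) (Fin n) ℂ) * expc A' (-(2*Complex.I)) y *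
      fromRows (1 : Matrix (Fin n) (Fin n) ℂ) (0 : Matrix (Fin n) (Fin n) ℂ) = expc αᴴ (-(2*Complex.I)) y := by
    have hRA : fromCols (1 : Matrix (Fin n) (Fin n) ℂ) (0 : Matrix (Fin n) (Fin n) ℂ) * A' =
        αᴴ * fromCols (1 : Matrix (Fin n) (Fin n) ℂ) (0 : Matrix (Fin n) (Fin n) ℂ) := by
      rw [hA', fromCols_mul_fromBlocks, mul_fromCols]
      simp
    have hH : ∀ y : ℝ, expc αᴴ (2*Complex.I) y *
        (fromCols (1 : Matrix (Fin n) (Fin n) ℂ) (0 : Matrix (Fin n) (Fin n) ℂ) * expc A' (-(2*Complex.I)) y * fromRows (1 : Matrix (Fin n) (Fin n) ℂ) (0 : Matrix (Fin n) (Fin n) ℂ))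
        = 1 := by
      apply eq_of_hasDerivAt_eq (d := fun _ => 0)
      · intro y
        have h := (hasDerivAt_expc αᴴ (2*Complex.I) y).mul
          ((hasDerivAt_expc A' (-(2*Complex.I)) y).sandwich (fromCols (1 : Matrix (Fin n) (Fin n) ℂ) (0 : Matrix (Fin n) (Fin n) ℂ)) (fromRows (1 : Matrix (Fin n) (Fin n) ℂ) (0 : Matrix (Fin n) (Fin n) ℂ)))
        refine h.congr_deriv ?_
        symm
        have e1 : fromCols (1 : Matrix (Fin n) (Fin n) ℂ) (0 : Matrix (Fin n) (Fin n) ℂ) * ((-(2*Complex.I)) • (A' * expc A' (-(2*Complex.I)) y)) * fromRows (1 : Matrix (Fin n) (Fin n) ℂ) (0 : Matrix (Fin n) (Fin n) ℂ)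
            = (-(2*Complex.I)) • (αᴴ * (fromCols (1 : Matrix (Fin n) (Fin n) ℂ) (0 : Matrix (Fin n) (Fin n) ℂ) * expc A' (-(2*Complex.I)) y * fromRows (1 : Matrix (Fin n) (Fin n) ℂ) (0 : Matrix (Fin n) (Fin n) ℂ))) := by
          rw [Matrix.mul_smul, Matrix.smul_mul, ← Matrix.mul_assoc, hRA]
          simp only [Matrix.mul_assoc]
        have e2 : expc αᴴ (2*Complex.I) y * (αᴴ * (fromCols (1 : Matrix (Fin n) (Fin n) ℂ) (0 : Matrix (Fin n) (Fin n) ℂ) * expc A' (-(2*Complex.I)) y * fromRows (1 : Matrix (Fin n) (Fin n) ℂ) (0 : Matrix (Fin n) (Fin n) ℂ))) =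
            αᴴ * expc αᴴ (2*Complex.I) y * (fromCols (1 : Matrix (Fin n) (Fin n) ℂ) (0 : Matrix (Fin n) (Fin n) ℂ) * expc A' (-(2*Complex.I)) y * fromRows (1 : Matrix (Fin n) (Fin n) ℂ) (0 : Matrix (Fin n) (Fin n) ℂ)) := by
          rw [← Matrix.mul_assoc, ← (commute_expc αᴴ (2*Complex.I) y).eq]
        rw [e1, Matrix.mul_smul, e2, Matrix.smul_mul]
        module
      · intro y; exact hasDerivAt_const y 1
      · simp [expc_zero, fromCols_mul_fromRows]
    intro y
    have h := congrArg (fun Z => expc αᴴ (-(2*Complex.I)) y * Z) (hH y)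
    simp only [← Matrix.mul_assoc, expc_neg_mul, one_mul, mul_one] at h
    simpa using h
  -- the two matrix functions with equal derivatives
  set C : Matrix (Fin n) (Fin n ⊕ Fin n) ℂ := fromCols S₀ (-(Complex.I • 1)) with hC
  have hCA : C * A' = α * C +
      (-(Complex.I • K₂)) * fromCols (1 : Matrix (Fin n) (Fin n) ℂ) (0 : Matrix (Fin n) (Fin n) ℂ) := by
    rw [hC, hA', fromCols_mul_fromBlocks, mul_fromCols, mul_fromCols]
    have hblk : S₀ * αᴴ + -(Complex.I • (1 : Matrix (Fin n) (Fin n) ℂ)) * -K₁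
        = α * S₀ + -(Complex.I • K₂) * 1 := by
      have h := hc
      rw [sub_eq_iff_eq_add] at h
      rw [h, smul_add]
      simp only [Matrix.neg_mul, Matrix.mul_neg, Matrix.smul_mul, one_mul, mul_one, neg_neg]
      abel
    rw [hblk]
    ext i j
    rcases j with j | j <;>
      simp [Matrix.mul_neg, Matrix.mul_smul, Matrix.mul_one]
  have key : ∀ y : ℝ, expc α Complex.I y * S y * expc αᴴ (-Complex.I) y
      = expc α (2*Complex.I) y *
        (C * expc A' (-(2*Complex.I)) y * fromRows (1 : Matrix (Fin n) (Fin n) ℂ) (0 : Matrix (Fin n) (Fin n) ℂ)) := by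
    apply eq_of_hasDerivAt_eq
      (d := fun y => (-2:ℂ) • (expc α (2*Complex.I) y * K₂ * expc αᴴ (-(2*Complex.I)) y))
    · intro y
      have h := ((hasDerivAt_expc α Complex.I y).mul (hSd y)).mul
        (hasDerivAt_expc αᴴ (-Complex.I) y)
      refine h.congr_deriv ?_
      symm
      have haa : expc α Complex.I y * expc α Complex.I y = expc α (2*Complex.I) y := by
        rw [expc_mul_expc]; congr 1; ring
      have hbb : expc αᴴ (-Complex.I) y * expc αᴴ (-Complex.I) y
          = expc αᴴ (-(2*Complex.I)) y := by
        rw [expc_mul_expc]; congr 1; ring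
      have e₁ : ∀ X : Matrix (Fin n) (Fin n) ℂ, Complex.I • (Complex.I • X) = -X := by
        intro X; rw [smul_smul, Complex.I_mul_I, neg_smul, one_smul]
      have hkey : Complex.I • (α * S y) + g y + (-Complex.I) • (S y * αᴴ)
          = (-2:ℂ) • (Tmat α K₂ Complex.I y) := by
        have h' := hαS y
        calc Complex.I • (α * S y) + g y + (-Complex.I) • (S y * αᴴ)
            = Complex.I • (α * S y - S y * αᴴ) + g y := by module
          _ = Complex.I • (Complex.I • (Tmat α K₁ (-Complex.I) y
                + Tmat α K₂ Complex.I y)) + g y := by rw [h']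
          _ = (-2:ℂ) • (Tmat α K₂ Complex.I y) := by
              simp only [hg, smul_add, e₁]; module
      have swap1 : α * (expc α Complex.I y * (S y * expc αᴴ (-Complex.I) y))
          = expc α Complex.I y * (α * (S y * expc αᴴ (-Complex.I) y)) := by
        rw [← Matrix.mul_assoc, (commute_expc α Complex.I y).eq, Matrix.mul_assoc]
      calc (-2:ℂ) • (expc α (2*Complex.I) y * K₂ * expc αᴴ (-(2*Complex.I)) y)
          = expc α Complex.I y * ((-2:ℂ) • (Tmat α K₂ Complex.I y))
              * expc αᴴ (-Complex.I) y := by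
            rw [← haa, ← hbb]
            simp only [Tmat, Matrix.smul_mul, Matrix.mul_smul, Matrix.mul_assoc]
        _ = expc α Complex.I y * (Complex.I • (α * S y) + g y
              + (-Complex.I) • (S y * αᴴ)) * expc αᴴ (-Complex.I) y := by rw [hkey]
        _ = (Complex.I • (α * expc α Complex.I y) * S y + expc α Complex.I y * g y)
              * expc αᴴ (-Complex.I) y
            + expc α Complex.I y * S y
              * ((-Complex.I) • (αᴴ * expc αᴴ (-Complex.I) y)) := by
            simp only [Matrix.add_mul, Matrix.mul_add, Matrix.smul_mul, Matrix.mul_smul,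
              Matrix.mul_assoc, swap1]
    · intro y
      have h := (hasDerivAt_expc α (2*Complex.I) y).mul
        ((hasDerivAt_expc A' (-(2*Complex.I)) y).sandwich C
          (fromRows (1 : Matrix (Fin n) (Fin n) ℂ) (0 : Matrix (Fin n) (Fin n) ℂ)))
      refine h.congr_deriv ?_
      symm
      have hCAe : C * ((-(2*Complex.I)) • (A' * expc A' (-(2*Complex.I)) y))
            * fromRows (1 : Matrix (Fin n) (Fin n) ℂ) (0 : Matrix (Fin n) (Fin n) ℂ)
          = (-(2*Complex.I)) • (α * (C * expc A' (-(2*Complex.I)) y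
              * fromRows (1 : Matrix (Fin n) (Fin n) ℂ) (0 : Matrix (Fin n) (Fin n) ℂ))
            + (-(Complex.I • K₂)) * expc αᴴ (-(2*Complex.I)) y) := by
        rw [Matrix.mul_smul, Matrix.smul_mul, ← Matrix.mul_assoc, hCA, Matrix.add_mul,
          Matrix.add_mul]
        congr 2
        · simp only [Matrix.mul_assoc]
        · rw [Matrix.mul_assoc, Matrix.mul_assoc, ← Matrix.mul_assoc
            (fromCols (1 : Matrix (Fin n) (Fin n) ℂ) (0 : Matrix (Fin n) (Fin n) ℂ)), hQ y]
      have swap2 : α * (expc α (2*Complex.I) y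
            * (C * (expc A' (-(2*Complex.I)) y * fromRows (1 : Matrix (Fin n) (Fin n) ℂ) (0 : Matrix (Fin n) (Fin n) ℂ))))
          = expc α (2*Complex.I) y * (α * (C * (expc A' (-(2*Complex.I)) y
            * fromRows (1 : Matrix (Fin n) (Fin n) ℂ) (0 : Matrix (Fin n) (Fin n) ℂ)))) := by
        rw [← Matrix.mul_assoc, (commute_expc α (2*Complex.I) y).eq, Matrix.mul_assoc]
      have eI : ∀ X : Matrix (Fin n) (Fin n) ℂ,
          (-(2*Complex.I)) • (expc α (2*Complex.I) y * (-(Complex.I • X)))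
          = (-2:ℂ) • (expc α (2*Complex.I) y * X) := by
        intro X
        rw [Matrix.mul_neg, Matrix.mul_smul, smul_neg, neg_smul, neg_neg, smul_smul,
          mul_assoc, Complex.I_mul_I]
        norm_num
      rw [hCAe, Matrix.mul_smul, Matrix.mul_add, smul_add]
      simp only [Matrix.neg_mul, Matrix.smul_mul, Matrix.mul_assoc, swap2, eI]
      module
    · simp [hS0, expc_zero, hC, fromCols_mul_fromRows]
  have h2 := congrArg (fun Z => expc α (-(2*Complex.I)) x * Z) (key x)
  simp only [← Matrix.mul_assoc] at h2
  rw [expc_mul_expc, expc_mul_expc] at h2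
  have c1 : -(2*Complex.I) + Complex.I = -Complex.I := by ring
  have c2 : -(2*Complex.I) + 2*Complex.I = 0 := by ring
  rw [c1, c2, expc_c_zero, Matrix.one_mul] at h2
  exact h2


end MainAux


section FinalTheorem

attribute [local instance] Matrix.linftyOpNormedAddCommGroup Matrix.linftyOpNormedSpace
  Matrix.linftyOpNormedRing Matrix.linftyOpNormedAlgebra

/-- `e^{-ixα} S(x) e^{-ixα*} = [S₀, −iI_n] e^{-2ixA} [I_n; 0]` where
`A = [[α*, 0], [−ϑ₁ϑ₁*, α]]`; consequently the pseudo-exponential potential admits the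
representation `v(x) = 2ϑ₁*([S₀, −iI_n] e^{-2ixA} [I_n; 0])⁻¹ϑ₂`. -/
theorem pseudoExponential_alternative_representation
    {n m₁ m₂ : ℕ} (α S₀ : Matrix (Fin n) (Fin n) ℂ)
    (θ₁ : Matrix (Fin n) (Fin m₁) ℂ) (θ₂ : Matrix (Fin n) (Fin m₂) ℂ)
    (hadm : Admissible α S₀ θ₁ θ₂)
    (Λ : ℝ → Matrix (Fin n) (Fin m₁ ⊕ Fin m₂) ℂ)
    (hΛ : ∀ x : ℝ, Λ x = Matrix.fromCols
      (NormedSpace.exp ((-(Complex.I * (x : ℂ))) • α) * θ₁)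
      (NormedSpace.exp ((Complex.I * (x : ℂ)) • α) * θ₂))
    (S : ℝ → Matrix (Fin n) (Fin n) ℂ)
    (hS : ∀ (x : ℝ) (i j : Fin n),
      S x i j = S₀ i j + ∫ t in (0:ℝ)..x, (Λ t * sigJ m₁ m₂ * (Λ t)ᴴ) i j)
    (v : ℝ → Matrix (Fin m₁) (Fin m₂) ℂ)
    (hv : ∀ x : ℝ, v x = (2:ℂ) • (θ₁ᴴ * NormedSpace.exp ((Complex.I * (x : ℂ)) • αᴴ) *
      (S x)⁻¹ * NormedSpace.exp ((Complex.I * (x : ℂ)) • α) * θ₂))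
    (A : Matrix (Fin n ⊕ Fin n) (Fin n ⊕ Fin n) ℂ)
    (hA : A = Matrix.fromBlocks αᴴ 0 (-(θ₁ * θ₁ᴴ)) α) :
    ∀ x : ℝ, 0 ≤ x →
      (NormedSpace.exp ((-(Complex.I * (x : ℂ))) • α) * S x *
          NormedSpace.exp ((-(Complex.I * (x : ℂ))) • αᴴ) =
        Matrix.fromCols S₀ (-(Complex.I • (1 : Matrix (Fin n) (Fin n) ℂ))) *
          NormedSpace.exp ((-(2 * Complex.I * (x : ℂ))) • A) *
          Matrix.fromRows (1 : Matrix (Fin n) (Fin n) ℂ) 0) ∧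
      v x = (2:ℂ) • (θ₁ᴴ *
        (Matrix.fromCols S₀ (-(Complex.I • (1 : Matrix (Fin n) (Fin n) ℂ))) *
          NormedSpace.exp ((-(2 * Complex.I * (x : ℂ))) • A) *
          Matrix.fromRows (1 : Matrix (Fin n) (Fin n) ℂ) 0 : Matrix (Fin n) (Fin n) ℂ)⁻¹ * θ₂) := by
  obtain ⟨-, hc⟩ := hadm
  subst hA
  -- conversions between `NormedSpace.exp` forms in the statement and `expc`
  have hE1 : ∀ B : Matrix (Fin n) (Fin n) ℂ, ∀ t : ℝ,
      NormedSpace.exp ((-(Complex.I * (t : ℂ))) • B) = expc B (-Complex.I) t := by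
    intro B t; rw [expc, neg_mul]
  have hEA : ∀ t : ℝ,
      NormedSpace.exp ((-(2 * Complex.I * (t : ℂ))) •
        (Matrix.fromBlocks αᴴ 0 (-(θ₁ * θ₁ᴴ)) α : Matrix (Fin n ⊕ Fin n) (Fin n ⊕ Fin n) ℂ))
      = expc (Matrix.fromBlocks αᴴ 0 (-(θ₁ * θ₁ᴴ)) α) (-(2 * Complex.I)) t := by
    intro t
    rw [expc]
    congr 1
    have : -(2 * Complex.I * (t : ℂ)) = -(2 * Complex.I) * (t : ℂ) := by ring
    rw [this]
  -- the integrand identity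
  have hint : ∀ t : ℝ, Λ t * sigJ m₁ m₂ * (Λ t)ᴴ
      = Tmat α (θ₁ * θ₁ᴴ) (-Complex.I) t - Tmat α (θ₂ * θ₂ᴴ) Complex.I t := by
    intro t
    rw [hΛ t, sigJ, conjTranspose_fromCols_eq_fromRows_conjTranspose,
      fromCols_mul_fromBlocks, fromCols_mul_fromRows]
    have h1 : (NormedSpace.exp ((-(Complex.I * (t : ℂ))) • α) * θ₁)ᴴ
        = θ₁ᴴ * expc αᴴ Complex.I t := by
      rw [Matrix.conjTranspose_mul, hE1 α t, expc_conjTranspose]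
      congr 2
      simp
    have h2 : (NormedSpace.exp ((Complex.I * (t : ℂ)) • α) * θ₂)ᴴ
        = θ₂ᴴ * expc αᴴ (-Complex.I) t := by
      rw [Matrix.conjTranspose_mul]
      have : NormedSpace.exp ((Complex.I * (t : ℂ)) • α) = expc α Complex.I t := rfl
      rw [this, expc_conjTranspose]
      congr 2
      simp
    rw [h1, h2, hE1 α t]
    have : NormedSpace.exp ((Complex.I * (t : ℂ)) • α) = expc α Complex.I t := rfl
    rw [this]
    simp only [Tmat, neg_neg, Matrix.mul_one, Matrix.mul_zero, Matrix.mul_neg, add_zero,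
      zero_add, Matrix.neg_mul, Matrix.mul_assoc]
    abel
  -- the matrix-valued form of `hS`
  have hgc : Continuous (fun t : ℝ =>
      Tmat α (θ₁ * θ₁ᴴ) (-Complex.I) t - Tmat α (θ₂ * θ₂ᴴ) Complex.I t) :=
    (continuous_Tmat α (θ₁ * θ₁ᴴ) (-Complex.I)).sub (continuous_Tmat α (θ₂ * θ₂ᴴ) Complex.I)
  have hS' : S = fun y => S₀ + ∫ t in (0:ℝ)..y,
      (Tmat α (θ₁ * θ₁ᴴ) (-Complex.I) t - Tmat α (θ₂ * θ₂ᴴ) Complex.I t) := by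
    funext y
    ext i j
    rw [hS y i j, Matrix.add_apply, integral_entry hgc y i j]
    simp only [hint]
  intro x _
  have hmain := main_aux α S₀ (θ₁ * θ₁ᴴ) (θ₂ * θ₂ᴴ) hc S hS' x
  constructor
  · rw [hE1 α x, hE1 αᴴ x, hEA x]
    exact hmain
  · rw [hv x]
    have hmain' : expc α (-Complex.I) x * S x * expc αᴴ (-Complex.I) x =
        Matrix.fromCols S₀ (-(Complex.I • (1 : Matrix (Fin n) (Fin n) ℂ))) *
          expc (Matrix.fromBlocks αᴴ 0 (-(θ₁ * θ₁ᴴ)) α) (-(2 * Complex.I)) x *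
          Matrix.fromRows (1 : Matrix (Fin n) (Fin n) ℂ) 0 := hmain
    have hinv : (Matrix.fromCols S₀ (-(Complex.I • (1 : Matrix (Fin n) (Fin n) ℂ))) *
          NormedSpace.exp ((-(2 * Complex.I * (x : ℂ))) •
            (Matrix.fromBlocks αᴴ 0 (-(θ₁ * θ₁ᴴ)) α)) *
          Matrix.fromRows (1 : Matrix (Fin n) (Fin n) ℂ) 0 : Matrix (Fin n) (Fin n) ℂ)⁻¹
        = expc αᴴ Complex.I x * ((S x)⁻¹ * expc α Complex.I x) := by
      rw [hEA x, ← hmain', Matrix.mul_inv_rev, Matrix.mul_inv_rev, expc_inv, expc_inv,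
        neg_neg]
    rw [hinv]
    have e1 : NormedSpace.exp ((Complex.I * (x : ℂ)) • αᴴ) = expc αᴴ Complex.I x := rfl
    have e2 : NormedSpace.exp ((Complex.I * (x : ℂ)) • α) = expc α Complex.I x := rfl
    rw [e1, e2]
    simp only [Matrix.mul_assoc]

end FinalTheorem
end

section
/- Let α be an invertible n×n complex matrix, let S₀ be a Hermitian n×n matrix, and let Λ₀ be an n×m matrix such that αS₀ − S₀α* = iΛ₀Λ₀*. Define recursively Λ_{k+1} = Λ_k + iα⁻¹Λ_k j and S_{k+1} = S_k + α⁻¹S_kα^{−*} + α⁻¹Λ_k j Λ_k* α^{−*} for k ∈ ℕ₀, where α^{−*} = (α⁻¹)*. Then for every k ∈ ℕ₀ one has αS_k − S_kα* = iΛ_kΛ_k*. -/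
open Matrix
open scoped ComplexOrder

/-- propagation of the identity `αS_k − S_kα* = iΛ_kΛ_k*` along the
recursions `Λ_{k+1} = Λ_k + iα⁻¹Λ_k j` and `S_{k+1} = S_k + α⁻¹S_kα^{−*} + α⁻¹Λ_k j Λ_k* α^{−*}`. -/
theorem discrete_identity_propagation
    {n m₁ m₂ : ℕ} (α : Matrix (Fin n) (Fin n) ℂ) (hα : IsUnit α)
    (S₀ : Matrix (Fin n) (Fin n) ℂ) (hS₀ : S₀.IsHermitian)
    (Λ₀ : Matrix (Fin n) (Fin m₁ ⊕ Fin m₂) ℂ)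
    (h0 : α * S₀ - S₀ * αᴴ = Complex.I • (Λ₀ * Λ₀ᴴ))
    (Λ : ℕ → Matrix (Fin n) (Fin m₁ ⊕ Fin m₂) ℂ)
    (hΛ0 : Λ 0 = Λ₀)
    (hΛ : ∀ k : ℕ, Λ (k + 1) = Λ k + Complex.I • (α⁻¹ * Λ k * sigJ m₁ m₂))
    (S : ℕ → Matrix (Fin n) (Fin n) ℂ)
    (hS0 : S 0 = S₀)
    (hS : ∀ k : ℕ, S (k + 1) =
      S k + α⁻¹ * S k * (α⁻¹)ᴴ + α⁻¹ * (Λ k * sigJ m₁ m₂ * (Λ k)ᴴ) * (α⁻¹)ᴴ) :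
    ∀ k : ℕ, α * S k - S k * αᴴ = Complex.I • (Λ k * (Λ k)ᴴ) := by
  have hdet := (Matrix.isUnit_iff_isUnit_det α).mp hα
  have h2 : α * α⁻¹ = 1 := Matrix.mul_nonsing_inv α hdet
  have h1 : α⁻¹ * α = 1 := Matrix.nonsing_inv_mul α hdet
  have h3 : (α⁻¹)ᴴ * αᴴ = 1 := by rw [← Matrix.conjTranspose_mul, h2, Matrix.conjTranspose_one]
  have h4 : αᴴ * (α⁻¹)ᴴ = 1 := by rw [← Matrix.conjTranspose_mul, h1, Matrix.conjTranspose_one]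
  have ha1 : ∀ X : Matrix (Fin n) (Fin n) ℂ, α * (α⁻¹ * X) = X := by
    intro X; rw [← Matrix.mul_assoc, h2, Matrix.one_mul]
  have ha1' : ∀ X : Matrix (Fin n) (Fin n) ℂ, α⁻¹ * (α * X) = X := by
    intro X; rw [← Matrix.mul_assoc, h1, Matrix.one_mul]
  have hjH : (sigJ m₁ m₂)ᴴ = sigJ m₁ m₂ := by
    simp [sigJ, Matrix.fromBlocks_conjTranspose]
  have hj2 : ∀ X : Matrix (Fin m₁ ⊕ Fin m₂) (Fin n) ℂ,
      sigJ m₁ m₂ * (sigJ m₁ m₂ * X) = X := by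
    intro X
    rw [← Matrix.mul_assoc]
    have : sigJ m₁ m₂ * sigJ m₁ m₂ = 1 := by
      simp [sigJ, Matrix.fromBlocks_multiply]
    rw [this, Matrix.one_mul]
  intro k
  induction k with
  | zero => rw [hS0, hΛ0]; exact h0
  | succ k ih =>
    have key : S k * (α⁻¹)ᴴ - α⁻¹ * S k
        = Complex.I • (α⁻¹ * (Λ k * ((Λ k)ᴴ * (α⁻¹)ᴴ))) := by
      have := congrArg (fun M => α⁻¹ * M * (α⁻¹)ᴴ) ih
      simp only [Matrix.mul_sub, Matrix.sub_mul, mul_smul_comm, smul_mul_assoc,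
        Matrix.mul_assoc, ha1', h4, Matrix.mul_one] at this
      exact this
    rw [hS k, hΛ k]
    simp only [Matrix.conjTranspose_add, Matrix.conjTranspose_smul, Matrix.conjTranspose_mul,
      hjH, Complex.star_def, Complex.conj_I,
      Matrix.mul_add, Matrix.add_mul, Matrix.mul_sub, Matrix.sub_mul,
      mul_smul_comm, smul_mul_assoc, smul_add, smul_sub, smul_smul,
      Matrix.mul_assoc, ha1, ha1', hj2, h3, h4,
      Matrix.mul_one, neg_mul, mul_neg, neg_smul, smul_neg, Complex.I_mul_I,
      one_smul, neg_neg]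
    rw [sub_eq_iff_eq_add] at ih key ⊢
    rw [ih, key]
    simp only [Matrix.smul_mul, Matrix.mul_smul, smul_smul, mul_neg, neg_mul, smul_neg,
      Complex.I_mul_I, neg_smul, neg_neg, one_smul, neg_one_smul, Matrix.mul_assoc, hj2]
    simp only [Matrix.mul_neg, Matrix.neg_mul, Matrix.mul_smul, Matrix.smul_mul, smul_neg,
      neg_neg, smul_smul, Complex.I_mul_I, neg_smul, one_smul, Matrix.mul_assoc, hj2]
    abel
end

section
/- Let Σ₀ = {α, S₀, ϑ₁, ϑ₂} be an admissible quadruple such that the pair (α, ϑ₁) is controllable (i.e., Σ₀ is strongly admissible). Then: (i) every eigenvalue of α has strictly positive imaginary part, so in particular α is invertible; (ii) with Λ_k = [(I_n + iα⁻¹)^kϑ₁, (I_n − iα⁻¹)^kϑ₂] and S_{k+1} = S_k + α⁻¹S_kα^{−*} + α⁻¹Λ_k j Λ_k* α^{−*}, the matrix S_k is positive definite for every k ∈ ℕ₀, so each quadruple Σ_k = {α, S_k, (I_n + iα⁻¹)^kϑ₁, (I_n − iα⁻¹)^kϑ₂} is admissible; and (iii) the pair (α, (I_n + iα⁻¹)^kϑ₁)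 is controllable for every k ∈ ℕ₀. -/
open Matrix
open scoped ComplexOrder

/-- A pair `(α, θ)` is controllable if the columns of `θ, αθ, …, α^{n−1}θ` span `ℂⁿ`. -/
def Controllable {n p : ℕ} (α : Matrix (Fin n) (Fin n) ℂ) (θ : Matrix (Fin n) (Fin p) ℂ) :
    Prop :=
  Submodule.span ℂ
    {v : Fin n → ℂ | ∃ k : ℕ, k < n ∧ ∃ j : Fin p, v = fun i => (α ^ k * θ) i j} = ⊤

lemma quadAux {n p : ℕ} (A : Matrix (Fin n) (Fin p) ℂ) (M : Matrix (Fin p) (Fin p) ℂ) (x : Fin n → ℂ) :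
    star x ⬝ᵥ (A * M * Aᴴ) *ᵥ x = star (Aᴴ *ᵥ x) ⬝ᵥ (M *ᵥ (Aᴴ *ᵥ x)) := by
  rw [← mulVec_mulVec, ← mulVec_mulVec, dotProduct_mulVec, star_mulVec, conjTranspose_conjTranspose]


lemma ctrl_perp {n p : ℕ} {α : Matrix (Fin n) (Fin n) ℂ} {θ : Matrix (Fin n) (Fin p) ℂ}
    (hc : Controllable α θ) {v : Fin n → ℂ} {c : ℂ}
    (hv : αᴴ *ᵥ v = c • v) (hθ : θᴴ *ᵥ v = 0) : v = 0 := by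
  have hpow : ∀ k : ℕ, (αᴴ) ^ k *ᵥ v = c ^ k • v := by
    intro k
    induction k with
    | zero => simp
    | succ k ih =>
      rw [pow_succ', ← mulVec_mulVec, ih, mulVec_smul, hv, smul_smul, pow_succ']
      ring_nf
  have hperp : ∀ k : ℕ, star v ᵥ* (α ^ k * θ) = 0 := by
    intro k
    have h1 : star v ᵥ* α ^ k = (star c) ^ k • star v := by
      have := congrArg star (hpow k)
      rw [star_mulVec, star_smul] at this
      rw [conjTranspose_pow, conjTranspose_conjTranspose] at this
      rw [this, star_pow]
    rw [← vecMul_vecMul, h1, smul_vecMul]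
    have h2 : star v ᵥ* θ = 0 := by
      have := congrArg star hθ
      rw [star_mulVec, conjTranspose_conjTranspose] at this
      simpa using this
    rw [h2, smul_zero]
  -- linear functional x ↦ star v ⬝ᵥ x
  let f : (Fin n → ℂ) →ₗ[ℂ] ℂ :=
    { toFun := fun w => star v ⬝ᵥ w
      map_add' := fun a b => dotProduct_add _ _ _
      map_smul' := fun r a => by simp [dotProduct_smul] }
  have hker : Submodule.span ℂ
      {w : Fin n → ℂ | ∃ k : ℕ, k < n ∧ ∃ j : Fin p, w = fun i => (α ^ k * θ) i j}
      ≤ LinearMap.ker f := by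
    rw [Submodule.span_le]
    rintro w ⟨k, -, j, rfl⟩
    simp only [SetLike.mem_coe, LinearMap.mem_ker]
    show star v ⬝ᵥ (fun i => (α ^ k * θ) i j) = 0
    have : star v ⬝ᵥ (fun i => (α ^ k * θ) i j) = (star v ᵥ* (α ^ k * θ)) j := by
      simp [vecMul, dotProduct, mul_comm]
    rw [this, hperp k]
    rfl
  have hv0 : f v = 0 := by
    have : v ∈ LinearMap.ker f := hker (hc ▸ Submodule.mem_top)
    exact this
  have : star v ⬝ᵥ v = 0 := hv0
  exact (dotProduct_star_self_eq_zero).mp this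

-- eigenvector of αᴴ from spectrum of α
lemma eig_exists {n : ℕ} {α : Matrix (Fin n) (Fin n) ℂ} {z : ℂ} (hz : z ∈ spectrum ℂ α) :
    ∃ v : Fin n → ℂ, v ≠ 0 ∧ αᴴ *ᵥ v = (starRingEnd ℂ z) • v := by
  rw [spectrum.mem_iff] at hz
  have hdet : (algebraMap ℂ (Matrix (Fin n) (Fin n) ℂ) z - α).det = 0 := by
    by_contra h
    exact hz ((Matrix.isUnit_iff_isUnit_det _).mpr (isUnit_iff_ne_zero.mpr h))
  have hdet2 : ((algebraMap ℂ (Matrix (Fin n) (Fin n) ℂ) z - α)ᴴ).det = 0 := by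
    rw [det_conjTranspose, hdet, star_zero]
  obtain ⟨v, hv, hmul⟩ := (Matrix.exists_mulVec_eq_zero_iff).mpr hdet2
  refine ⟨v, hv, ?_⟩
  have : (algebraMap ℂ (Matrix (Fin n) (Fin n) ℂ) z - α)ᴴ = (starRingEnd ℂ z) • 1 - αᴴ := by
    rw [conjTranspose_sub]
    congr 1
    rw [Algebra.algebraMap_eq_smul_one]
    simp [conjTranspose_smul]
  rw [this, sub_mulVec, smul_mulVec, one_mulVec, sub_eq_zero] at hmul
  exact hmul.symm

lemma quadBB {n p : ℕ} (B : Matrix (Fin n) (Fin p) ℂ) (x : Fin n → ℂ) :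
    star x ⬝ᵥ (B * Bᴴ) *ᵥ x = star (Bᴴ *ᵥ x) ⬝ᵥ (Bᴴ *ᵥ x) := by
  rw [← mulVec_mulVec, dotProduct_mulVec, star_mulVec, conjTranspose_conjTranspose]

-- the quadratic-form identity for an admissibility relation at an eigenvector of αᴴ
lemma quad_identity {n m₁ m₂ : ℕ} {α S : Matrix (Fin n) (Fin n) ℂ}
    {θ₁ : Matrix (Fin n) (Fin m₁) ℂ} {θ₂ : Matrix (Fin n) (Fin m₂) ℂ}
    (h2 : α * S - S * αᴴ = Complex.I • (θ₁ * θ₁ᴴ + θ₂ * θ₂ᴴ))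
    {v : Fin n → ℂ} {z : ℂ} (hv : αᴴ *ᵥ v = (starRingEnd ℂ z) • v) :
    (z - starRingEnd ℂ z) * (star v ⬝ᵥ S *ᵥ v)
      = Complex.I * (star (θ₁ᴴ *ᵥ v) ⬝ᵥ (θ₁ᴴ *ᵥ v) + star (θ₂ᴴ *ᵥ v) ⬝ᵥ (θ₂ᴴ *ᵥ v)) := by
  have key := congrArg (fun M => star v ⬝ᵥ M *ᵥ v) h2
  simp only [sub_mulVec, dotProduct_sub, smul_mulVec, dotProduct_smul,
    add_mulVec, dotProduct_add] at key
  have hvα : star v ᵥ* α = z • star v := by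
    have := congrArg star hv
    rw [star_mulVec, conjTranspose_conjTranspose, star_smul] at this
    simpa using this
  have e1 : star v ⬝ᵥ (α * S) *ᵥ v = z * (star v ⬝ᵥ S *ᵥ v) := by
    rw [← mulVec_mulVec, dotProduct_mulVec, hvα, smul_dotProduct, smul_eq_mul]
  have e2 : star v ⬝ᵥ (S * αᴴ) *ᵥ v = (starRingEnd ℂ z) * (star v ⬝ᵥ S *ᵥ v) := by
    rw [← mulVec_mulVec, hv, mulVec_smul, dotProduct_smul, smul_eq_mul]
  rw [e1, e2, quadBB, quadBB] at key
  rw [sub_mul, key, smul_eq_mul]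

lemma im_pos {n m₁ m₂ : ℕ} {α S₀ : Matrix (Fin n) (Fin n) ℂ}
    {θ₁ : Matrix (Fin n) (Fin m₁) ℂ} {θ₂ : Matrix (Fin n) (Fin m₂) ℂ}
    (hadm : Admissible α S₀ θ₁ θ₂) (hctrl : Controllable α θ₁) :
    ∀ z ∈ spectrum ℂ α, 0 < z.im := by
  intro z hz
  obtain ⟨v, hv, heig⟩ := eig_exists hz
  set q : ℂ := star v ⬝ᵥ S₀ *ᵥ v with hq_def
  have hq : 0 < q := hadm.1.dotProduct_mulVec_pos hv
  have hqre : 0 < q.re ∧ q.im = 0 := by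
    have := Complex.lt_def.mp hq
    exact ⟨by simpa using this.1, by simpa using this.2.symm⟩
  set p₁ : ℂ := star (θ₁ᴴ *ᵥ v) ⬝ᵥ (θ₁ᴴ *ᵥ v) with hp₁_def
  set p₂ : ℂ := star (θ₂ᴴ *ᵥ v) ⬝ᵥ (θ₂ᴴ *ᵥ v) with hp₂_def
  have hp₁ : 0 ≤ p₁ := dotProduct_star_self_nonneg _
  have hp₂ : 0 ≤ p₂ := dotProduct_star_self_nonneg _
  have hp₁' : 0 ≤ p₁.re ∧ p₁.im = 0 :=
    ⟨by simpa using (Complex.le_def.mp hp₁).1, by simpa using (Complex.le_def.mp hp₁).2.symm⟩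
  have hp₂' : 0 ≤ p₂.re ∧ p₂.im = 0 :=
    ⟨by simpa using (Complex.le_def.mp hp₂).1, by simpa using (Complex.le_def.mp hp₂).2.symm⟩
  have key : (z - starRingEnd ℂ z) * q = Complex.I * (p₁ + p₂) := quad_identity hadm.2 heig
  rw [Complex.sub_conj] at key
  -- cancel I
  have key2 : (2 * z.im : ℝ) * q = p₁ + p₂ := by
    apply mul_left_cancel₀ Complex.I_ne_zero
    rw [← key]; ring
  have keyre := congrArg Complex.re key2
  simp only [Complex.add_re, Complex.mul_re, Complex.ofReal_re, Complex.ofReal_im,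
    hqre.2, zero_mul, mul_zero, sub_zero] at keyre
  -- keyre : 2 * z.im * q.re = p₁.re + p₂.re
  by_contra hneg
  push_neg at hneg
  have him0 : z.im = 0 := by nlinarith [hp₁'.1, hp₂'.1, hqre.1]
  have hsum : p₁.re + p₂.re = 0 := by rw [← keyre, him0]; ring
  have hp1re : p₁.re = 0 := by linarith [hp₁'.1, hp₂'.1]
  have hp1 : p₁ = 0 := Complex.ext hp1re hp₁'.2
  have : θ₁ᴴ *ᵥ v = 0 := dotProduct_star_self_eq_zero.mp hp1
  exact hv (ctrl_perp hctrl heig this)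

section Step
variable {n m₁ m₂ : ℕ} {α S : Matrix (Fin n) (Fin n) ℂ}
    {θa : Matrix (Fin n) (Fin m₁) ℂ} {θb : Matrix (Fin n) (Fin m₂) ℂ}

lemma step_identity (hα : IsUnit α.det)
    (hrel : α * S - S * αᴴ = Complex.I • (θa * θaᴴ + θb * θbᴴ)) :
    α * (S + α⁻¹ * S * (α⁻¹)ᴴ + α⁻¹ * (θa * θaᴴ - θb * θbᴴ) * (α⁻¹)ᴴ)
      - (S + α⁻¹ * S * (α⁻¹)ᴴ + α⁻¹ * (θa * θaᴴ - θb * θbᴴ) * (α⁻¹)ᴴ) * αᴴ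
    = Complex.I • (((1 + Complex.I • α⁻¹) * θa) * ((1 + Complex.I • α⁻¹) * θa)ᴴ
        + ((1 - Complex.I • α⁻¹) * θb) * ((1 - Complex.I • α⁻¹) * θb)ᴴ) := by
  set β := α⁻¹ with hβdef
  have h1 : α * β = 1 := Matrix.mul_nonsing_inv α hα
  have h2 : β * α = 1 := Matrix.nonsing_inv_mul α hα
  have hH1 : βᴴ * αᴴ = 1 := by rw [← conjTranspose_mul, h1, conjTranspose_one]
  have hH2 : αᴴ * βᴴ = 1 := by rw [← conjTranspose_mul, h2, conjTranspose_one]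
  have e : β * (α * S - S * αᴴ) * βᴴ = S * βᴴ - β * S := by
    rw [mul_sub, sub_mul]
    congr 1
    · rw [← mul_assoc β α S, h2, one_mul]
    · rw [mul_assoc β (S * αᴴ) βᴴ, mul_assoc S αᴴ βᴴ, hH2, mul_one]
  rw [hrel, mul_smul_comm, smul_mul_assoc] at e
  -- e : I • (β * (θa*θaᴴ + θb*θbᴴ) * βᴴ) = S * βᴴ - β * S
  have hβS : β * S = S * βᴴ - Complex.I • (β * (θa * θaᴴ + θb * θbᴴ) * βᴴ) := by
    rw [e]; abel
  have hSα : S * αᴴ = α * S - Complex.I • (θa * θaᴴ + θb * θbᴴ) := by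
    rw [← hrel]; abel
  have hcanc : ∀ X : Matrix (Fin n) (Fin n) ℂ, α * (β * X) = X := fun X => by
    rw [← mul_assoc, h1, one_mul]
  simp only [conjTranspose_mul, conjTranspose_add, conjTranspose_sub, conjTranspose_smul,
    conjTranspose_one, Complex.star_def, Complex.conj_I]
  simp only [Matrix.mul_add, Matrix.add_mul, Matrix.mul_sub, Matrix.sub_mul, Matrix.mul_assoc, Matrix.mul_one, Matrix.one_mul, Matrix.smul_mul, Matrix.mul_smul, Matrix.neg_mul, Matrix.mul_neg, hH1, hH2,
    smul_add, smul_sub, smul_smul, Complex.I_mul_I,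
    neg_smul, smul_neg, one_smul, neg_neg, mul_neg, neg_mul, h1, h2, hcanc]
  -- now eliminate relation atoms
  rw [hSα, hβS]
  simp only [Matrix.mul_add, Matrix.add_mul, Matrix.mul_sub, Matrix.sub_mul, Matrix.mul_assoc, Matrix.mul_one, Matrix.one_mul, Matrix.smul_mul, Matrix.mul_smul, Matrix.neg_mul, Matrix.mul_neg, hH1, hH2,
    smul_add, smul_sub, smul_smul, Complex.I_mul_I,
    neg_smul, smul_neg, one_smul, neg_neg, mul_neg, neg_mul, h1, h2, hcanc]
  abel
end Step

section Step2
variable {n m₁ m₂ : ℕ} {α S : Matrix (Fin n) (Fin n) ℂ}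
    {θa : Matrix (Fin n) (Fin m₁) ℂ} {θb : Matrix (Fin n) (Fin m₂) ℂ}

lemma step_decomp (hα : IsUnit α.det)
    (hrel : α * S - S * αᴴ = Complex.I • (θa * θaᴴ + θb * θbᴴ)) :
    S + α⁻¹ * S * (α⁻¹)ᴴ + α⁻¹ * (θa * θaᴴ - θb * θbᴴ) * (α⁻¹)ᴴ
      = (1 - Complex.I • α⁻¹) * S * (1 - Complex.I • α⁻¹)ᴴ
        + (2 : ℂ) • ((α⁻¹ * θa) * (α⁻¹ * θa)ᴴ) := by
  set β := α⁻¹ with hβdef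
  have h1 : α * β = 1 := Matrix.mul_nonsing_inv α hα
  have h2 : β * α = 1 := Matrix.nonsing_inv_mul α hα
  have hH1 : βᴴ * αᴴ = 1 := by rw [← conjTranspose_mul, h1, conjTranspose_one]
  have hH2 : αᴴ * βᴴ = 1 := by rw [← conjTranspose_mul, h2, conjTranspose_one]
  have e : β * (α * S - S * αᴴ) * βᴴ = S * βᴴ - β * S := by
    rw [mul_sub, sub_mul]
    congr 1
    · rw [← mul_assoc β α S, h2, one_mul]
    · rw [mul_assoc β (S * αᴴ) βᴴ, mul_assoc S αᴴ βᴴ, hH2, mul_one]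
  rw [hrel, mul_smul_comm, smul_mul_assoc] at e
  have hβS : β * S = S * βᴴ - Complex.I • (β * (θa * θaᴴ + θb * θbᴴ) * βᴴ) := by
    rw [e]; abel
  simp only [conjTranspose_mul, conjTranspose_add, conjTranspose_sub, conjTranspose_smul,
    conjTranspose_one, Complex.star_def, Complex.conj_I]
  simp only [Matrix.mul_add, Matrix.add_mul, Matrix.mul_sub, Matrix.sub_mul, Matrix.mul_assoc, Matrix.mul_one, Matrix.one_mul, Matrix.smul_mul, Matrix.mul_smul, Matrix.neg_mul, Matrix.mul_neg, hH1, hH2, smul_add, smul_sub, smul_smul, Complex.I_mul_I, neg_smul, smul_neg, one_smul, neg_neg, mul_neg, neg_mul, h1, h2]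
  rw [hβS]
  simp only [Matrix.mul_add, Matrix.add_mul, Matrix.mul_sub, Matrix.sub_mul, Matrix.mul_assoc, Matrix.mul_one, Matrix.one_mul, Matrix.smul_mul, Matrix.mul_smul, Matrix.neg_mul, Matrix.mul_neg, hH1, hH2, smul_add, smul_sub, smul_smul, Complex.I_mul_I, neg_smul, smul_neg, one_smul, neg_neg, mul_neg, neg_mul, h1, h2, two_smul]
  abel
end Step2

lemma dotProduct_star_self_pos {p : ℕ} {u : Fin p → ℂ} (hu : u ≠ 0) : 0 < star u ⬝ᵥ u :=
  lt_of_le_of_ne (dotProduct_star_self_nonneg u)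
    (fun h => hu (dotProduct_star_self_eq_zero.mp h.symm))

section Step3
variable {n m₁ m₂ : ℕ} {α S : Matrix (Fin n) (Fin n) ℂ}
    {θa : Matrix (Fin n) (Fin m₁) ℂ} {θb : Matrix (Fin n) (Fin m₂) ℂ}

lemma step_posdef (hα : IsUnit α.det) (hadm : Admissible α S θa θb)
    (hker : ∀ v : Fin n → ℂ, αᴴ *ᵥ v = (-Complex.I) • v → θaᴴ *ᵥ v = 0 → v = 0) :
    (S + α⁻¹ * S * (α⁻¹)ᴴ + α⁻¹ * (θa * θaᴴ - θb * θbᴴ) * (α⁻¹)ᴴ).PosDef := by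
  set β := α⁻¹ with hβdef
  have h2 : β * α = 1 := Matrix.nonsing_inv_mul α hα
  have hH2 : αᴴ * βᴴ = 1 := by rw [← conjTranspose_mul, h2, conjTranspose_one]
  refine Matrix.PosDef.of_dotProduct_mulVec_pos ?_ ?_
  · -- Hermitian
    show _ᴴ = _
    have hS : Sᴴ = S := hadm.1.1
    simp only [conjTranspose_add, conjTranspose_mul, conjTranspose_sub,
      conjTranspose_conjTranspose, hS, Matrix.mul_assoc]
  · intro x hx
    rw [step_decomp hα hadm.2, Matrix.add_mulVec, dotProduct_add, smul_mulVec,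
      dotProduct_smul, quadAux, quadBB]
    set w := (1 - Complex.I • β)ᴴ *ᵥ x with hw_def
    set u := (β * θa)ᴴ *ᵥ x with hu_def
    by_cases hw : w = 0
    · -- eigen case
      have hβx : βᴴ *ᵥ x = Complex.I • x := by
        have hw2 : x + Complex.I • (βᴴ *ᵥ x) = 0 := by
          have : (1 - Complex.I • β)ᴴ = 1 + Complex.I • βᴴ := by
            simp [conjTranspose_sub, conjTranspose_smul, Complex.star_def, Complex.conj_I,
              sub_neg_eq_add]
          rw [hw_def, this, Matrix.add_mulVec, Matrix.one_mulVec, smul_mulVec] at hw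
          exact hw
        have := congrArg (fun y => (-Complex.I) • y) hw2
        simp only [smul_add, smul_smul, smul_zero] at this
        rw [neg_mul, Complex.I_mul_I, neg_neg, one_smul] at this
        -- this : (-I) • x + βᴴ *ᵥ x = 0
        have h3 : βᴴ *ᵥ x = -((-Complex.I) • x) := by
          rw [eq_neg_iff_add_eq_zero, add_comm]; exact this
        rw [h3, neg_smul, neg_neg]
      have hαx : αᴴ *ᵥ x = (-Complex.I) • x := by
        have h4 : αᴴ *ᵥ (βᴴ *ᵥ x) = x := by
          rw [mulVec_mulVec, hH2, Matrix.one_mulVec]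
        rw [hβx, mulVec_smul] at h4
        have := congrArg (fun y => (-Complex.I) • y) h4
        simp only [smul_smul] at this
        rw [neg_mul, Complex.I_mul_I, neg_neg, one_smul] at this
        exact this
      have hu_ne : u ≠ 0 := by
        intro hu0
        apply hx
        apply hker x hαx
        have hu2 : u = Complex.I • (θaᴴ *ᵥ x) := by
          rw [hu_def, conjTranspose_mul, ← mulVec_mulVec, hβx, mulVec_smul]
        rw [hu0] at hu2
        rcases smul_eq_zero.mp hu2.symm with h | h
        · exact absurd h Complex.I_ne_zero
        · exact h
      have h5 : 0 < (2:ℂ) * (star u ⬝ᵥ u) :=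
        mul_pos (by norm_num [Complex.lt_def]) (dotProduct_star_self_pos hu_ne)
      rw [hw]
      simpa using h5
    · have h6 : 0 < star w ⬝ᵥ S *ᵥ w := hadm.1.dotProduct_mulVec_pos hw
      have h7 : 0 ≤ (2:ℂ) * (star u ⬝ᵥ u) :=
        mul_nonneg (by norm_num [Complex.le_def]) (dotProduct_star_self_nonneg u)
      calc (0:ℂ) < star w ⬝ᵥ S *ᵥ w + (2:ℂ) * (star u ⬝ᵥ u) :=
            lt_add_of_lt_of_nonneg h6 h7
        _ = star w ⬝ᵥ S *ᵥ w + (2:ℂ) • (star u ⬝ᵥ u) := by rw [smul_eq_mul]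
end Step3

lemma mulVec_pow_eig {n : ℕ} {M : Matrix (Fin n) (Fin n) ℂ} {v : Fin n → ℂ} {c : ℂ}
    (h : M *ᵥ v = c • v) (k : ℕ) : M ^ k *ᵥ v = c ^ k • v := by
  induction k with
  | zero => simp
  | succ k ih =>
    rw [pow_succ', ← mulVec_mulVec, ih, mulVec_smul, h, smul_smul, pow_succ']
    ring_nf

lemma hker_inst {n m₁ : ℕ} {α : Matrix (Fin n) (Fin n) ℂ} {θ₁ : Matrix (Fin n) (Fin m₁) ℂ}
    (hctrl : Controllable α θ₁) (hα : IsUnit α.det) (k : ℕ) :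
    ∀ v : Fin n → ℂ, αᴴ *ᵥ v = (-Complex.I) • v →
      ((1 + Complex.I • α⁻¹) ^ k * θ₁)ᴴ *ᵥ v = 0 → v = 0 := by
  intro v hv hθ
  set β := α⁻¹ with hβdef
  have h2 : β * α = 1 := Matrix.nonsing_inv_mul α hα
  have hH1 : βᴴ * αᴴ = 1 := by
    rw [← conjTranspose_mul, Matrix.mul_nonsing_inv α hα, conjTranspose_one]
  have hβv : βᴴ *ᵥ v = Complex.I • v := by
    have h4 : βᴴ *ᵥ (αᴴ *ᵥ v) = v := by rw [mulVec_mulVec, hH1, Matrix.one_mulVec]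
    rw [hv, mulVec_smul] at h4
    have := congrArg (fun y => Complex.I • y) h4
    simp only [smul_smul] at this
    rw [mul_neg, Complex.I_mul_I, neg_neg, one_smul] at this
    exact this
  have hMv : (1 + Complex.I • β)ᴴ *ᵥ v = (2:ℂ) • v := by
    have hconj : (1 + Complex.I • β)ᴴ = 1 + (-Complex.I) • βᴴ := by
      simp [conjTranspose_add, conjTranspose_smul, Complex.star_def, Complex.conj_I, neg_smul]
    rw [hconj, Matrix.add_mulVec, Matrix.one_mulVec, smul_mulVec, hβv, smul_smul,
      neg_mul, Complex.I_mul_I, neg_neg, one_smul]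
    rw [two_smul]
  have hθ1 : θ₁ᴴ *ᵥ v = 0 := by
    have e : ((1 + Complex.I • β) ^ k * θ₁)ᴴ *ᵥ v = (2:ℂ)^k • (θ₁ᴴ *ᵥ v) := by
      rw [conjTranspose_mul, ← mulVec_mulVec, conjTranspose_pow, mulVec_pow_eig hMv k,
        mulVec_smul]
    rw [hθ] at e
    rcases smul_eq_zero.mp e.symm with h | h
    · exact absurd h (pow_ne_zero k two_ne_zero)
    · exact h
  exact ctrl_perp hctrl hv hθ1

lemma ctrl_transfer {n p : ℕ} {α M : Matrix (Fin n) (Fin n) ℂ} {θ : Matrix (Fin n) (Fin p) ℂ}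
    (hM : IsUnit M.det) (hcomm : α * M = M * α) (hc : Controllable α θ) :
    Controllable α (M * θ) := by
  unfold Controllable at hc ⊢
  have hset : {v : Fin n → ℂ | ∃ k : ℕ, k < n ∧ ∃ j : Fin p, v = fun i => (α ^ k * (M * θ)) i j}
      = M.mulVecLin '' {v : Fin n → ℂ | ∃ k : ℕ, k < n ∧ ∃ j : Fin p, v = fun i => (α ^ k * θ) i j} := by
    have hcommk : ∀ k : ℕ, α ^ k * (M * θ) = M * (α ^ k * θ) := by
      intro k
      have : α ^ k * M = M * α ^ k := ((Commute.pow_left hcomm k)).symm ▸ rfl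
      rw [← Matrix.mul_assoc, (Commute.pow_left hcomm k), Matrix.mul_assoc]
    ext v
    constructor
    · rintro ⟨k, hk, j, rfl⟩
      refine ⟨fun i => (α ^ k * θ) i j, ⟨k, hk, j, rfl⟩, ?_⟩
      rw [hcommk k]
      ext i
      simp [mulVecLin_apply, mulVec, dotProduct, mul_apply]
    · rintro ⟨w, ⟨k, hk, j, rfl⟩, rfl⟩
      refine ⟨k, hk, j, ?_⟩
      rw [hcommk k]
      ext i
      simp [mulVecLin_apply, mulVec, dotProduct, mul_apply]
  rw [hset, Submodule.span_image, hc, Submodule.map_top, LinearMap.range_eq_top]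
  intro y
  exact ⟨M⁻¹ *ᵥ y, by simp [mulVecLin_apply, mulVec_mulVec, Matrix.mul_nonsing_inv _ hM]⟩

lemma not_unit_spectrum_of_eigvec {n : ℕ} {α : Matrix (Fin n) (Fin n) ℂ} {v : Fin n → ℂ} {z : ℂ}
    (hv : v ≠ 0) (h : α *ᵥ v = z • v) : z ∈ spectrum ℂ α := by
  rw [spectrum.mem_iff]
  intro hu
  have hdet := (Matrix.isUnit_iff_isUnit_det _).mp hu
  have hzero : (algebraMap ℂ (Matrix (Fin n) (Fin n) ℂ) z - α) *ᵥ v = 0 := by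
    rw [sub_mulVec, Algebra.algebraMap_eq_smul_one, smul_mulVec, Matrix.one_mulVec, h,
      sub_self]
  have : (algebraMap ℂ (Matrix (Fin n) (Fin n) ℂ) z - α).det = 0 :=
    Matrix.exists_mulVec_eq_zero_iff.mp ⟨v, hv, hzero⟩
  rw [this] at hdet
  exact (isUnit_iff_ne_zero.mp hdet) rfl

lemma unit_one_add_smul_inv {n : ℕ} {α : Matrix (Fin n) (Fin n) ℂ}
    (him : ∀ z ∈ spectrum ℂ α, 0 < z.im) (hα : IsUnit α.det) :
    IsUnit (1 + Complex.I • α⁻¹).det := by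
  set β := α⁻¹ with hβdef
  rw [isUnit_iff_ne_zero]
  intro hdet
  obtain ⟨v, hv, hzero⟩ := Matrix.exists_mulVec_eq_zero_iff.mpr hdet
  rw [Matrix.add_mulVec, Matrix.one_mulVec, smul_mulVec] at hzero
  -- v + I • (β *ᵥ v) = 0
  have hβv : β *ᵥ v = Complex.I • v := by
    have := congrArg (fun y => (-Complex.I) • y) hzero
    simp only [smul_add, smul_smul, smul_zero] at this
    rw [neg_mul, Complex.I_mul_I, neg_neg, one_smul] at this
    have h3 : β *ᵥ v = -((-Complex.I) • v) := by
      rw [eq_neg_iff_add_eq_zero, add_comm]; exact this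
    rw [h3, neg_smul, neg_neg]
  have hαv : α *ᵥ v = (-Complex.I) • v := by
    have h4 : α *ᵥ (β *ᵥ v) = v := by
      rw [mulVec_mulVec, Matrix.mul_nonsing_inv α hα, Matrix.one_mulVec]
    rw [hβv, mulVec_smul] at h4
    have := congrArg (fun y => (-Complex.I) • y) h4
    simp only [smul_smul] at this
    rw [neg_mul, Complex.I_mul_I, neg_neg, one_smul] at this
    exact this
  have := him _ (not_unit_spectrum_of_eigvec hv hαv)
  norm_num at this

lemma lamJ {n m₁ m₂ : ℕ} (A : Matrix (Fin n) (Fin m₁) ℂ) (B : Matrix (Fin n) (Fin m₂) ℂ) :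
    Matrix.fromCols A B * sigJ m₁ m₂ * (Matrix.fromCols A B)ᴴ = A * Aᴴ - B * Bᴴ := by
  rw [sigJ, fromCols_mul_fromBlocks, conjTranspose_fromCols_eq_fromRows_conjTranspose,
    fromCols_mul_fromRows]
  simp [Matrix.mul_neg, Matrix.neg_mul, sub_eq_add_neg]

set_option maxHeartbeats 1000000 in
/-- for a strongly admissible quadruple, `σ(α) ⊂ ℂ₊`, every `S_k` is positive
definite (so every `Σ_k` is admissible) and every pair `(α, (I + iα⁻¹)^kϑ₁)` is controllable. -/
theorem strongly_admissible_discrete_evolution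
    {n m₁ m₂ : ℕ} (α S₀ : Matrix (Fin n) (Fin n) ℂ)
    (θ₁ : Matrix (Fin n) (Fin m₁) ℂ) (θ₂ : Matrix (Fin n) (Fin m₂) ℂ)
    (hadm : Admissible α S₀ θ₁ θ₂) (hctrl : Controllable α θ₁)
    (Λ : ℕ → Matrix (Fin n) (Fin m₁ ⊕ Fin m₂) ℂ)
    (hΛ : ∀ k : ℕ, Λ k = Matrix.fromCols
      ((1 + Complex.I • α⁻¹) ^ k * θ₁) ((1 - Complex.I • α⁻¹) ^ k * θ₂))
    (S : ℕ → Matrix (Fin n) (Fin n) ℂ)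
    (hS0 : S 0 = S₀)
    (hS : ∀ k : ℕ, S (k + 1) =
      S k + α⁻¹ * S k * (α⁻¹)ᴴ + α⁻¹ * (Λ k * sigJ m₁ m₂ * (Λ k)ᴴ) * (α⁻¹)ᴴ) :
    (∀ z ∈ spectrum ℂ α, 0 < z.im) ∧ IsUnit α ∧
    (∀ k : ℕ, (S k).PosDef ∧
      Admissible α (S k) ((1 + Complex.I • α⁻¹) ^ k * θ₁) ((1 - Complex.I • α⁻¹) ^ k * θ₂)) ∧
    (∀ k : ℕ, Controllable α ((1 + Complex.I • α⁻¹) ^ k * θ₁)) := by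
  have him : ∀ z ∈ spectrum ℂ α, 0 < z.im := im_pos hadm hctrl
  have hunit : IsUnit α := by
    by_contra h
    have h0 : (0:ℂ) ∈ spectrum ℂ α := (spectrum.zero_mem_iff ℂ).mpr h
    simpa using him 0 h0
  have hdet : IsUnit α.det := (Matrix.isUnit_iff_isUnit_det α).mp hunit
  have hmain : ∀ k : ℕ, (S k).PosDef ∧
      Admissible α (S k) ((1 + Complex.I • α⁻¹) ^ k * θ₁) ((1 - Complex.I • α⁻¹) ^ k * θ₂) := by
    intro k
    induction k with
    | zero =>
      refine ⟨by rw [hS0]; exact hadm.1, ?_⟩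
      simpa [pow_zero, Matrix.one_mul, hS0] using hadm
    | succ k ih =>
      have hrw : S (k+1) = S k + α⁻¹ * S k * (α⁻¹)ᴴ
          + α⁻¹ * (((1 + Complex.I • α⁻¹) ^ k * θ₁) * ((1 + Complex.I • α⁻¹) ^ k * θ₁)ᴴ
            - ((1 - Complex.I • α⁻¹) ^ k * θ₂) * ((1 - Complex.I • α⁻¹) ^ k * θ₂)ᴴ) * (α⁻¹)ᴴ := by
        rw [hS k, hΛ k, lamJ]
      have hpd : (S (k+1)).PosDef := by
        rw [hrw]
        exact step_posdef hdet ih.2 (hker_inst hctrl hdet k)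
      refine ⟨hpd, hpd, ?_⟩
      have epow1 : (1 + Complex.I • α⁻¹) ^ (k+1) * θ₁
          = (1 + Complex.I • α⁻¹) * ((1 + Complex.I • α⁻¹) ^ k * θ₁) := by
        rw [pow_succ', Matrix.mul_assoc]
      have epow2 : (1 - Complex.I • α⁻¹) ^ (k+1) * θ₂
          = (1 - Complex.I • α⁻¹) * ((1 - Complex.I • α⁻¹) ^ k * θ₂) := by
        rw [pow_succ', Matrix.mul_assoc]
      rw [hrw, epow1, epow2]
      exact step_identity hdet ih.2.2
  have hctrlk : ∀ k : ℕ, Controllable α ((1 + Complex.I • α⁻¹) ^ k * θ₁) := by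
    intro k
    have hc1 : α * (1 + Complex.I • α⁻¹) = (1 + Complex.I • α⁻¹) * α := by
      rw [Matrix.mul_add, Matrix.add_mul, Matrix.mul_one, Matrix.one_mul, mul_smul_comm,
        smul_mul_assoc, Matrix.mul_nonsing_inv α hdet, Matrix.nonsing_inv_mul α hdet]
    apply ctrl_transfer ?_ ?_ hctrl
    · rw [Matrix.det_pow]
      exact (unit_one_add_smul_inv him hdet).pow k
    · exact (Commute.pow_right hc1 k)
  exact ⟨him, hunit, hmain, hctrlk⟩
end

section
/- Let Σ₀ = {α, S₀, ϑ₁, ϑ₂} be a strongly admissible quadruple. For k ∈ ℕ₀ set Λ_k = [(I_n + iα⁻¹)^kϑ₁, (I_n − iα⁻¹)^kϑ₂], S_{k+1} = S_k + α⁻¹S_kα^{−*} + α⁻¹Λ_k j Λ_k* α^{−*}, W_{Σ_k}(λ) = I_m + iΛ_k*S_k⁻¹(λI_n − α)⁻¹Λ_k, and C_k = j + Λ_k*S_k⁻¹Λ_k − Λ_{k+1}*S_{k+1}⁻¹Λ_{k+1}. Then for every k ∈ ℕ₀ and every λ ∈ ℂ with λ ≠ 0 and λ not an eigenvalue of α,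 the identity W_{Σ_{k+1}}(λ)(I_m − (i/λ)j) = (I_m − (i/λ)C_k) W_{Σ_k}(λ) holds. -/
open Matrix
open scoped ComplexOrder

lemma controllable_perp {n p : ℕ} {α : Matrix (Fin n) (Fin n) ℂ} {θ : Matrix (Fin n) (Fin p) ℂ}
    (h : Controllable α θ) (x : Fin n → ℂ)
    (hx : ∀ k : ℕ, θᴴ *ᵥ ((αᴴ) ^ k *ᵥ x) = 0) : x = 0 := by
  have key : ∀ v ∈ Submodule.span ℂ
      {v : Fin n → ℂ | ∃ k : ℕ, k < n ∧ ∃ j : Fin p, v = fun i => (α ^ k * θ) i j},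
      v ⬝ᵥ star x = 0 := by
    intro v hv
    induction hv using Submodule.span_induction with
    | mem v hv =>
        obtain ⟨k, hk, j, rfl⟩ := hv
        have h1 : ((α ^ k * θ)ᴴ *ᵥ x) j = 0 := by
          rw [conjTranspose_mul, conjTranspose_pow, ← mulVec_mulVec, hx k]
          rfl
        have h2 : (fun i => (α ^ k * θ) i j) ⬝ᵥ star x = star (((α ^ k * θ)ᴴ *ᵥ x) j) := by
          simp [dotProduct, mulVec, conjTranspose_apply, mul_comm]
        rw [h2, h1, star_zero]
    | zero => simp
    | add v w _ _ hv hw => simp [add_dotProduct, hv, hw]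
    | smul c v _ hv => simp [smul_dotProduct, hv]
  have hxx := key x (by rw [h]; trivial)
  exact dotProduct_self_star_eq_zero.mp hxx

lemma alpha_isUnit {n m₁ m₂ : ℕ} {α S₀ : Matrix (Fin n) (Fin n) ℂ}
    {θ₁ : Matrix (Fin n) (Fin m₁) ℂ} {θ₂ : Matrix (Fin n) (Fin m₂) ℂ}
    (hpd : S₀.PosDef)
    (heq : α * S₀ - S₀ * αᴴ = Complex.I • (θ₁ * θ₁ᴴ + θ₂ * θ₂ᴴ))
    (hctrl : Controllable α θ₁) : IsUnit α := by
  have hker : ∀ x : Fin n → ℂ, αᴴ *ᵥ x = 0 → x = 0 := by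
    intro x hxk
    have h0 : star x ⬝ᵥ ((α * S₀ - S₀ * αᴴ) *ᵥ x) = 0 := by
      rw [sub_mulVec, dotProduct_sub]
      have t1 : star x ⬝ᵥ ((α * S₀) *ᵥ x) = 0 := by
        rw [← mulVec_mulVec, dotProduct_mulVec]
        have : star x ᵥ* α = star (αᴴ *ᵥ x) := by
          rw [star_mulVec, conjTranspose_conjTranspose]
        rw [this, hxk, star_zero, zero_dotProduct]
      have t2 : star x ⬝ᵥ ((S₀ * αᴴ) *ᵥ x) = 0 := by
        rw [← mulVec_mulVec, hxk, mulVec_zero, dotProduct_zero]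
      rw [t1, t2, sub_zero]
    rw [heq] at h0
    have h1 : star x ⬝ᵥ ((θ₁ * θ₁ᴴ + θ₂ * θ₂ᴴ) *ᵥ x) = 0 := by
      have := h0
      rw [smul_mulVec, dotProduct_smul, smul_eq_mul] at this
      exact (mul_eq_zero.mp this).resolve_left Complex.I_ne_zero
    have ha : star x ⬝ᵥ ((θ₁ * θ₁ᴴ) *ᵥ x) = star (θ₁ᴴ *ᵥ x) ⬝ᵥ (θ₁ᴴ *ᵥ x) := by
      rw [← mulVec_mulVec, dotProduct_mulVec, star_mulVec, conjTranspose_conjTranspose]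
    have hb : star x ⬝ᵥ ((θ₂ * θ₂ᴴ) *ᵥ x) = star (θ₂ᴴ *ᵥ x) ⬝ᵥ (θ₂ᴴ *ᵥ x) := by
      rw [← mulVec_mulVec, dotProduct_mulVec, star_mulVec, conjTranspose_conjTranspose]
    rw [add_mulVec, dotProduct_add, ha, hb] at h1
    have hA : (0:ℂ) ≤ star (θ₁ᴴ *ᵥ x) ⬝ᵥ (θ₁ᴴ *ᵥ x) := dotProduct_star_self_nonneg _
    have hB : (0:ℂ) ≤ star (θ₂ᴴ *ᵥ x) ⬝ᵥ (θ₂ᴴ *ᵥ x) := dotProduct_star_self_nonneg _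
    have hA0 : star (θ₁ᴴ *ᵥ x) ⬝ᵥ (θ₁ᴴ *ᵥ x) = 0 := by
      have : star (θ₁ᴴ *ᵥ x) ⬝ᵥ (θ₁ᴴ *ᵥ x) ≤ 0 := by
        calc star (θ₁ᴴ *ᵥ x) ⬝ᵥ (θ₁ᴴ *ᵥ x)
            ≤ star (θ₁ᴴ *ᵥ x) ⬝ᵥ (θ₁ᴴ *ᵥ x) + star (θ₂ᴴ *ᵥ x) ⬝ᵥ (θ₂ᴴ *ᵥ x) := le_add_of_nonneg_right hB
          _ = 0 := h1
      exact le_antisymm this hA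
    have hy1 : θ₁ᴴ *ᵥ x = 0 := dotProduct_star_self_eq_zero.mp hA0
    refine controllable_perp hctrl x ?_
    intro k
    cases k with
    | zero => simpa using hy1
    | succ k => rw [pow_succ, ← mulVec_mulVec, hxk, mulVec_zero, mulVec_zero]
  have hinj : Function.Injective (αᴴ.mulVec) := by
    intro a b hab
    have : αᴴ *ᵥ (a - b) = 0 := by rw [mulVec_sub, hab, sub_self]
    exact sub_eq_zero.mp (hker _ this)
  have : IsUnit αᴴ := mulVec_injective_iff_isUnit.mp hinj
  exact (isUnit_conjTranspose α).mp this



section Core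
variable {ι κ : Type} [Fintype ι] [DecidableEq ι] [Fintype κ] [DecidableEq κ]

lemma core_identity
    (α αi S Si S' Si' R : Matrix ι ι ℂ) (L L' : Matrix ι κ ℂ) (J : Matrix κ κ ℂ) (lam : ℂ)
    (hlam : lam ≠ 0)
    (hαi1 : α * αi = 1) (hαi2 : αi * α = 1)
    (hSi1 : S * Si = 1) (hSi2 : Si * S = 1)
    (hSi'1 : S' * Si' = 1) (hSi'2 : Si' * S' = 1)
    (hR1 : (lam • 1 - α) * R = 1) (hR2 : R * (lam • 1 - α) = 1)
    (hJJ : J * J = 1) (hJH : Jᴴ = J)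
    (hLyap : α * S - S * αᴴ = Complex.I • (L * Lᴴ))
    (hS' : S' = S + αi * S * αiᴴ + αi * (L * J * Lᴴ) * αiᴴ)
    (hL' : L' = L + Complex.I • (αi * L * J)) :
    (1 + Complex.I • (L'ᴴ * Si' * R * L')) * (1 - (Complex.I / lam) • J)
      = (1 - (Complex.I / lam) • (J + Lᴴ * Si * L - L'ᴴ * Si' * L'))
          * (1 + Complex.I • (Lᴴ * Si * R * L)) := by
  -- pointwise inverse-cancellation lemmas
  have pA1 : ∀ {κ' : Type} (X : Matrix ι κ' ℂ), α * (αi * X) = X := fun X => by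
    rw [← Matrix.mul_assoc, hαi1, Matrix.one_mul]
  have pA2 : ∀ {κ' : Type} (X : Matrix ι κ' ℂ), αi * (α * X) = X := fun X => by
    rw [← Matrix.mul_assoc, hαi2, Matrix.one_mul]
  have pS1 : ∀ {κ' : Type} (X : Matrix ι κ' ℂ), S * (Si * X) = X := fun X => by
    rw [← Matrix.mul_assoc, hSi1, Matrix.one_mul]
  have pS2 : ∀ {κ' : Type} (X : Matrix ι κ' ℂ), Si * (S * X) = X := fun X => by
    rw [← Matrix.mul_assoc, hSi2, Matrix.one_mul]
  have pS'1 : ∀ {κ' : Type} (X : Matrix ι κ' ℂ), S' * (Si' * X) = X := fun X => by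
    rw [← Matrix.mul_assoc, hSi'1, Matrix.one_mul]
  have pS'2 : ∀ {κ' : Type} (X : Matrix ι κ' ℂ), Si' * (S' * X) = X := fun X => by
    rw [← Matrix.mul_assoc, hSi'2, Matrix.one_mul]
  have pJ : ∀ {κ' : Type} (X : Matrix κ κ' ℂ), J * (J * X) = X := fun X => by
    rw [← Matrix.mul_assoc, hJJ, Matrix.one_mul]
  have hT1 : αᴴ * αiᴴ = 1 := by
    rw [← Matrix.conjTranspose_mul, hαi2, Matrix.conjTranspose_one]
  have hT2 : αiᴴ * αᴴ = 1 := by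
    rw [← Matrix.conjTranspose_mul, hαi1, Matrix.conjTranspose_one]
  have pT1 : ∀ {κ' : Type} (X : Matrix ι κ' ℂ), αᴴ * (αiᴴ * X) = X := fun X => by
    rw [← Matrix.mul_assoc, hT1, Matrix.one_mul]
  have pT2 : ∀ {κ' : Type} (X : Matrix ι κ' ℂ), αiᴴ * (αᴴ * X) = X := fun X => by
    rw [← Matrix.mul_assoc, hT2, Matrix.one_mul]
  -- resolvent commutation
  have hcommα : α * (lam • 1 - α) = (lam • 1 - α) * α := by
    simp only [Matrix.mul_sub, Matrix.sub_mul, Matrix.mul_smul, Matrix.smul_mul,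
      Matrix.mul_one, Matrix.one_mul]
  have hRα : R * α = α * R := by
    calc R * α = R * α * ((lam • 1 - α) * R) := by rw [hR1, Matrix.mul_one]
    _ = R * (α * (lam • 1 - α)) * R := by noncomm_ring
    _ = R * ((lam • 1 - α) * α) * R := by rw [hcommα]
    _ = (R * (lam • 1 - α)) * (α * R) := by noncomm_ring
    _ = α * R := by rw [hR2, Matrix.one_mul]
  have hcommαi : αi * (lam • 1 - α) = (lam • 1 - α) * αi := by
    simp only [Matrix.mul_sub, Matrix.sub_mul, Matrix.mul_smul, Matrix.smul_mul,
      Matrix.mul_one, Matrix.one_mul, hαi1, hαi2]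
  have hRαi : R * αi = αi * R := by
    calc R * αi = R * αi * ((lam • 1 - α) * R) := by rw [hR1, Matrix.mul_one]
    _ = R * (αi * (lam • 1 - α)) * R := by noncomm_ring
    _ = R * ((lam • 1 - α) * αi) * R := by rw [hcommαi]
    _ = (R * (lam • 1 - α)) * (αi * R) := by rw [Matrix.mul_assoc, Matrix.mul_assoc,
        Matrix.mul_assoc]
    _ = αi * R := by rw [hR2, Matrix.one_mul]
  have hRlam : lam • R = 1 + α * R := by
    have := hR1
    rw [Matrix.sub_mul, Matrix.smul_mul, Matrix.one_mul] at this
    linear_combination (norm := module) this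
  -- scalar clearing lemmas
  have s1 : Complex.I * (Complex.I / lam) = -(1/lam) := by
    rw [mul_div_assoc', Complex.I_mul_I, neg_div]
  have s2 : (Complex.I / lam) * Complex.I = -(1/lam) := by
    rw [mul_comm, s1]
  -- prepared hypotheses
  have N1 : L * Lᴴ = Complex.I • (S * αᴴ) - Complex.I • (α * S) := by
    have h := congrArg (fun X : Matrix ι ι ℂ => (-Complex.I) • X) hLyap
    simp only [smul_sub, smul_smul, neg_mul, Complex.I_mul_I, neg_neg, one_smul,
      neg_smul] at h
    linear_combination (norm := module) -h
  have N6 : L'ᴴ = Lᴴ - Complex.I • (J * (Lᴴ * αiᴴ)) := by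
    have h := congrArg Matrix.conjTranspose hL'
    simp only [Matrix.conjTranspose_add, Matrix.conjTranspose_smul, Matrix.conjTranspose_mul,
      Complex.star_def, Complex.conj_I, hJH, neg_smul, Matrix.mul_assoc] at h
    linear_combination (norm := module) h
  have h5 : S' * αᴴ = S * αᴴ + αi * S + αi * (L * (J * Lᴴ)) := by
    have h := congrArg (fun X : Matrix ι ι ℂ => X * αᴴ) hS'
    simp only [Matrix.add_mul, Matrix.mul_assoc, hT2, Matrix.mul_one] at h
    linear_combination (norm := module) h
  have N4 : L' * Lᴴ = Complex.I • (S' * αᴴ) - Complex.I • (α * S) - Complex.I • (αi * S) := by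
    rw [hL']
    simp only [Matrix.add_mul, Matrix.smul_mul, Matrix.mul_assoc]
    linear_combination (norm := module) N1 - Complex.I • h5
  have N4' : L' * (Lᴴ * Si) = Complex.I • (S' * (αᴴ * Si)) - Complex.I • α - Complex.I • αi := by
    have h := congrArg (fun X : Matrix ι ι ℂ => X * Si) N4
    simp only [Matrix.sub_mul, Matrix.smul_mul, Matrix.mul_assoc, hSi1, Matrix.mul_one,
      pS1] at h
    linear_combination (norm := module) h
  have pRαi : ∀ {κ' : Type} (X : Matrix ι κ' ℂ), R * (αi * X) = αi * (R * X) := fun X => by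
    rw [← Matrix.mul_assoc, hRαi, Matrix.mul_assoc]
  have pRα : ∀ {κ' : Type} (X : Matrix ι κ' ℂ), R * (α * X) = α * (R * X) := fun X => by
    rw [← Matrix.mul_assoc, hRα, Matrix.mul_assoc]
  -- (a') and (b')
  have ha := congrArg (fun Y : Matrix ι ι ℂ => lam⁻¹ • (L'ᴴ * (Si' * (Y * L')))) hRlam
  simp only [Matrix.smul_mul, Matrix.mul_smul, smul_smul, inv_mul_cancel₀ hlam, one_smul,
    Matrix.add_mul, Matrix.mul_add, Matrix.one_mul, Matrix.mul_assoc, smul_add] at ha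
  have hb := congrArg (fun Y : Matrix ι ι ℂ => lam⁻¹ • (Lᴴ * (Si * (Y * L)))) hRlam
  simp only [Matrix.smul_mul, Matrix.mul_smul, smul_smul, inv_mul_cancel₀ hlam, one_smul,
    Matrix.add_mul, Matrix.mul_add, Matrix.one_mul, Matrix.mul_assoc, smul_add] at hb
  -- (c)
  have hG1 : L' * J = L * J + Complex.I • (αi * L) := by
    rw [hL']
    simp only [Matrix.add_mul, Matrix.smul_mul, Matrix.mul_assoc, hJJ, Matrix.mul_one]
  have hc := congrArg (fun Y : Matrix ι κ ℂ => L'ᴴ * (Si' * (R * Y))) hG1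
  simp only [Matrix.mul_add, Matrix.mul_smul, smul_add, smul_smul, pRαi, Matrix.mul_assoc] at hc
  -- (dI)
  have hd := congrArg (fun Y : Matrix ι κ ℂ => Complex.I • (L'ᴴ * (Si' * (α * (R * Y))))) hL'
  simp only [Matrix.mul_add, Matrix.mul_smul, smul_add, smul_smul, pRαi, pA1,
    Matrix.mul_assoc, Complex.I_mul_I, neg_smul, one_smul] at hd
  -- (e)
  have he := congrArg (fun Y : Matrix ι ι ℂ => Lᴴ * (Si * (Y * (Si * (R * L))))) N1
  simp only [Matrix.sub_mul, Matrix.smul_mul, Matrix.mul_smul, smul_sub, smul_smul,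
    Matrix.mul_sub, pS1, pS2, Matrix.mul_assoc] at he
  -- (f)
  have hf := congrArg (fun Y : Matrix ι ι ℂ => L'ᴴ * (Si' * (Y * (Si * (R * L))))) N4
  simp only [Matrix.sub_mul, Matrix.smul_mul, Matrix.mul_smul, smul_sub, smul_smul,
    Matrix.mul_sub, pS1, pS'2, Matrix.mul_assoc] at hf
  -- (g)
  have hg := congrArg (fun Y : Matrix κ ι ℂ => Complex.I • (Y * (αᴴ * (Si * (R * L))))) N6
  simp only [Matrix.sub_mul, Matrix.smul_mul, Matrix.mul_smul, smul_sub, smul_smul,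
    pT2, Matrix.mul_assoc, Complex.I_mul_I, neg_smul, one_smul, sub_neg_eq_add] at hg
  -- final assembly
  have s1' : Complex.I * (Complex.I * lam⁻¹) = -lam⁻¹ := by
    rw [← mul_assoc, Complex.I_mul_I, neg_mul, one_mul]
  have s2' : Complex.I * lam⁻¹ * Complex.I = -lam⁻¹ := by
    rw [mul_comm, s1']
  simp only [div_eq_mul_inv, Matrix.mul_add, Matrix.add_mul, Matrix.mul_sub, Matrix.sub_mul,
    Matrix.smul_mul, Matrix.mul_smul, smul_add, smul_sub, smul_smul, s1', s2', neg_smul,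
    Matrix.mul_one, Matrix.one_mul, Matrix.mul_assoc, one_smul, neg_neg]
  linear_combination (norm := module) Complex.I • ha - Complex.I • hb + lam⁻¹ • hd +
    lam⁻¹ • hc - lam⁻¹ • he + lam⁻¹ • hf + lam⁻¹ • hg
end Core




section Aux2
variable {n m₁ m₂ : ℕ}

lemma sigJ_mul_self : sigJ m₁ m₂ * sigJ m₁ m₂ = 1 := by
  rw [sigJ, Matrix.fromBlocks_multiply]
  simp [Matrix.fromBlocks_one]

lemma sigJ_conjT : (sigJ m₁ m₂)ᴴ = sigJ m₁ m₂ := by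
  simp [sigJ, Matrix.fromBlocks_conjTranspose]

lemma fc_add {A₁ B₁ : Matrix (Fin n) (Fin m₁) ℂ} {A₂ B₂ : Matrix (Fin n) (Fin m₂) ℂ} :
    fromCols (A₁ + B₁) (A₂ + B₂) = fromCols A₁ A₂ + fromCols B₁ B₂ := by
  ext i (j | j) <;> simp [fromCols]

lemma fc_smul {c : ℂ} {A₁ : Matrix (Fin n) (Fin m₁) ℂ} {A₂ : Matrix (Fin n) (Fin m₂) ℂ} :
    fromCols (c • A₁) (c • A₂) = c • fromCols A₁ A₂ := by
  ext i (j | j) <;> simp [fromCols]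

variable {α : Matrix (Fin n) (Fin n) ℂ}
  {θ₁ : Matrix (Fin n) (Fin m₁) ℂ} {θ₂ : Matrix (Fin n) (Fin m₂) ℂ}
  {Λ : ℕ → Matrix (Fin n) (Fin m₁ ⊕ Fin m₂) ℂ}

lemma lambda_succ
    (hΛ : ∀ k : ℕ, Λ k = Matrix.fromCols
      ((1 + Complex.I • α⁻¹) ^ k * θ₁) ((1 - Complex.I • α⁻¹) ^ k * θ₂)) (k : ℕ) :
    Λ (k + 1) = Λ k + Complex.I • (α⁻¹ * Λ k * sigJ m₁ m₂) := by
  rw [hΛ (k+1), hΛ k]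
  have hJ : fromCols ((1 + Complex.I • α⁻¹)^k * θ₁) ((1 - Complex.I • α⁻¹)^k * θ₂)
        * sigJ m₁ m₂
      = fromCols ((1 + Complex.I • α⁻¹)^k * θ₁) (-((1 - Complex.I • α⁻¹)^k * θ₂)) := by
    rw [sigJ, fromCols_mul_fromBlocks]
    simp
  rw [Matrix.mul_assoc, hJ, mul_fromCols]
  rw [pow_succ', pow_succ', Matrix.mul_assoc, Matrix.mul_assoc]
  rw [show (1 + Complex.I • α⁻¹) * ((1 + Complex.I • α⁻¹)^k * θ₁)
      = (1 + Complex.I • α⁻¹)^k * θ₁ + Complex.I • (α⁻¹ * ((1 + Complex.I • α⁻¹)^k * θ₁)) from by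
    rw [Matrix.add_mul, Matrix.one_mul, Matrix.smul_mul]]
  rw [show (1 - Complex.I • α⁻¹) * ((1 - Complex.I • α⁻¹)^k * θ₂)
      = (1 - Complex.I • α⁻¹)^k * θ₂
        + Complex.I • (α⁻¹ * -((1 - Complex.I • α⁻¹)^k * θ₂)) from by
    rw [Matrix.sub_mul, Matrix.one_mul, Matrix.smul_mul, Matrix.mul_neg, smul_neg,
      sub_eq_add_neg]]
  rw [fc_add, fc_smul]

lemma lambda_mul_conjT
    (hΛ : ∀ k : ℕ, Λ k = Matrix.fromCols
      ((1 + Complex.I • α⁻¹) ^ k * θ₁) ((1 - Complex.I • α⁻¹) ^ k * θ₂)) (k : ℕ) :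
    Λ k * (Λ k)ᴴ = ((1 + Complex.I • α⁻¹)^k * θ₁) * ((1 + Complex.I • α⁻¹)^k * θ₁)ᴴ
      + ((1 - Complex.I • α⁻¹)^k * θ₂) * ((1 - Complex.I • α⁻¹)^k * θ₂)ᴴ := by
  rw [hΛ k, conjTranspose_fromCols_eq_fromRows_conjTranspose, fromCols_mul_fromRows]

lemma lambda_J_mul_conjT
    (hΛ : ∀ k : ℕ, Λ k = Matrix.fromCols
      ((1 + Complex.I • α⁻¹) ^ k * θ₁) ((1 - Complex.I • α⁻¹) ^ k * θ₂)) (k : ℕ) :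
    Λ k * sigJ m₁ m₂ * (Λ k)ᴴ
      = ((1 + Complex.I • α⁻¹)^k * θ₁) * ((1 + Complex.I • α⁻¹)^k * θ₁)ᴴ
      - ((1 - Complex.I • α⁻¹)^k * θ₂) * ((1 - Complex.I • α⁻¹)^k * θ₂)ᴴ := by
  rw [hΛ k]
  rw [show fromCols ((1 + Complex.I • α⁻¹)^k * θ₁) ((1 - Complex.I • α⁻¹)^k * θ₂)
        * sigJ m₁ m₂
      = fromCols ((1 + Complex.I • α⁻¹)^k * θ₁) (-((1 - Complex.I • α⁻¹)^k * θ₂)) from by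
    rw [sigJ, fromCols_mul_fromBlocks]; simp]
  rw [conjTranspose_fromCols_eq_fromRows_conjTranspose, fromCols_mul_fromRows,
    Matrix.neg_mul, ← sub_eq_add_neg]

lemma eig_pow {A : Matrix (Fin n) (Fin n) ℂ} {x : Fin n → ℂ} {c : ℂ}
    (h : A *ᵥ x = c • x) : ∀ j : ℕ, (A ^ j) *ᵥ x = c ^ j • x := by
  intro j
  induction j with
  | zero => simp
  | succ j IH =>
      rw [pow_succ, ← Matrix.mulVec_mulVec, h, Matrix.mulVec_smul, IH, smul_smul,
        ← pow_succ']

end Aux2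

section Aux3
variable {n m₁ m₂ : ℕ}
  {α S₀ : Matrix (Fin n) (Fin n) ℂ}
  {θ₁ : Matrix (Fin n) (Fin m₁) ℂ} {θ₂ : Matrix (Fin n) (Fin m₂) ℂ}
  {Λ : ℕ → Matrix (Fin n) (Fin m₁ ⊕ Fin m₂) ℂ}
  {S : ℕ → Matrix (Fin n) (Fin n) ℂ}

lemma lyapunov
    (heq : α * S₀ - S₀ * αᴴ = Complex.I • (θ₁ * θ₁ᴴ + θ₂ * θ₂ᴴ))
    (hα1 : α * α⁻¹ = 1) (hα2 : α⁻¹ * α = 1)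
    (hΛ : ∀ k : ℕ, Λ k = Matrix.fromCols
      ((1 + Complex.I • α⁻¹) ^ k * θ₁) ((1 - Complex.I • α⁻¹) ^ k * θ₂))
    (hS0 : S 0 = S₀)
    (hS : ∀ k : ℕ, S (k + 1) =
      S k + α⁻¹ * S k * (α⁻¹)ᴴ + α⁻¹ * (Λ k * sigJ m₁ m₂ * (Λ k)ᴴ) * (α⁻¹)ᴴ) :
    ∀ k : ℕ, α * S k - S k * αᴴ = Complex.I • (Λ k * (Λ k)ᴴ) := by
  have pA1 : ∀ {κ' : Type} (X : Matrix (Fin n) κ' ℂ), α * (α⁻¹ * X) = X := fun X => by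
    rw [← Matrix.mul_assoc, hα1, Matrix.one_mul]
  have pA2 : ∀ {κ' : Type} (X : Matrix (Fin n) κ' ℂ), α⁻¹ * (α * X) = X := fun X => by
    rw [← Matrix.mul_assoc, hα2, Matrix.one_mul]
  have hT1 : αᴴ * (α⁻¹)ᴴ = 1 := by
    rw [← Matrix.conjTranspose_mul, hα2, Matrix.conjTranspose_one]
  have hT2 : (α⁻¹)ᴴ * αᴴ = 1 := by
    rw [← Matrix.conjTranspose_mul, hα1, Matrix.conjTranspose_one]
  have pJ : ∀ {κ' : Type} (X : Matrix (Fin m₁ ⊕ Fin m₂) κ' ℂ),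
      sigJ m₁ m₂ * (sigJ m₁ m₂ * X) = X := fun X => by
    rw [← Matrix.mul_assoc, sigJ_mul_self, Matrix.one_mul]
  intro k
  induction k with
  | zero =>
      rw [hS0]
      have h0 : Λ 0 * (Λ 0)ᴴ = θ₁ * θ₁ᴴ + θ₂ * θ₂ᴴ := by
        rw [lambda_mul_conjT hΛ 0]
        simp
      rw [h0]
      exact heq
  | succ k IH =>
      have hL' := lambda_succ hΛ k
      have hmid := congrArg (fun X : Matrix (Fin n) (Fin n) ℂ => α⁻¹ * X * (α⁻¹)ᴴ) IH
      simp only [Matrix.mul_add, Matrix.add_mul, Matrix.mul_sub, Matrix.sub_mul,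
        Matrix.smul_mul, Matrix.mul_smul, smul_add, smul_sub, smul_smul, Matrix.mul_assoc,
        Matrix.mul_one, Matrix.one_mul, pA2, hT1] at hmid
      rw [hS k, hL']
      simp only [Matrix.mul_add, Matrix.add_mul, Matrix.mul_sub, Matrix.sub_mul,
        Matrix.smul_mul, Matrix.mul_smul, smul_add, smul_sub, smul_smul,
        Matrix.conjTranspose_add, Matrix.conjTranspose_smul, Matrix.conjTranspose_mul,
        Complex.star_def, Complex.conj_I, sigJ_conjT, neg_smul, smul_neg, neg_neg,
        Matrix.mul_neg, Matrix.neg_mul, Complex.I_mul_I, one_smul,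
        Matrix.mul_assoc, Matrix.mul_one, Matrix.one_mul, pA1, pJ, hT2] at *
      linear_combination (norm := module) IH + hmid
end Aux3

section Aux4
variable {n m₁ m₂ : ℕ}
  {α S₀ : Matrix (Fin n) (Fin n) ℂ}
  {θ₁ : Matrix (Fin n) (Fin m₁) ℂ} {θ₂ : Matrix (Fin n) (Fin m₂) ℂ}
  {Λ : ℕ → Matrix (Fin n) (Fin m₁ ⊕ Fin m₂) ℂ}
  {S : ℕ → Matrix (Fin n) (Fin n) ℂ}

lemma posdefS
    (hpd : S₀.PosDef) (hctrl : Controllable α θ₁)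
    (hα1 : α * α⁻¹ = 1) (hα2 : α⁻¹ * α = 1)
    (hΛ : ∀ k : ℕ, Λ k = Matrix.fromCols
      ((1 + Complex.I • α⁻¹) ^ k * θ₁) ((1 - Complex.I • α⁻¹) ^ k * θ₂))
    (hS0 : S 0 = S₀)
    (hS : ∀ k : ℕ, S (k + 1) =
      S k + α⁻¹ * S k * (α⁻¹)ᴴ + α⁻¹ * (Λ k * sigJ m₁ m₂ * (Λ k)ᴴ) * (α⁻¹)ᴴ)
    (hlyap : ∀ k : ℕ, α * S k - S k * αᴴ = Complex.I • (Λ k * (Λ k)ᴴ)) :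
    ∀ k : ℕ, (S k).PosDef := by
  have pA2 : ∀ {κ' : Type} (X : Matrix (Fin n) κ' ℂ), α⁻¹ * (α * X) = X := fun X => by
    rw [← Matrix.mul_assoc, hα2, Matrix.one_mul]
  have hT1 : αᴴ * (α⁻¹)ᴴ = 1 := by
    rw [← Matrix.conjTranspose_mul, hα2, Matrix.conjTranspose_one]
  intro k
  induction k with
  | zero => rw [hS0]; exact hpd
  | succ k IH =>
      -- the matrix identity S (k+1) = B * S k * Bᴴ + 2 • (M Mᴴ)
      have hLy : α * S k - S k * αᴴ = Complex.I • (((1 + Complex.I • α⁻¹)^k * θ₁)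
          * ((1 + Complex.I • α⁻¹)^k * θ₁)ᴴ
          + ((1 - Complex.I • α⁻¹)^k * θ₂) * ((1 - Complex.I • α⁻¹)^k * θ₂)ᴴ) := by
        rw [← lambda_mul_conjT hΛ k]; exact hlyap k
      have hmid := congrArg (fun X : Matrix (Fin n) (Fin n) ℂ =>
        Complex.I • (α⁻¹ * X * (α⁻¹)ᴴ)) hLy
      simp only [Matrix.mul_add, Matrix.add_mul, Matrix.mul_sub, Matrix.sub_mul,
        Matrix.smul_mul, Matrix.mul_smul, smul_add, smul_sub, smul_smul,
        Matrix.conjTranspose_sub, Matrix.conjTranspose_add, Matrix.conjTranspose_smul,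
        Matrix.conjTranspose_mul, Matrix.conjTranspose_one,
        Complex.star_def, Complex.conj_I, neg_smul, smul_neg, neg_neg,
        Matrix.mul_neg, Matrix.neg_mul, Complex.I_mul_I, one_smul,
        Matrix.mul_assoc, Matrix.mul_one, Matrix.one_mul, sub_neg_eq_add, pA2, hT1] at hmid
      have hF3 : S (k + 1) = (1 - Complex.I • α⁻¹) * S k * (1 - Complex.I • α⁻¹)ᴴ
          + (2:ℂ) • ((α⁻¹ * ((1 + Complex.I • α⁻¹)^k * θ₁))
            * (α⁻¹ * ((1 + Complex.I • α⁻¹)^k * θ₁))ᴴ) := by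
        rw [hS k, lambda_J_mul_conjT hΛ k]
        simp only [Matrix.mul_add, Matrix.add_mul, Matrix.mul_sub, Matrix.sub_mul,
          Matrix.smul_mul, Matrix.mul_smul, smul_add, smul_sub, smul_smul,
          Matrix.conjTranspose_sub, Matrix.conjTranspose_add, Matrix.conjTranspose_smul,
          Matrix.conjTranspose_mul, Matrix.conjTranspose_one,
          Complex.star_def, Complex.conj_I, neg_smul, smul_neg, neg_neg,
          Matrix.mul_neg, Matrix.neg_mul, Complex.I_mul_I, one_smul,
          Matrix.mul_assoc, Matrix.mul_one, Matrix.one_mul, sub_neg_eq_add]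
        linear_combination (norm := module) -hmid
      rw [Matrix.posDef_iff_dotProduct_mulVec]
      constructor
      · -- Hermitian
        rw [hF3]
        have h1 : ((1 - Complex.I • α⁻¹) * S k * (1 - Complex.I • α⁻¹)ᴴ).IsHermitian :=
          (IH.posSemidef.mul_mul_conjTranspose_same (1 - Complex.I • α⁻¹)).1
        have h2 : (((2:ℂ) • ((α⁻¹ * ((1 + Complex.I • α⁻¹)^k * θ₁))
            * (α⁻¹ * ((1 + Complex.I • α⁻¹)^k * θ₁))ᴴ))).IsHermitian := by
          unfold Matrix.IsHermitian
          rw [Matrix.conjTranspose_smul, Matrix.conjTranspose_mul,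
            Matrix.conjTranspose_conjTranspose]
          norm_num
        exact h1.add h2
      · intro x hx
        rw [hF3, Matrix.add_mulVec, dotProduct_add]
        have hBS : star x ⬝ᵥ (((1 - Complex.I • α⁻¹) * S k * (1 - Complex.I • α⁻¹)ᴴ) *ᵥ x)
            = star ((1 - Complex.I • α⁻¹)ᴴ *ᵥ x)
              ⬝ᵥ (S k *ᵥ ((1 - Complex.I • α⁻¹)ᴴ *ᵥ x)) := by
          rw [← Matrix.mulVec_mulVec, ← Matrix.mulVec_mulVec, Matrix.dotProduct_mulVec,
            Matrix.star_mulVec, Matrix.conjTranspose_conjTranspose,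
            ← Matrix.dotProduct_mulVec]
        have hMS : star x ⬝ᵥ (((2:ℂ) • ((α⁻¹ * ((1 + Complex.I • α⁻¹)^k * θ₁))
              * (α⁻¹ * ((1 + Complex.I • α⁻¹)^k * θ₁))ᴴ)) *ᵥ x)
            = 2 * (star ((α⁻¹ * ((1 + Complex.I • α⁻¹)^k * θ₁))ᴴ *ᵥ x)
              ⬝ᵥ ((α⁻¹ * ((1 + Complex.I • α⁻¹)^k * θ₁))ᴴ *ᵥ x)) := by
          rw [Matrix.smul_mulVec, dotProduct_smul, ← Matrix.mulVec_mulVec,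
            Matrix.dotProduct_mulVec, Matrix.star_mulVec,
            Matrix.conjTranspose_conjTranspose, ← Matrix.dotProduct_mulVec, smul_eq_mul]
        rw [hBS, hMS]
        by_cases hB0 : (1 - Complex.I • α⁻¹)ᴴ *ᵥ x = 0
        · -- the degenerate direction: use controllability
          have hBexp : (1 - Complex.I • α⁻¹)ᴴ *ᵥ x = x + Complex.I • ((α⁻¹)ᴴ *ᵥ x) := by
            rw [Matrix.conjTranspose_sub, Matrix.conjTranspose_smul,
              Matrix.conjTranspose_one, Complex.star_def, Complex.conj_I, neg_smul,
              sub_neg_eq_add, Matrix.add_mulVec, Matrix.one_mulVec,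
              Matrix.smul_mulVec]
          have hxinv : (α⁻¹)ᴴ *ᵥ x = Complex.I • x := by
            rw [hBexp] at hB0
            have h1 : Complex.I • ((α⁻¹)ᴴ *ᵥ x) = -x := by
              linear_combination (norm := module) hB0
            have h2 := congrArg (fun v : Fin n → ℂ => (-Complex.I) • v) h1
            simp only [smul_smul, neg_mul, Complex.I_mul_I, neg_neg, one_smul, smul_neg,
              neg_smul] at h2
            linear_combination (norm := module) h2
          have hαHx : αᴴ *ᵥ x = (-Complex.I) • x := by
            have h1 : αᴴ *ᵥ ((α⁻¹)ᴴ *ᵥ x) = x := by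
              rw [Matrix.mulVec_mulVec, hT1, Matrix.one_mulVec]
            rw [hxinv, Matrix.mulVec_smul] at h1
            have h := congrArg (fun v : Fin n → ℂ => (-Complex.I) • v) h1
            simp only [smul_smul, neg_mul, Complex.I_mul_I, neg_neg, one_smul] at h
            linear_combination (norm := module) h
          have hM0 : (α⁻¹ * ((1 + Complex.I • α⁻¹)^k * θ₁))ᴴ *ᵥ x ≠ 0 := by
            intro h0
            have hMexp : (α⁻¹ * ((1 + Complex.I • α⁻¹)^k * θ₁))ᴴ *ᵥ x
                = Complex.I • ((2:ℂ)^k • (θ₁ᴴ *ᵥ x)) := by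
              rw [Matrix.conjTranspose_mul, Matrix.conjTranspose_mul,
                Matrix.conjTranspose_pow]
              rw [show ((1 + Complex.I • α⁻¹)ᴴ : Matrix (Fin n) (Fin n) ℂ)
                  = 1 - Complex.I • (α⁻¹)ᴴ from by
                rw [Matrix.conjTranspose_add, Matrix.conjTranspose_smul,
                  Matrix.conjTranspose_one, Complex.star_def, Complex.conj_I, neg_smul,
                  ← sub_eq_add_neg]]
              have he1 : (1 - Complex.I • (α⁻¹)ᴴ) *ᵥ x = (2:ℂ) • x := by
                rw [Matrix.sub_mulVec, Matrix.one_mulVec, Matrix.smul_mulVec, hxinv,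
                  smul_smul, Complex.I_mul_I, neg_smul, sub_neg_eq_add, one_smul, two_smul]
              have he5 := eig_pow he1 k
              rw [Matrix.mul_assoc, ← Matrix.mulVec_mulVec, ← Matrix.mulVec_mulVec,
                hxinv, Matrix.mulVec_smul, he5, Matrix.mulVec_smul, Matrix.mulVec_smul]
            rw [hMexp] at h0
            have hθx : θ₁ᴴ *ᵥ x = 0 := by
              have := smul_eq_zero.mp h0
              rcases this with h | h
              · exact absurd h Complex.I_ne_zero
              · rcases smul_eq_zero.mp h with h' | h'
                · exact absurd h' (pow_ne_zero k two_ne_zero)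
                · exact h'
            have hxz : x = 0 := by
              refine controllable_perp hctrl x ?_
              intro p
              have hp := eig_pow hαHx p
              rw [hp, Matrix.mulVec_smul, hθx, smul_zero]
            exact hx hxz
          rw [hB0]
          simp only [Matrix.mulVec_zero, dotProduct_zero, star_zero, zero_dotProduct,
            zero_add]
          have hpos : 0 < star ((α⁻¹ * ((1 + Complex.I • α⁻¹)^k * θ₁))ᴴ *ᵥ x)
              ⬝ᵥ ((α⁻¹ * ((1 + Complex.I • α⁻¹)^k * θ₁))ᴴ *ᵥ x) :=
            dotProduct_star_self_pos_iff.mpr hM0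
          rw [two_mul]
          exact add_pos hpos hpos
        · have hpos1 : 0 < star ((1 - Complex.I • α⁻¹)ᴴ *ᵥ x)
              ⬝ᵥ (S k *ᵥ ((1 - Complex.I • α⁻¹)ᴴ *ᵥ x)) := IH.dotProduct_mulVec_pos hB0
          have hnn : 0 ≤ star ((α⁻¹ * ((1 + Complex.I • α⁻¹)^k * θ₁))ᴴ *ᵥ x)
              ⬝ᵥ ((α⁻¹ * ((1 + Complex.I • α⁻¹)^k * θ₁))ᴴ *ᵥ x) :=
            dotProduct_star_self_nonneg _
          have : (0:ℂ) ≤ 2 * (star ((α⁻¹ * ((1 + Complex.I • α⁻¹)^k * θ₁))ᴴ *ᵥ x)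
              ⬝ᵥ ((α⁻¹ * ((1 + Complex.I • α⁻¹)^k * θ₁))ᴴ *ᵥ x)) := by
            rw [two_mul]
            exact add_nonneg hnn hnn
          exact add_pos_of_pos_of_nonneg hpos1 this
end Aux4



/-- the key identity
`W_{Σ_{k+1}}(λ)(I − (i/λ)j) = (I − (i/λ)C_k) W_{Σ_k}(λ)`. -/
theorem transfer_function_identity_discrete
    {n m₁ m₂ : ℕ} (α S₀ : Matrix (Fin n) (Fin n) ℂ)
    (θ₁ : Matrix (Fin n) (Fin m₁) ℂ) (θ₂ : Matrix (Fin n) (Fin m₂) ℂ)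
    (hadm : Admissible α S₀ θ₁ θ₂) (hctrl : Controllable α θ₁)
    (Λ : ℕ → Matrix (Fin n) (Fin m₁ ⊕ Fin m₂) ℂ)
    (hΛ : ∀ k : ℕ, Λ k = Matrix.fromCols
      ((1 + Complex.I • α⁻¹) ^ k * θ₁) ((1 - Complex.I • α⁻¹) ^ k * θ₂))
    (S : ℕ → Matrix (Fin n) (Fin n) ℂ)
    (hS0 : S 0 = S₀)
    (hS : ∀ k : ℕ, S (k + 1) =
      S k + α⁻¹ * S k * (α⁻¹)ᴴ + α⁻¹ * (Λ k * sigJ m₁ m₂ * (Λ k)ᴴ) * (α⁻¹)ᴴ)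
    (W : ℕ → ℂ → Matrix (Fin m₁ ⊕ Fin m₂) (Fin m₁ ⊕ Fin m₂) ℂ)
    (hW : ∀ (k : ℕ) (lam : ℂ),
      W k lam = 1 + Complex.I • ((Λ k)ᴴ * (S k)⁻¹ * (lam • 1 - α)⁻¹ * Λ k))
    (C : ℕ → Matrix (Fin m₁ ⊕ Fin m₂) (Fin m₁ ⊕ Fin m₂) ℂ)
    (hC : ∀ k : ℕ, C k = sigJ m₁ m₂ + (Λ k)ᴴ * (S k)⁻¹ * Λ k
      - (Λ (k + 1))ᴴ * (S (k + 1))⁻¹ * Λ (k + 1)) :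
    ∀ (k : ℕ) (lam : ℂ), lam ≠ 0 → lam ∉ spectrum ℂ α →
      W (k + 1) lam * (1 - (Complex.I / lam) • sigJ m₁ m₂) =
        (1 - (Complex.I / lam) • C k) * W k lam := by
  intro k lam hlam hspec
  have hαU : IsUnit α := alpha_isUnit hadm.1 hadm.2 hctrl
  have hαd : IsUnit α.det := (Matrix.isUnit_iff_isUnit_det α).mp hαU
  have hα1 : α * α⁻¹ = 1 := Matrix.mul_nonsing_inv α hαd
  have hα2 : α⁻¹ * α = 1 := Matrix.nonsing_inv_mul α hαd
  have hlyap := lyapunov hadm.2 hα1 hα2 hΛ hS0 hS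
  have hposd := posdefS hadm.1 hctrl hα1 hα2 hΛ hS0 hS hlyap
  have hSd : IsUnit (S k).det := (Matrix.isUnit_iff_isUnit_det _).mp (hposd k).isUnit
  have hSd' : IsUnit (S (k+1)).det := (Matrix.isUnit_iff_isUnit_det _).mp (hposd (k+1)).isUnit
  have hS1 : S k * (S k)⁻¹ = 1 := Matrix.mul_nonsing_inv _ hSd
  have hS2 : (S k)⁻¹ * S k = 1 := Matrix.nonsing_inv_mul _ hSd
  have hS1' : S (k+1) * (S (k+1))⁻¹ = 1 := Matrix.mul_nonsing_inv _ hSd'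
  have hS2' : (S (k+1))⁻¹ * S (k+1) = 1 := Matrix.nonsing_inv_mul _ hSd'
  have hRU : IsUnit (lam • (1 : Matrix (Fin n) (Fin n) ℂ) - α) := by
    have h := spectrum.notMem_iff.mp hspec
    rwa [Algebra.algebraMap_eq_smul_one] at h
  have hRd : IsUnit (lam • (1 : Matrix (Fin n) (Fin n) ℂ) - α).det :=
    (Matrix.isUnit_iff_isUnit_det _).mp hRU
  have hR1 : (lam • (1 : Matrix (Fin n) (Fin n) ℂ) - α) * (lam • 1 - α)⁻¹ = 1 :=
    Matrix.mul_nonsing_inv _ hRd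
  have hR2 : (lam • (1 : Matrix (Fin n) (Fin n) ℂ) - α)⁻¹ * (lam • 1 - α) = 1 :=
    Matrix.nonsing_inv_mul _ hRd
  rw [hW (k+1) lam, hW k lam, hC k]
  exact core_identity α α⁻¹ (S k) ((S k)⁻¹) (S (k+1)) ((S (k+1))⁻¹) ((lam • 1 - α)⁻¹)
    (Λ k) (Λ (k+1)) (sigJ m₁ m₂) lam hlam hα1 hα2 hS1 hS2 hS1' hS2' hR1 hR2
    sigJ_mul_self sigJ_conjT (hlyap k) (hS k) (lambda_succ hΛ k)
end
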